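/- arXiv:1906.07619 — 3 statements merged into one kernel-verified Lean document; each statement's English description precedes it below -/
import Mathlib

section
/- Let G be a maximal 3-γc-vertex critical graph on n vertices with α(G) + ω(G) = n − 1. Then there exist a maximum independent set I and a maximum clique W of G with I ∩ W = ∅. -/
open Finset

variable {V : Type*}

/-- `D` is a connected dominating set of `G`: every vertex is in `D` or adjacent to a
vertex of `D`, and the subgraph induced by `D` is connected. -/
def IsConnDomSet (G : SimpleGraph V) (D : Set V) : Prop :=
  (∀ v : V, v ∈ D ∨ ∃ u ∈ D, G.Adj u v) ∧ (G.induce D).Connected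

/-- The connected domination number `γc(G)`. -/
noncomputable def gammaC (G : SimpleGraph V) [Fintype V] : ℕ :=
  sInf {k | ∃ D : Finset V, D.card = k ∧ IsConnDomSet G ↑D}

/-- The independence number `α(G)`. -/
noncomputable def alpha (G : SimpleGraph V) [Fintype V] : ℕ :=
  sSup {k | ∃ I : Finset V, I.card = k ∧ (↑I : Set V).Pairwise fun u v => ¬ G.Adj u v}

/-- The clique number `ω(G)`. -/
noncomputable def omegaNum (G : SimpleGraph V) [Fintype V] : ℕ :=
  sSup {k | ∃ W : Finset V, W.card = k ∧ (↑W : Set V).Pairwise G.Adj}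

/-- The minimum degree `δ(G)`. -/
noncomputable def minDeg (G : SimpleGraph V) [Fintype V] : ℕ :=
  sInf {k | ∃ v : V, (G.neighborSet v).ncard = k}

/-- The vertex connectivity `κ(G)`: the minimum size of a set of vertices whose
deletion leaves a graph that is disconnected or has at most one vertex
(so `κ = n - 1` for the complete graph on `n` vertices). -/
noncomputable def kappa (G : SimpleGraph V) [Fintype V] : ℕ :=
  sInf {k | ∃ S : Finset V, S.card = k ∧
    (¬ (G.induce (↑S : Set V)ᶜ).Connected ∨ ((↑S : Set V)ᶜ).Subsingleton)}

/-- `G` is `3`-`γc`-edge critical: `γc(G) = 3` and adding any missing edge decreases `γc`. -/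
def EdgeCritical3 (G : SimpleGraph V) [Fintype V] : Prop :=
  gammaC G = 3 ∧ ∀ u v : V, u ≠ v → ¬ G.Adj u v →
    gammaC (G ⊔ SimpleGraph.fromEdgeSet {s(u, v)}) < 3

/-- `G` is `3`-`γc`-vertex critical: `G` is `2`-connected, `γc(G) = 3` and deleting any
vertex decreases `γc`. -/
def VertexCritical3 (G : SimpleGraph V) [Fintype V] [DecidableEq V] : Prop :=
  2 ≤ kappa G ∧ gammaC G = 3 ∧ ∀ v : V, gammaC (G.induce {w | w ≠ v}) < 3

/-- `G` is maximal `3`-`γc`-vertex critical. -/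
def MaximalVertexCritical3 (G : SimpleGraph V) [Fintype V] [DecidableEq V] : Prop :=
  EdgeCritical3 G ∧ VertexCritical3 G


section Aux

variable {α : Type*}

lemma aux_ind_singleton (H : SimpleGraph α) (a : α) :
    (H.induce {a}).Connected := by
  rw [SimpleGraph.connected_iff]
  refine ⟨?_, ⟨⟨a, rfl⟩⟩⟩
  rintro ⟨x, hx⟩ ⟨y, hy⟩
  have : x = y := by
    simp only [Set.mem_singleton_iff] at hx hy; rw [hx, hy]
  subst this
  rfl

lemma aux_ind_pair (H : SimpleGraph α) {a b : α} (hab : H.Adj a b) :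
    (H.induce {a, b}).Connected := by
  rw [SimpleGraph.connected_iff]
  refine ⟨?_, ⟨⟨a, Or.inl rfl⟩⟩⟩
  rintro ⟨x, hx⟩ ⟨y, hy⟩
  rcases hx with rfl | rfl <;> rcases hy with rfl | rfl
  · rfl
  · exact SimpleGraph.Adj.reachable (by exact hab)
  · exact SimpleGraph.Adj.reachable (by exact hab.symm)
  · rfl

lemma aux_pair_adj (H : SimpleGraph α) {a b : α}
    (h : (H.induce {a, b}).Connected) : a = b ∨ H.Adj a b := by
  by_cases hab : a = b
  · exact Or.inl hab
  right
  have hr := h.preconnected ⟨a, Or.inl rfl⟩ ⟨b, Or.inr rfl⟩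
  obtain ⟨w⟩ := hr
  cases w with
  | nil => exact absurd rfl hab
  | cons h' p =>
    rename_i c
    have hadj : H.Adj a c.val := h'
    rcases c.property with h1 | h1
    · rw [h1] at hadj; exact absurd hadj (H.irrefl)
    · rw [h1] at hadj; exact hadj

end Aux

section Aux2

variable (G : SimpleGraph V) [Fintype V] [DecidableEq V]

lemma aux_gamma3 (hG : gammaC G = 3) :
    (∃ D : Finset V, D.card = 3 ∧ IsConnDomSet G ↑D) ∧
      ∀ D : Finset V, IsConnDomSet G ↑D → 3 ≤ D.card := by
  have hne : {k | ∃ D : Finset V, D.card = k ∧ IsConnDomSet G ↑D}.Nonempty := by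
    by_contra hempty
    rw [Set.not_nonempty_iff_eq_empty] at hempty
    rw [gammaC, hempty, Nat.sInf_empty] at hG
    exact absurd hG (by norm_num)
  constructor
  · have h3 := Nat.sInf_mem hne
    rw [show sInf {k | ∃ D : Finset V, D.card = k ∧ IsConnDomSet G ↑D} = gammaC G from rfl,
      hG] at h3
    exact h3
  · intro D hD
    have : D.card ∈ {k | ∃ D : Finset V, D.card = k ∧ IsConnDomSet G ↑D} := ⟨D, rfl, hD⟩
    have := Nat.sInf_le this
    rw [show sInf {k | ∃ D : Finset V, D.card = k ∧ IsConnDomSet G ↑D} = gammaC G from rfl,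
      hG] at this
    exact this

lemma aux_no_cds2 (hmin : ∀ D : Finset V, IsConnDomSet G ↑D → 3 ≤ D.card)
    {a b : V} (hab : G.Adj a b)
    (hdom : ∀ w, w = a ∨ w = b ∨ G.Adj a w ∨ G.Adj b w) : False := by
  have h1 : IsConnDomSet G ↑({a, b} : Finset V) := by
    constructor
    · intro w
      rcases hdom w with h | h | h | h
      · left; simp [h]
      · left; simp [h]
      · exact Or.inr ⟨a, by simp, h⟩
      · exact Or.inr ⟨b, by simp, h⟩
    · have hc : (↑({a, b} : Finset V) : Set V) = {a, b} := by simp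
      rw [hc]
      exact aux_ind_pair G hab
  have h2 := hmin _ h1
  have hc : ({a, b} : Finset V).card ≤ 2 := (Finset.card_insert_le _ _).trans (by simp)
  omega

lemma aux_alpha_exists :
    ∃ I : Finset V, I.card = alpha G ∧ ((↑I : Set V).Pairwise fun u v => ¬ G.Adj u v) ∧
      ∀ z, z ∉ I → ∃ a ∈ I, G.Adj z a := by
  classical
  set S := {k | ∃ I : Finset V, I.card = k ∧ (↑I : Set V).Pairwise fun u v => ¬ G.Adj u v}
    with hS
  have hbdd : BddAbove S := by
    refine ⟨Fintype.card V, ?_⟩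
    rintro k ⟨I, hI, -⟩
    rw [← hI, ← Finset.card_univ]
    exact Finset.card_le_univ I
  have hne : S.Nonempty := ⟨0, ∅, by simp⟩
  have hmem := Nat.sSup_mem hne hbdd
  obtain ⟨I, hIcard, hIpair⟩ := hmem
  refine ⟨I, by rw [alpha, ← hS]; exact hIcard, hIpair, ?_⟩
  intro z hz
  by_contra hcon
  push_neg at hcon
  have hpair : ((↑(insert z I) : Set V).Pairwise fun u v => ¬ G.Adj u v) := by
    intro a ha b hb hne'
    simp only [Finset.coe_insert, Set.mem_insert_iff, Finset.mem_coe] at ha hb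
    rcases ha with rfl | ha <;> rcases hb with rfl | hb
    · exact absurd rfl hne'
    · exact fun hadj => hcon b hb hadj
    · exact fun hadj => hcon a ha hadj.symm
    · exact hIpair ha hb hne'
  have hmem2 : I.card + 1 ∈ S := ⟨insert z I, by rw [Finset.card_insert_of_notMem hz], hpair⟩
  have hle := le_csSup hbdd hmem2
  omega

lemma aux_omega_exists :
    ∃ W : Finset V, W.card = omegaNum G ∧ ((↑W : Set V).Pairwise G.Adj) ∧
      ∀ z, z ∉ W → ∃ w ∈ W, ¬ G.Adj z w := by
  classical
  set S := {k | ∃ W : Finset V, W.card = k ∧ (↑W : Set V).Pairwise G.Adj} with hS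
  have hbdd : BddAbove S := by
    refine ⟨Fintype.card V, ?_⟩
    rintro k ⟨W, hW, -⟩
    rw [← hW, ← Finset.card_univ]
    exact Finset.card_le_univ W
  have hne : S.Nonempty := ⟨0, ∅, by simp⟩
  have hmem := Nat.sSup_mem hne hbdd
  obtain ⟨W, hWcard, hWpair⟩ := hmem
  refine ⟨W, by rw [omegaNum, ← hS]; exact hWcard, hWpair, ?_⟩
  intro z hz
  by_contra hcon
  push_neg at hcon
  have hpair : ((↑(insert z W) : Set V).Pairwise G.Adj) := by
    intro a ha b hb hne'
    simp only [Finset.coe_insert, Set.mem_insert_iff, Finset.mem_coe] at ha hb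
    rcases ha with rfl | ha <;> rcases hb with rfl | hb
    · exact absurd rfl hne'
    · exact hcon b hb
    · exact (hcon a ha).symm
    · exact hWpair ha hb hne'
  have hmem2 : W.card + 1 ∈ S := ⟨insert z W, by rw [Finset.card_insert_of_notMem hz], hpair⟩
  have hle := le_csSup hbdd hmem2
  omega

lemma aux_omega_two (hD3 : ∃ D : Finset V, D.card = 3 ∧ IsConnDomSet G ↑D) :
    2 ≤ omegaNum G := by
  classical
  obtain ⟨D, hcard, hdom, hconn⟩ := hD3
  have h2 : 1 < D.card := by omega
  obtain ⟨a, ha, b, hb, hab⟩ := Finset.one_lt_card.mp h2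
  have hr := hconn.preconnected ⟨a, ha⟩ ⟨b, hb⟩
  obtain ⟨w⟩ := hr
  have hedge : ∃ u u' : V, G.Adj u u' := by
    cases w with
    | nil => exact absurd rfl hab
    | cons h' p =>
      rename_i c
      exact ⟨a, c.val, h'⟩
  obtain ⟨u, u', huu⟩ := hedge
  have hmem2 : 2 ∈ {k | ∃ W : Finset V, W.card = k ∧ (↑W : Set V).Pairwise G.Adj} := by
    refine ⟨{u, u'}, Finset.card_pair huu.ne, ?_⟩
    intro s hs t ht hst
    simp only [Finset.coe_insert, Set.mem_insert_iff, Finset.coe_singleton,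
      Set.mem_singleton_iff] at hs ht
    rcases hs with rfl | rfl <;> rcases ht with rfl | rfl
    · exact absurd rfl hst
    · exact huu
    · exact huu.symm
    · exact absurd rfl hst
  have hbdd : BddAbove {k | ∃ W : Finset V, W.card = k ∧ (↑W : Set V).Pairwise G.Adj} := by
    refine ⟨Fintype.card V, ?_⟩
    rintro k ⟨W, hW, -⟩
    rw [← hW, ← Finset.card_univ]
    exact Finset.card_le_univ W
  exact le_csSup hbdd hmem2

end Aux2

section Aux3

variable (G : SimpleGraph V) [Fintype V] [DecidableEq V]

lemma aux_lemV (hκ : 2 ≤ kappa G)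
    (hmin : ∀ D : Finset V, IsConnDomSet G ↑D → 3 ≤ D.card)
    (hvc : ∀ v : V, gammaC (G.induce {w | w ≠ v}) < 3) (v : V) :
    ∃ p q : V, p ≠ v ∧ q ≠ v ∧ (p = q ∨ G.Adj p q) ∧ ¬ G.Adj v p ∧ ¬ G.Adj v q ∧
      ∀ w, w ≠ v → (w = p ∨ w = q ∨ G.Adj p w ∨ G.Adj q w) := by
  classical
  -- G - v is connected
  have hseteq : ((↑({v} : Finset V) : Set V)ᶜ) = {w | w ≠ v} := by
    ext w; simp
  have Hconn : (G.induce {w | w ≠ v}).Connected := by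
    by_contra hnc
    have h1 : (1 : ℕ) ∈ {k | ∃ S : Finset V, S.card = k ∧
        (¬ (G.induce (↑S : Set V)ᶜ).Connected ∨ ((↑S : Set V)ᶜ).Subsingleton)} := by
      refine ⟨{v}, Finset.card_singleton v, Or.inl ?_⟩
      rw [hseteq]; exact hnc
    have := Nat.sInf_le h1
    rw [show sInf {k | ∃ S : Finset V, S.card = k ∧
        (¬ (G.induce (↑S : Set V)ᶜ).Connected ∨ ((↑S : Set V)ᶜ).Subsingleton)} = kappa G
      from rfl] at this
    omega
  set H := G.induce {w | w ≠ v} with hH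
  have hune : {k | ∃ D : Finset ({w | w ≠ v}), D.card = k ∧ IsConnDomSet H ↑D}.Nonempty := by
    refine ⟨(Finset.univ : Finset ({w | w ≠ v})).card, Finset.univ, rfl, ?_, ?_⟩
    · intro w; left; simp
    · rw [Finset.coe_univ]
      exact ((SimpleGraph.induceUnivIso H).connected_iff).mpr Hconn
  have hlt : sInf {k | ∃ D : Finset ({w | w ≠ v}), D.card = k ∧ IsConnDomSet H ↑D} < 3 :=
    hvc v
  have hmem := Nat.sInf_mem hune
  obtain ⟨D, hDcard, hDdom, hDconn⟩ := hmem
  have hDne : D.Nonempty := by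
    obtain ⟨⟨x, hx⟩⟩ := hDconn.nonempty
    exact ⟨x, by simpa using hx⟩
  have hDle : D.card ≤ 2 := by omega
  have hDpos : 1 ≤ D.card := Finset.card_pos.mpr hDne
  interval_cases hc : D.card
  · -- card 1
    obtain ⟨p₀, hp₀⟩ := Finset.card_eq_one.mp hc
    refine ⟨p₀.val, p₀.val, p₀.prop, p₀.prop, Or.inl rfl, ?_⟩
    have hdomV : ∀ w, w ≠ v → (w = p₀.val ∨ G.Adj p₀.val w) := by
      intro w hw
      rcases hDdom ⟨w, hw⟩ with hmem' | ⟨u, hu, hadj⟩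
      · left
        rw [hp₀] at hmem'
        simp only [Finset.coe_singleton, Set.mem_singleton_iff] at hmem'
        exact congrArg Subtype.val hmem'
      · right
        rw [hp₀] at hu
        simp only [Finset.coe_singleton, Set.mem_singleton_iff] at hu
        subst hu
        exact hadj
    have hnadj : ¬ G.Adj v p₀.val := by
      intro hadj
      have : IsConnDomSet G ↑({p₀.val} : Finset V) := by
        constructor
        · intro w
          by_cases hwv : w = v
          · exact Or.inr ⟨p₀.val, by simp, hwv ▸ hadj.symm⟩
          · rcases hdomV w hwv with h | h
            · left; simp [h]
            · exact Or.inr ⟨p₀.val, by simp, h⟩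
        · have : (↑({p₀.val} : Finset V) : Set V) = {p₀.val} := by simp
          rw [this]; exact aux_ind_singleton G p₀.val
      have := hmin _ this
      simp at this
    refine ⟨hnadj, hnadj, ?_⟩
    intro w hw
    rcases hdomV w hw with h | h
    · exact Or.inl h
    · exact Or.inr (Or.inr (Or.inl h))
  · -- card 2
    obtain ⟨p₀, q₀, hpq₀, hp₀⟩ := Finset.card_eq_two.mp hc
    have hcoe : (↑D : Set ({w | w ≠ v})) = {p₀, q₀} := by rw [hp₀]; simp
    have hadj₀ : G.Adj p₀.val q₀.val := by
      rw [hcoe] at hDconn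
      rcases aux_pair_adj H hDconn with h | h
      · exact absurd h hpq₀
      · exact h
    have hdomV : ∀ w, w ≠ v → (w = p₀.val ∨ w = q₀.val ∨ G.Adj p₀.val w ∨ G.Adj q₀.val w) := by
      intro w hw
      rcases hDdom ⟨w, hw⟩ with hmem' | ⟨u, hu, hadj⟩
      · rw [hcoe] at hmem'
        rcases hmem' with h | h
        · exact Or.inl (congrArg Subtype.val h)
        · exact Or.inr (Or.inl (congrArg Subtype.val h))
      · rw [hcoe] at hu
        rcases hu with rfl | rfl
        · exact Or.inr (Or.inr (Or.inl hadj))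
        · exact Or.inr (Or.inr (Or.inr hadj))
    have hnadj : ¬ G.Adj v p₀.val ∧ ¬ G.Adj v q₀.val := by
      constructor <;> intro hadj
      all_goals {
        have hcds : IsConnDomSet G ↑({p₀.val, q₀.val} : Finset V) := by
          constructor
          · intro w
            by_cases hwv : w = v
            · subst hwv
              first
              | exact Or.inr ⟨p₀.val, by simp, hadj.symm⟩
              | exact Or.inr ⟨q₀.val, by simp, hadj.symm⟩
            · rcases hdomV w hwv with h | h | h | h
              · left; simp [h]
              · left; simp [h]
              · exact Or.inr ⟨p₀.val, by simp, h⟩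
              · exact Or.inr ⟨q₀.val, by simp, h⟩
          · have : (↑({p₀.val, q₀.val} : Finset V) : Set V) = {p₀.val, q₀.val} := by simp
            rw [this]; exact aux_ind_pair G hadj₀
        have := hmin _ hcds
        have hle : ({p₀.val, q₀.val} : Finset V).card ≤ 2 :=
          (Finset.card_insert_le _ _).trans (by simp)
        omega }
    exact ⟨p₀.val, q₀.val, p₀.prop, q₀.prop, Or.inr hadj₀, hnadj.1, hnadj.2, hdomV⟩

end Aux3

section Aux4

variable (G : SimpleGraph V) [Fintype V] [DecidableEq V]

lemma aux_lemE (hmin : ∀ D : Finset V, IsConnDomSet G ↑D → 3 ≤ D.card)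
    (hD3 : ∃ D : Finset V, D.card = 3 ∧ IsConnDomSet G ↑D)
    (hec : ∀ u v : V, u ≠ v → ¬ G.Adj u v →
      gammaC (G ⊔ SimpleGraph.fromEdgeSet {s(u, v)}) < 3)
    {u z : V} (huz : u ≠ z) (hnadj : ¬ G.Adj u z) :
    (∀ w, w = u ∨ w = z ∨ G.Adj u w ∨ G.Adj z w)
    ∨ (∀ w, w ≠ z → w = u ∨ G.Adj u w)
    ∨ (∀ w, w ≠ u → w = z ∨ G.Adj z w)
    ∨ (∃ t, G.Adj u t ∧ ¬ G.Adj z t ∧ ∀ w, w ≠ z → (w = u ∨ w = t ∨ G.Adj u w ∨ G.Adj t w))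
    ∨ (∃ t, G.Adj z t ∧ ¬ G.Adj u t ∧ ∀ w, w ≠ u → (w = z ∨ w = t ∨ G.Adj z w ∨ G.Adj t w)) := by
  classical
  set G' := G ⊔ SimpleGraph.fromEdgeSet {s(u, z)} with hG'
  have adj' : ∀ a b : V, G'.Adj a b ↔ (G.Adj a b ∨ (a = u ∧ b = z) ∨ (a = z ∧ b = u)) := by
    intro a b
    rw [hG', SimpleGraph.sup_adj, SimpleGraph.fromEdgeSet_adj]
    simp only [Set.mem_singleton_iff, Sym2.eq_iff]
    constructor
    · tauto
    · rintro (h | ⟨rfl, rfl⟩ | ⟨rfl, rfl⟩)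
      · tauto
      · exact Or.inr ⟨Or.inl ⟨rfl, rfl⟩, huz⟩
      · exact Or.inr ⟨Or.inr ⟨rfl, rfl⟩, huz.symm⟩
  have key : ∀ a w : V, G'.Adj a w → (w = z ∧ a = u) ∨ (w = u ∧ a = z) ∨ G.Adj a w := by
    intro a w h
    rcases (adj' a w).mp h with h | ⟨rfl, rfl⟩ | ⟨rfl, rfl⟩
    · exact Or.inr (Or.inr h)
    · exact Or.inl ⟨rfl, rfl⟩
    · exact Or.inr (Or.inl ⟨rfl, rfl⟩)
  have hle : G ≤ G' := le_sup_left
  have hune : {k | ∃ D : Finset V, D.card = k ∧ IsConnDomSet G' ↑D}.Nonempty := by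
    obtain ⟨D3, hc3, hdom3, hconn3⟩ := hD3
    refine ⟨D3.card, D3, rfl, ?_, ?_⟩
    · intro w
      rcases hdom3 w with h | ⟨u', hu', h⟩
      · exact Or.inl h
      · exact Or.inr ⟨u', hu', hle h⟩
    · exact hconn3.mono (fun a b hab => hle hab)
  have hlt : sInf {k | ∃ D : Finset V, D.card = k ∧ IsConnDomSet G' ↑D} < 3 :=
    hec u z huz hnadj
  obtain ⟨D, hDcard, hDdom, hDconn⟩ := Nat.sInf_mem hune
  have hDne : D.Nonempty := by
    obtain ⟨⟨x, hx⟩⟩ := hDconn.nonempty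
    exact ⟨x, by simpa using hx⟩
  have hDle : D.card ≤ 2 := by omega
  have hDpos : 1 ≤ D.card := Finset.card_pos.mpr hDne
  interval_cases hcc : D.card
  · -- card 1
    obtain ⟨c, hcD⟩ := Finset.card_eq_one.mp hcc
    have hdomV : ∀ w, w = c ∨ G'.Adj c w := by
      intro w
      rcases hDdom w with hmem' | ⟨u', hu', hadj⟩
      · left; rw [hcD] at hmem'; simpa using hmem'
      · right; rw [hcD] at hu'; simp only [Finset.coe_singleton,
          Set.mem_singleton_iff] at hu'; exact hu' ▸ hadj
    by_cases hcu : c = u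
    · subst hcu
      refine Or.inr (Or.inl ?_)
      intro w hwz
      rcases hdomV w with h | h
      · exact Or.inl h
      · rcases key c w h with ⟨h1, _⟩ | ⟨h1, h2⟩ | h3
        · exact absurd h1 hwz
        · exact absurd h2 huz
        · exact Or.inr h3
    · by_cases hcz : c = z
      · subst hcz
        refine Or.inr (Or.inr (Or.inl ?_))
        intro w hwu
        rcases hdomV w with h | h
        · exact Or.inl h
        · rcases key c w h with ⟨h1, h2⟩ | ⟨h1, _⟩ | h3
          · exact absurd h2.symm huz
          · exact absurd h1 hwu
          · exact Or.inr h3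
      · exfalso
        have hcds : IsConnDomSet G ↑({c} : Finset V) := by
          constructor
          · intro w
            rcases hdomV w with h | h
            · left; simp [h]
            · rcases key c w h with ⟨_, h2⟩ | ⟨_, h2⟩ | h3
              · exact absurd h2 hcu
              · exact absurd h2 hcz
              · exact Or.inr ⟨c, by simp, h3⟩
          · have hsx : (↑({c} : Finset V) : Set V) = {c} := by simp
            rw [hsx]; exact aux_ind_singleton G c
        have := hmin _ hcds
        simp at this
  · -- card 2
    obtain ⟨c, d, hcd, hcdD⟩ := Finset.card_eq_two.mp hcc
    have hcoe : (↑D : Set V) = {c, d} := by rw [hcdD]; simp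
    have hadj' : G'.Adj c d := by
      rw [hcoe] at hDconn
      rcases aux_pair_adj G' hDconn with h | h
      · exact absurd h hcd
      · exact h
    have hdomV : ∀ w, w = c ∨ w = d ∨ G'.Adj c w ∨ G'.Adj d w := by
      intro w
      rcases hDdom w with hmem' | ⟨u', hu', hadj⟩
      · rw [hcoe] at hmem'
        rcases hmem' with h | h
        · exact Or.inl h
        · exact Or.inr (Or.inl h)
      · rw [hcoe] at hu'
        rcases hu' with rfl | rfl
        · exact Or.inr (Or.inr (Or.inl hadj))
        · exact Or.inr (Or.inr (Or.inr hadj))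
    -- helper for the case u ∈ D, z ∉ D
    have hcaseUD : ∀ t : V, t ≠ u → t ≠ z → G'.Adj u t →
        (∀ w, w = u ∨ w = t ∨ G'.Adj u w ∨ G'.Adj t w) →
        (∃ t, G.Adj u t ∧ ¬ G.Adj z t ∧
          ∀ w, w ≠ z → (w = u ∨ w = t ∨ G.Adj u w ∨ G.Adj t w)) := by
      intro t htu htz hadjut hdom2
      have hGut : G.Adj u t := by
        rcases key u t hadjut with ⟨h1, _⟩ | ⟨_, h2⟩ | h3
        · exact absurd h1 htz
        · exact absurd h2 huz
        · exact h3
      refine ⟨t, hGut, ?_, ?_⟩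
      · by_contra hzt
        have hcds : IsConnDomSet G ↑({u, t} : Finset V) := by
          constructor
          · intro w
            by_cases hwz : w = z
            · exact Or.inr ⟨t, by simp, hwz ▸ hzt.symm⟩
            · rcases hdom2 w with h | h | h | h
              · left; simp [h]
              · left; simp [h]
              · rcases key u w h with ⟨h1, _⟩ | ⟨_, h2⟩ | h3
                · exact absurd h1 hwz
                · exact absurd h2 huz
                · exact Or.inr ⟨u, by simp, h3⟩
              · rcases key t w h with ⟨h1, _⟩ | ⟨_, h2⟩ | h3
                · exact absurd h1 hwz
                · exact absurd h2 htz
                · exact Or.inr ⟨t, by simp, h3⟩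
          · have hsx : (↑({u, t} : Finset V) : Set V) = {u, t} := by simp
            rw [hsx]; exact aux_ind_pair G hGut
        have := hmin _ hcds
        have hle2 : ({u, t} : Finset V).card ≤ 2 :=
          (Finset.card_insert_le _ _).trans (by simp)
        omega
      · intro w hwz
        rcases hdom2 w with h | h | h | h
        · exact Or.inl h
        · exact Or.inr (Or.inl h)
        · rcases key u w h with ⟨h1, _⟩ | ⟨_, h2⟩ | h3
          · exact absurd h1 hwz
          · exact absurd h2 huz
          · exact Or.inr (Or.inr (Or.inl h3))
        · rcases key t w h with ⟨h1, _⟩ | ⟨_, h2⟩ | h3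
          · exact absurd h1 hwz
          · exact absurd h2 htz
          · exact Or.inr (Or.inr (Or.inr h3))
    -- helper for the case z ∈ D, u ∉ D
    have hcaseZD : ∀ t : V, t ≠ z → t ≠ u → G'.Adj z t →
        (∀ w, w = z ∨ w = t ∨ G'.Adj z w ∨ G'.Adj t w) →
        (∃ t, G.Adj z t ∧ ¬ G.Adj u t ∧
          ∀ w, w ≠ u → (w = z ∨ w = t ∨ G.Adj z w ∨ G.Adj t w)) := by
      intro t htz htu hadjzt hdom2
      have hGzt : G.Adj z t := by
        rcases key z t hadjzt with ⟨_, h2⟩ | ⟨h1, _⟩ | h3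
        · exact absurd h2.symm huz
        · exact absurd h1 htu
        · exact h3
      refine ⟨t, hGzt, ?_, ?_⟩
      · by_contra hut
        have hcds : IsConnDomSet G ↑({z, t} : Finset V) := by
          constructor
          · intro w
            by_cases hwu : w = u
            · exact Or.inr ⟨t, by simp, hwu ▸ hut.symm⟩
            · rcases hdom2 w with h | h | h | h
              · left; simp [h]
              · left; simp [h]
              · rcases key z w h with ⟨_, h2⟩ | ⟨h1, _⟩ | h3
                · exact absurd h2.symm huz
                · exact absurd h1 hwu
                · exact Or.inr ⟨z, by simp, h3⟩
              · rcases key t w h with ⟨h1, h2⟩ | ⟨h1, _⟩ | h3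
                · exact absurd h2 htu
                · exact absurd h1 hwu
                · exact Or.inr ⟨t, by simp, h3⟩
          · have hsx : (↑({z, t} : Finset V) : Set V) = {z, t} := by simp
            rw [hsx]; exact aux_ind_pair G hGzt
        have := hmin _ hcds
        have hle2 : ({z, t} : Finset V).card ≤ 2 :=
          (Finset.card_insert_le _ _).trans (by simp)
        omega
      · intro w hwu
        rcases hdom2 w with h | h | h | h
        · exact Or.inl h
        · exact Or.inr (Or.inl h)
        · rcases key z w h with ⟨_, h2⟩ | ⟨h1, _⟩ | h3
          · exact absurd h2.symm huz
          · exact absurd h1 hwu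
          · exact Or.inr (Or.inr (Or.inl h3))
        · rcases key t w h with ⟨_, h2⟩ | ⟨h1, _⟩ | h3
          · exact absurd h2 htu
          · exact absurd h1 hwu
          · exact Or.inr (Or.inr (Or.inr h3))
    have hdomsym : ∀ w, w = d ∨ w = c ∨ G'.Adj d w ∨ G'.Adj c w := by
      intro w; rcases hdomV w with h | h | h | h <;> tauto
    by_cases hu1 : u = c
    · subst hu1
      by_cases hz2 : z = d
      · subst hz2
        left
        intro w
        rcases hdomV w with h | h | h | h
        · exact Or.inl h
        · exact Or.inr (Or.inl h)
        · rcases key u w h with ⟨h1, _⟩ | ⟨h1, _⟩ | h3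
          · exact Or.inr (Or.inl h1)
          · exact Or.inl h1
          · exact Or.inr (Or.inr (Or.inl h3))
        · rcases key z w h with ⟨h1, _⟩ | ⟨h1, _⟩ | h3
          · exact Or.inr (Or.inl h1)
          · exact Or.inl h1
          · exact Or.inr (Or.inr (Or.inr h3))
      · exact Or.inr (Or.inr (Or.inr (Or.inl
          (hcaseUD d (fun h => hcd h.symm) (fun h => hz2 h.symm) hadj' hdomV))))
    · by_cases hu2 : u = d
      · subst hu2
        by_cases hz1 : z = c
        · subst hz1
          left
          intro w
          rcases hdomV w with h | h | h | h
          · exact Or.inr (Or.inl h)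
          · exact Or.inl h
          · rcases key z w h with ⟨h1, _⟩ | ⟨h1, _⟩ | h3
            · exact Or.inr (Or.inl h1)
            · exact Or.inl h1
            · exact Or.inr (Or.inr (Or.inr h3))
          · rcases key u w h with ⟨h1, _⟩ | ⟨h1, _⟩ | h3
            · exact Or.inr (Or.inl h1)
            · exact Or.inl h1
            · exact Or.inr (Or.inr (Or.inl h3))
        · exact Or.inr (Or.inr (Or.inr (Or.inl
            (hcaseUD c hcd (fun h => hz1 h.symm) hadj'.symm hdomsym))))
      · by_cases hz1 : z = c
        · subst hz1
          exact Or.inr (Or.inr (Or.inr (Or.inr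
            (hcaseZD d hcd.symm (fun h => hu2 h.symm) hadj' hdomV))))
        · by_cases hz2 : z = d
          · subst hz2
            exact Or.inr (Or.inr (Or.inr (Or.inr
              (hcaseZD c hcd (fun h => hu1 h.symm) hadj'.symm hdomsym))))
          · exfalso
            have hGcd : G.Adj c d := by
              rcases key c d hadj' with ⟨_, h2⟩ | ⟨_, h2⟩ | h3
              · exact absurd h2.symm hu1
              · exact absurd h2.symm hz1
              · exact h3
            have hcds : IsConnDomSet G ↑({c, d} : Finset V) := by
              constructor
              · intro w
                rcases hdomV w with h | h | h | h
                · left; simp [h]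
                · left; simp [h]
                · rcases key c w h with ⟨_, h2⟩ | ⟨_, h2⟩ | h3
                  · exact absurd h2.symm hu1
                  · exact absurd h2.symm hz1
                  · exact Or.inr ⟨c, by simp, h3⟩
                · rcases key d w h with ⟨_, h2⟩ | ⟨_, h2⟩ | h3
                  · exact absurd h2.symm hu2
                  · exact absurd h2.symm hz2
                  · exact Or.inr ⟨d, by simp, h3⟩
              · have hsx : (↑({c, d} : Finset V) : Set V) = {c, d} := by simp
                rw [hsx]; exact aux_ind_pair G hGcd
            have := hmin _ hcds
            have hle2 : ({c, d} : Finset V).card ≤ 2 :=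
              (Finset.card_insert_le _ _).trans (by simp)
            omega

end Aux4

section Aux5

variable (G : SimpleGraph V) [Fintype V] [DecidableEq V]

lemma aux_lemX
    (lemV : ∀ v : V, ∃ p q : V, p ≠ v ∧ q ≠ v ∧ (p = q ∨ G.Adj p q) ∧
      ¬ G.Adj v p ∧ ¬ G.Adj v q ∧ ∀ w, w ≠ v → (w = p ∨ w = q ∨ G.Adj p w ∨ G.Adj q w))
    (W : Finset V) (hW : (↑W : Set V).Pairwise G.Adj)
    (v w' : V) (hvW : v ∈ W) (hw'W : w' ∈ W) (hne : w' ≠ v)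
    (hN : ∀ u, G.Adj v u → u ∈ W) : False := by
  obtain ⟨p₁, q₁, hp₁, hq₁, _, hw'p₁, hw'q₁, hdom₁⟩ := lemV w'
  have hadjw'v : G.Adj w' v := hW hw'W hvW hne
  rcases hdom₁ v (Ne.symm hne) with h | h | h | h
  · rw [← h] at hw'p₁; exact hw'p₁ hadjw'v
  · rw [← h] at hw'q₁; exact hw'q₁ hadjw'v
  · exact hw'p₁ (hW hw'W (hN p₁ h.symm) (Ne.symm hp₁))
  · exact hw'q₁ (hW hw'W (hN q₁ h.symm) (Ne.symm hq₁))

lemma aux_case4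
    (hmin : ∀ D : Finset V, IsConnDomSet G ↑D → 3 ≤ D.card)
    (lemV : ∀ v : V, ∃ p q : V, p ≠ v ∧ q ≠ v ∧ (p = q ∨ G.Adj p q) ∧
      ¬ G.Adj v p ∧ ¬ G.Adj v q ∧ ∀ w, w ≠ v → (w = p ∨ w = q ∨ G.Adj p w ∨ G.Adj q w))
    (lemE : ∀ u z : V, u ≠ z → ¬ G.Adj u z →
      (∀ w, w = u ∨ w = z ∨ G.Adj u w ∨ G.Adj z w)
      ∨ (∀ w, w ≠ z → w = u ∨ G.Adj u w)
      ∨ (∀ w, w ≠ u → w = z ∨ G.Adj z w)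
      ∨ (∃ t, G.Adj u t ∧ ¬ G.Adj z t ∧ ∀ w, w ≠ z → (w = u ∨ w = t ∨ G.Adj u w ∨ G.Adj t w))
      ∨ (∃ t, G.Adj z t ∧ ¬ G.Adj u t ∧ ∀ w, w ≠ u → (w = z ∨ w = t ∨ G.Adj z w ∨ G.Adj t w)))
    (I W : Finset V) (v x y p : V)
    (hI : (↑I : Set V).Pairwise fun a b => ¬ G.Adj a b)
    (hW : (↑W : Set V).Pairwise G.Adj)
    (hvI : v ∈ I) (hvW : v ∈ W)
    (hIW : ∀ a, a ∈ I → a ∈ W → a = v)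
    (huniv : ∀ u : V, u ∈ I ∨ u ∈ W ∨ u = x ∨ u = y)
    (hxI : x ∉ I) (hxW : x ∉ W) (hyI : y ∉ I) (hyW : y ∉ W) (hxy : x ≠ y)
    (hay : ∃ a ∈ I, a ≠ v ∧ G.Adj y a)
    (hwx : ∃ w ∈ W, w ≠ v ∧ ¬ G.Adj x w)
    (hpI : p ∈ I) (hpv : p ≠ v)
    (hvp : ¬ G.Adj v p) (hvx : ¬ G.Adj v x)
    (hpx : G.Adj p x)
    (hdom : ∀ w, w ≠ v → (w = p ∨ w = x ∨ G.Adj p w ∨ G.Adj x w)) : False := by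
  classical
  obtain ⟨wx, hwxW, hwxv, hxwx⟩ := hwx
  obtain ⟨ay, hayI, hayv, hyay⟩ := hay
  have hIna : ∀ a b : V, a ∈ I → b ∈ I → a ≠ b → ¬ G.Adj a b :=
    fun a b ha hb hne => hI ha hb hne
  have hWadj : ∀ a b : V, a ∈ W → b ∈ W → a ≠ b → G.Adj a b :=
    fun a b ha hb hne => hW ha hb hne
  have hxv : x ≠ v := fun h => hxI (by rw [h]; exact hvI)
  have hyv : y ≠ v := fun h => hyI (by rw [h]; exact hvI)
  have hpW : p ∉ W := fun h => hpv (hIW p hpI h)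
  have hvwx : v ≠ wx := Ne.symm hwxv
  -- x is adjacent to all of I \ {v}
  have d1 : ∀ a ∈ I, a ≠ v → G.Adj x a := by
    intro a haI hav
    by_cases hap : a = p
    · rw [hap]; exact hpx.symm
    · rcases hdom a hav with h | h | h | h
      · exact absurd h hap
      · exact absurd (by rw [← h]; exact haI) hxI
      · exact absurd h (hIna p a hpI haI (fun hh => hap hh.symm))
      · exact h
  -- p is adjacent to wx
  have d3 : G.Adj p wx := by
    rcases hdom wx hwxv with h | h | h | h
    · exact absurd (by rw [← h]; exact hwxW) hpW
    · exact absurd (by rw [← h]; exact hwxW) hxW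
    · exact h
    · exact absurd h hxwx
  -- step 2 : every w' in W \ {v} : ¬ y ~ w' and v ~ y
  have step2 : ∀ w' ∈ W, w' ≠ v → (¬ G.Adj w' y ∧ G.Adj y v) := by
    intro w' hw'W hw'v
    obtain ⟨p₁, q₁, hp₁, hq₁, _, hw'p₁, hw'q₁, hdom₁⟩ := lemV w'
    have hclaim : ∀ u : V, u ≠ w' → ¬ G.Adj w' u → G.Adj u v → u = y := by
      intro u hu hnadj hadj
      rcases huniv u with h | h | h | h
      · exact absurd hadj (hIna u v h hvI hadj.ne)
      · exact absurd (hWadj w' u hw'W h (Ne.symm hu)) hnadj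
      · rw [h] at hadj; exact absurd hadj.symm hvx
      · exact h
    rcases hdom₁ v (Ne.symm hw'v) with h | h | h | h
    · rw [← h] at hw'p₁; exact absurd (hWadj w' v hw'W hvW hw'v) hw'p₁
    · rw [← h] at hw'q₁; exact absurd (hWadj w' v hw'W hvW hw'v) hw'q₁
    · have hy := hclaim p₁ hp₁ hw'p₁ h
      rw [hy] at hw'p₁ h
      exact ⟨hw'p₁, h⟩
    · have hy := hclaim q₁ hq₁ hw'q₁ h
      rw [hy] at hw'q₁ h
      exact ⟨hw'q₁, h⟩
  have hvy : G.Adj v y := (step2 wx hwxW hwxv).2.symm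
  have hyw : ∀ w' ∈ W, w' ≠ v → ¬ G.Adj y w' :=
    fun w' h1 h2 hadj => (step2 w' h1 h2).1 hadj.symm
  -- the main contradiction engine
  have main : ∀ s : V, s ≠ wx → ¬ G.Adj wx s →
      (y = s ∨ G.Adj y s) →
      (∀ w, w ≠ wx → (w = y ∨ w = s ∨ G.Adj y w ∨ G.Adj s w)) → False := by
    intro s hswx hwxs hys hdom₂'
    rcases hys with rfl | hys
    · -- s = y : CDS {y, v}
      refine aux_no_cds2 G hmin hvy.symm ?_
      intro w
      by_cases hwwx : w = wx
      · refine Or.inr (Or.inr (Or.inr ?_))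
        rw [hwwx]; exact hWadj v wx hvW hwxW hvwx
      · rcases hdom₂' w hwwx with h | h | h | h
        · exact Or.inl h
        · exact Or.inl h
        · exact Or.inr (Or.inr (Or.inl h))
        · exact Or.inr (Or.inr (Or.inl h))
    have hsy : s ≠ y := fun h => G.irrefl (by rw [h] at hys; exact hys)
    rcases huniv s with hsI | hsW | rfl | h
    · -- s ∈ I : the heart of the proof
      have hsv : s ≠ v := fun h => hwxs (by rw [h]; exact hWadj wx v hwxW hvW hwxv)
      have hsp : s ≠ p := fun h => hwxs (by rw [h]; exact d3.symm)
      have hxs : G.Adj x s := d1 s hsI hsv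
      have hsWadj : ∀ w ∈ W, w ≠ v → w ≠ wx → G.Adj s w := by
        intro w hwW hwv hwwx
        rcases hdom₂' w hwwx with h | h | h | h
        · exact absurd (by rw [← h]; exact hwW) hyW
        · exact absurd (hIW s hsI (by rw [← h]; exact hwW)) hsv
        · exact absurd h (hyw w hwW hwv)
        · exact h
      have hvs : ¬ G.Adj v s := hIna v s hvI hsI (Ne.symm hsv)
      rcases lemE v s (Ne.symm hsv) hvs with ha | hb0 | hc0 |
        ⟨t, hvt, hst, hdomb⟩ | ⟨t, hst, hvt, hdomc⟩
      · rcases ha p with h | h | h | h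
        · exact hpv h
        · exact hsp h.symm
        · exact hvp h
        · exact hIna s p hsI hpI (fun hh => hsp hh) h
      · rcases hb0 x (fun h => hxI (by rw [h]; exact hsI)) with h | h
        · exact hxv h
        · exact hvx h
      · rcases hc0 wx hwxv with h | h
        · exact hsv (hIW s hsI (by rw [← h]; exact hwxW))
        · exact hwxs h.symm
      · -- (b) : t adjacent to v, not to s
        rcases huniv t with h | h | h | h
        · exact hIna v t hvI h hvt.ne hvt
        · by_cases htwx : t = wx
          · rcases hdomb x (fun hh => hxI (by rw [hh]; exact hsI)) with h1 | h1 | h1 | h1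
            · exact hxv h1
            · exact hxW (by rw [h1, htwx]; exact hwxW)
            · exact hvx h1
            · rw [htwx] at h1; exact hxwx h1.symm
          · exact hst (hsWadj t h hvt.ne' htwx)
        · rw [h] at hvt; exact hvx hvt
        · rw [h] at hst; exact hst hys.symm
      · -- (c) : t adjacent to s, not to v
        rcases huniv t with h | h | h | h
        · exact hIna s t hsI h hst.ne hst
        · by_cases htv : t = v
          · rw [htv] at hst; exact hvs hst.symm
          · exact hvt (hWadj v t hvW h (Ne.symm htv))
        · rcases hdomc wx (Ne.symm hvwx) with h1 | h1 | h1 | h1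
          · exact hsv (hIW s hsI (by rw [← h1]; exact hwxW))
          · rw [h] at h1; exact hxW (by rw [← h1]; exact hwxW)
          · exact hwxs h1.symm
          · rw [h] at h1; exact hxwx h1
        · rw [h] at hvt; exact hvt hvy
    · -- s ∈ W : impossible
      by_cases hsv : s = v
      · exact hwxs (by rw [hsv]; exact hWadj wx v hwxW hvW hwxv)
      · exact hwxs (hWadj wx s hwxW hsW (Ne.symm hswx))
    · -- s = x (note: `x` has been substituted by `s` in the context)
      have hyx : G.Adj y s := hys
      have hxw2 : ∀ w ∈ W, w ≠ v → w ≠ wx → G.Adj s w := by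
        intro w hwW hwv hwwx
        rcases hdom₂' w hwwx with h | h | h | h
        · exact absurd (by rw [← h]; exact hwW) hyW
        · exact absurd (by rw [← h]; exact hwW) hxW
        · exact absurd h (hyw w hwW hwv)
        · exact h
      by_cases hu : ∃ u ∈ W, u ≠ v ∧ u ≠ wx
      · obtain ⟨u, huW, huv, huwx⟩ := hu
        refine aux_no_cds2 G hmin (hxw2 u huW huv huwx) ?_
        intro w
        rcases huniv w with h | h | h | h
        · by_cases hwv : w = v
          · refine Or.inr (Or.inr (Or.inr ?_)); rw [hwv]
            exact (hWadj v u hvW huW (Ne.symm huv)).symm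
          · exact Or.inr (Or.inr (Or.inl (d1 w h hwv)))
        · by_cases hwu : w = u
          · exact Or.inr (Or.inl hwu)
          · exact Or.inr (Or.inr (Or.inr (hWadj u w huW h (fun hh => hwu hh.symm))))
        · exact Or.inl h
        · refine Or.inr (Or.inr (Or.inl ?_)); rw [h]; exact hyx.symm
      · -- W = {v, wx}
        push_neg at hu
        have hsmall : ∀ u ∈ W, u ≠ v → u = wx := hu
        obtain ⟨p₃, q₃, hp₃, hq₃, hcon₃, hyp₃, hyq₃, hdom₃⟩ := lemV y
        have hvy' : v ≠ y := hvy.ne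
        have hwx3 : wx = p₃ ∨ wx = q₃ := by
          rcases hdom₃ v hvy' with h | h | h | h
          · rw [← h] at hyp₃; exact absurd hvy.symm hyp₃
          · rw [← h] at hyq₃; exact absurd hvy.symm hyq₃
          · refine Or.inl ?_
            rcases huniv p₃ with h2 | h2 | h2 | h2
            · exact absurd h (hIna p₃ v h2 hvI h.ne)
            · exact (hsmall p₃ h2 h.ne).symm
            · rw [h2] at h; exact absurd h.symm hvx
            · exact absurd h2 hp₃
          · refine Or.inr ?_
            rcases huniv q₃ with h2 | h2 | h2 | h2
            · exact absurd h (hIna q₃ v h2 hvI h.ne)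
            · exact (hsmall q₃ h2 h.ne).symm
            · rw [h2] at h; exact absurd h.symm hvx
            · exact absurd h2 hq₃
        have hd : ∃ d : V, G.Adj d s ∧ d ∈ I ∧ d ≠ v ∧
            ((p₃ = wx ∧ q₃ = d) ∨ (p₃ = d ∧ q₃ = wx)) := by
          have hclass : ∀ e : V, G.Adj e s → ¬ G.Adj y e → e ≠ y → e ≠ wx →
              e ∈ I ∧ e ≠ v := by
            intro e hex hye hey hewx
            have hev : e ≠ v := fun h => hvx (by rw [← h]; exact hex)
            rcases huniv e with h | h | h | h
            · exact ⟨h, hev⟩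
            · exact absurd (hsmall e h hev) hewx
            · rw [h] at hex; exact absurd hex (G.irrefl)
            · exact absurd h hey
          rcases hdom₃ s hxy with h | h | h | h
          · rw [← h] at hyp₃; exact absurd hyx hyp₃
          · rw [← h] at hyq₃; exact absurd hyx hyq₃
          · have hp₃wx : p₃ ≠ wx := fun hh => hxwx (by rw [← hh]; exact h.symm)
            have hq₃wx : q₃ = wx := by
              rcases hwx3 with h1 | h1
              · exact absurd h1.symm hp₃wx
              · exact h1.symm
            obtain ⟨hins, hnev⟩ := hclass p₃ h hyp₃ hp₃ hp₃wx
            exact ⟨p₃, h, hins, hnev, Or.inr ⟨rfl, hq₃wx⟩⟩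
          · have hq₃wx : q₃ ≠ wx := fun hh => hxwx (by rw [← hh]; exact h.symm)
            have hp₃wx : p₃ = wx := by
              rcases hwx3 with h1 | h1
              · exact h1.symm
              · exact absurd h1.symm hq₃wx
            obtain ⟨hins, hnev⟩ := hclass q₃ h hyq₃ hq₃ hq₃wx
            exact ⟨q₃, h, hins, hnev, Or.inl ⟨hp₃wx, rfl⟩⟩
        obtain ⟨d, hdx, hdI2, hdv2, harr⟩ := hd
        have hdne : wx ≠ d := fun h => hwxv (hIW wx (by rw [h]; exact hdI2) hwxW)
        have hp₃q₃ : p₃ ≠ q₃ := by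
          rcases harr with ⟨h1, h2⟩ | ⟨h1, h2⟩
          · rw [h1, h2]; exact hdne
          · rw [h1, h2]; exact fun h => hdne h.symm
        have hadj₃ : G.Adj p₃ q₃ := hcon₃.resolve_left hp₃q₃
        have hwxdA : G.Adj wx d := by
          rcases harr with ⟨h1, h2⟩ | ⟨h1, h2⟩
          · rw [h1, h2] at hadj₃; exact hadj₃
          · rw [h1, h2] at hadj₃; exact hadj₃.symm
        have hwxall : ∀ a ∈ I, a ≠ v → G.Adj wx a := by
          intro a haI hav
          by_cases had : a = d
          · rw [had]; exact hwxdA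
          · have hya : a ≠ y := fun h => hyI (by rw [← h]; exact haI)
            rcases hdom₃ a hya with h | h | h | h
            · rcases harr with ⟨h1, h2⟩ | ⟨h1, h2⟩
              · exact absurd (hIW a haI (by rw [h, h1]; exact hwxW)) hav
              · exact absurd (h.trans h1) had
            · rcases harr with ⟨h1, h2⟩ | ⟨h1, h2⟩
              · exact absurd (h.trans h2) had
              · exact absurd (hIW a haI (by rw [h, h2]; exact hwxW)) hav
            · rcases harr with ⟨h1, h2⟩ | ⟨h1, h2⟩
              · rw [h1] at h; exact h
              · rw [h1] at h
                exact absurd h (hIna d a hdI2 haI (fun hh => had hh.symm))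
            · rcases harr with ⟨h1, h2⟩ | ⟨h1, h2⟩
              · rw [h2] at h
                exact absurd h (hIna d a hdI2 haI (fun hh => had hh.symm))
              · rw [h2] at h; exact h
        refine aux_no_cds2 G hmin (hwxall ay hayI hayv) ?_
        intro w
        rcases huniv w with h | h | h | h
        · by_cases hwv : w = v
          · refine Or.inr (Or.inr (Or.inl ?_)); rw [hwv]
            exact (hWadj v wx hvW hwxW hvwx).symm
          · exact Or.inr (Or.inr (Or.inl (hwxall w h hwv)))
        · by_cases hwv : w = v
          · refine Or.inr (Or.inr (Or.inl ?_)); rw [hwv]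
            exact (hWadj v wx hvW hwxW hvwx).symm
          · exact Or.inl (hsmall w h hwv)
        · refine Or.inr (Or.inr (Or.inr ?_)); rw [h]
          exact (d1 ay hayI hayv).symm
        · refine Or.inr (Or.inr (Or.inr ?_)); rw [h]
          exact hyay.symm
    · exact hsy h
  -- apply lemV at v and dispatch to `main`
  obtain ⟨p₂, q₂, hp₂, hq₂, hcon₂, hwxp₂, hwxq₂, hdom₂⟩ := lemV wx
  have hidy : ∀ u : V, u ≠ wx → ¬ G.Adj wx u → G.Adj u v → u = y := by
    intro u hu hnadj hadj
    rcases huniv u with h | h | h | h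
    · exact absurd hadj (hIna u v h hvI hadj.ne)
    · exact absurd (hWadj wx u hwxW h (Ne.symm hu)) hnadj
    · rw [h] at hadj; exact absurd hadj.symm hvx
    · exact h
  rcases hdom₂ v hvwx with h | h | h | h
  · rw [← h] at hwxp₂; exact absurd (hWadj wx v hwxW hvW hwxv) hwxp₂
  · rw [← h] at hwxq₂; exact absurd (hWadj wx v hwxW hvW hwxv) hwxq₂
  · have hyp2 : p₂ = y := hidy p₂ hp₂ hwxp₂ h
    subst hyp2
    exact main q₂ hq₂ hwxq₂ (hcon₂.imp id id)
      (fun w hw => by rcases hdom₂ w hw with h' | h' | h' | h' <;> tauto)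
  · have hyq2 : q₂ = y := hidy q₂ hq₂ hwxq₂ h
    subst hyq2
    refine main p₂ hp₂ hwxp₂ ?_
      (fun w hw => by rcases hdom₂ w hw with h' | h' | h' | h' <;> tauto)
    rcases hcon₂ with h' | h'
    · exact Or.inl h'.symm
    · exact Or.inr h'.symm

end Aux5

/-- a maximal `3`-`γc`-vertex critical graph on `n` vertices with
`α + ω = n - 1` has a maximum independent set and a maximum clique that are disjoint. -/
theorem stmt_6 (G : SimpleGraph V) [Fintype V] [DecidableEq V]
    (h : MaximalVertexCritical3 G)
    (hsum : alpha G + omegaNum G = Fintype.card V - 1) :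
    ∃ (I W : Finset V),
      (↑I : Set V).Pairwise (fun u v => ¬ G.Adj u v) ∧ I.card = alpha G ∧
      (↑W : Set V).Pairwise G.Adj ∧ W.card = omegaNum G ∧
      I ∩ W = ∅ := by
  classical
  obtain ⟨⟨hg3, hec⟩, hκ, hg3', hvc⟩ := h
  obtain ⟨hD3, hmin⟩ := aux_gamma3 G hg3
  have lemV := aux_lemV G hκ hmin hvc
  have lemE : ∀ u z : V, u ≠ z → ¬ G.Adj u z →
      (∀ w, w = u ∨ w = z ∨ G.Adj u w ∨ G.Adj z w)
      ∨ (∀ w, w ≠ z → w = u ∨ G.Adj u w)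
      ∨ (∀ w, w ≠ u → w = z ∨ G.Adj z w)
      ∨ (∃ t, G.Adj u t ∧ ¬ G.Adj z t ∧ ∀ w, w ≠ z → (w = u ∨ w = t ∨ G.Adj u w ∨ G.Adj t w))
      ∨ (∃ t, G.Adj z t ∧ ¬ G.Adj u t ∧ ∀ w, w ≠ u →
          (w = z ∨ w = t ∨ G.Adj z w ∨ G.Adj t w)) :=
    fun u z huz hnadj => aux_lemE G hmin hD3 hec huz hnadj
  obtain ⟨I, hIcard, hIpair, hImax⟩ := aux_alpha_exists G
  obtain ⟨W, hWcard, hWpair, hWmax⟩ := aux_omega_exists G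
  by_cases hIW0 : I ∩ W = ∅
  · exact ⟨I, W, hIpair, hIcard, hWpair, hWcard, hIW0⟩
  obtain ⟨v, hv⟩ := Finset.nonempty_iff_ne_empty.mpr hIW0
  rw [Finset.mem_inter] at hv
  obtain ⟨hvI, hvW⟩ := hv
  have hIW : ∀ a, a ∈ I → a ∈ W → a = v := by
    intro a haI haW
    by_contra hne
    exact hIpair haI hvI hne (hWpair haW hvW hne)
  have hcap : I ∩ W = {v} := by
    ext a
    simp only [Finset.mem_inter, Finset.mem_singleton]
    constructor
    · rintro ⟨h1, h2⟩; exact hIW a h1 h2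
    · rintro rfl; exact ⟨hvI, hvW⟩
  have hn3 : 3 ≤ Fintype.card V := by
    obtain ⟨D3', hc3, _⟩ := hD3
    rw [← hc3, ← Finset.card_univ]
    exact Finset.card_le_univ _
  have hcardU : (I ∪ W).card = Fintype.card V - 2 := by
    have hh := Finset.card_union_add_card_inter I W
    rw [hcap, Finset.card_singleton, hIcard, hWcard] at hh
    omega
  have hCcard : (Finset.univ \ (I ∪ W)).card = 2 := by
    rw [Finset.card_sdiff_of_subset (Finset.subset_univ _), Finset.card_univ, hcardU]
    have hle : (I ∪ W).card ≤ Fintype.card V := by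
      rw [← Finset.card_univ]; exact Finset.card_le_univ _
    omega
  obtain ⟨x, y, hxy, hCxy⟩ := Finset.card_eq_two.mp hCcard
  have hxC : x ∈ Finset.univ \ (I ∪ W) := by rw [hCxy]; simp
  have hyC : y ∈ Finset.univ \ (I ∪ W) := by rw [hCxy]; simp
  rw [Finset.mem_sdiff, Finset.mem_union] at hxC hyC
  have hxI : x ∉ I := fun hh => hxC.2 (Or.inl hh)
  have hxW : x ∉ W := fun hh => hxC.2 (Or.inr hh)
  have hyI : y ∉ I := fun hh => hyC.2 (Or.inl hh)
  have hyW : y ∉ W := fun hh => hyC.2 (Or.inr hh)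
  have huniv : ∀ u : V, u ∈ I ∨ u ∈ W ∨ u = x ∨ u = y := by
    intro u
    by_cases h1 : u ∈ I
    · exact Or.inl h1
    by_cases h2 : u ∈ W
    · exact Or.inr (Or.inl h2)
    have : u ∈ Finset.univ \ (I ∪ W) := by
      rw [Finset.mem_sdiff, Finset.mem_union]
      exact ⟨Finset.mem_univ u, fun hh => hh.elim h1 h2⟩
    rw [hCxy, Finset.mem_insert, Finset.mem_singleton] at this
    exact Or.inr (Or.inr this)
  have hIpos : 1 ≤ I.card := Finset.card_pos.mpr ⟨v, hvI⟩
  have hWpos : 1 ≤ W.card := Finset.card_pos.mpr ⟨v, hvW⟩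
  -- witness constructions
  have buildI : ∀ z : V, z ∉ I → z ∉ W → (∀ a ∈ I.erase v, ¬ G.Adj z a) →
      ∃ (I' W' : Finset V),
        (↑I' : Set V).Pairwise (fun u v => ¬ G.Adj u v) ∧ I'.card = alpha G ∧
        (↑W' : Set V).Pairwise G.Adj ∧ W'.card = omegaNum G ∧ I' ∩ W' = ∅ := by
    intro z hzI hzW hznadj
    refine ⟨insert z (I.erase v), W, ?_, ?_, hWpair, hWcard, ?_⟩
    · intro a ha b hb hne
      simp only [Finset.coe_insert, Set.mem_insert_iff, Finset.mem_coe,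
        Finset.mem_erase] at ha hb
      rcases ha with rfl | ⟨hav, haI⟩ <;> rcases hb with rfl | ⟨hbv, hbI⟩
      · exact absurd rfl hne
      · exact hznadj b (Finset.mem_erase.mpr ⟨hbv, hbI⟩)
      · exact fun hadj => hznadj a (Finset.mem_erase.mpr ⟨hav, haI⟩) hadj.symm
      · exact hIpair haI hbI hne
    · rw [Finset.card_insert_of_notMem (fun hmem => hzI (Finset.mem_of_mem_erase hmem)),
        Finset.card_erase_of_mem hvI]
      omega
    · apply Finset.eq_empty_iff_forall_notMem.mpr
      intro a ha
      rw [Finset.mem_inter, Finset.mem_insert, Finset.mem_erase] at ha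
      obtain ⟨h1, h2⟩ := ha
      rcases h1 with rfl | ⟨hne', hIa⟩
      · exact hzW h2
      · exact hne' (hIW a hIa h2)
  have buildW : ∀ z : V, z ∉ I → z ∉ W → (∀ w ∈ W.erase v, G.Adj z w) →
      ∃ (I' W' : Finset V),
        (↑I' : Set V).Pairwise (fun u v => ¬ G.Adj u v) ∧ I'.card = alpha G ∧
        (↑W' : Set V).Pairwise G.Adj ∧ W'.card = omegaNum G ∧ I' ∩ W' = ∅ := by
    intro z hzI hzW hzadj
    refine ⟨I, insert z (W.erase v), hIpair, hIcard, ?_, ?_, ?_⟩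
    · intro a ha b hb hne
      simp only [Finset.coe_insert, Set.mem_insert_iff, Finset.mem_coe,
        Finset.mem_erase] at ha hb
      rcases ha with rfl | ⟨hav, haW⟩ <;> rcases hb with rfl | ⟨hbv, hbW⟩
      · exact absurd rfl hne
      · exact hzadj b (Finset.mem_erase.mpr ⟨hbv, hbW⟩)
      · exact (hzadj a (Finset.mem_erase.mpr ⟨hav, haW⟩)).symm
      · exact hWpair haW hbW hne
    · rw [Finset.card_insert_of_notMem (fun hmem => hzW (Finset.mem_of_mem_erase hmem)),
        Finset.card_erase_of_mem hvW]
      omega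
    · apply Finset.eq_empty_iff_forall_notMem.mpr
      intro a ha
      rw [Finset.mem_inter, Finset.mem_insert, Finset.mem_erase] at ha
      obtain ⟨h1, h2⟩ := ha
      rcases h2 with rfl | ⟨hne', hWa⟩
      · exact hzI h1
      · exact hne' (hIW a h1 hWa)
  by_cases h1 : ∀ a ∈ I.erase v, ¬ G.Adj x a
  · exact buildI x hxI hxW h1
  by_cases h2 : ∀ a ∈ I.erase v, ¬ G.Adj y a
  · exact buildI y hyI hyW h2
  by_cases h3 : ∀ w ∈ W.erase v, G.Adj x w
  · exact buildW x hxI hxW h3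
  by_cases h4 : ∀ w ∈ W.erase v, G.Adj y w
  · exact buildW y hyI hyW h4
  exfalso
  push_neg at h1 h2 h3 h4
  obtain ⟨ax, haxE, hax⟩ := h1
  obtain ⟨ay, hayE, hay⟩ := h2
  obtain ⟨wx, hwxE, hwx⟩ := h3
  obtain ⟨wy, hwyE, hwy⟩ := h4
  have haxP : ∃ a ∈ I, a ≠ v ∧ G.Adj x a :=
    ⟨ax, (Finset.mem_erase.mp haxE).2, (Finset.mem_erase.mp haxE).1, hax⟩
  have hayP : ∃ a ∈ I, a ≠ v ∧ G.Adj y a :=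
    ⟨ay, (Finset.mem_erase.mp hayE).2, (Finset.mem_erase.mp hayE).1, hay⟩
  have hwxP : ∃ w ∈ W, w ≠ v ∧ ¬ G.Adj x w :=
    ⟨wx, (Finset.mem_erase.mp hwxE).2, (Finset.mem_erase.mp hwxE).1, hwx⟩
  have hwyP : ∃ w ∈ W, w ≠ v ∧ ¬ G.Adj y w :=
    ⟨wy, (Finset.mem_erase.mp hwyE).2, (Finset.mem_erase.mp hwyE).1, hwy⟩
  have huniv' : ∀ u : V, u ∈ I ∨ u ∈ W ∨ u = y ∨ u = x := by
    intro u; rcases huniv u with h | h | h | h <;> tauto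
  obtain ⟨p, q, hpv, hqv, hcon, hvp, hvq, hdomv⟩ := lemV v
  have hclass : ∀ r : V, r ≠ v → ¬ G.Adj v r → (r ∈ I ∨ r = x ∨ r = y) := by
    intro r hrv hnadj
    rcases huniv r with h | h | h | h
    · exact Or.inl h
    · exact absurd (hWpair hvW h (Ne.symm hrv)) hnadj
    · exact Or.inr (Or.inl h)
    · exact Or.inr (Or.inr h)
  have hw2 : 2 ≤ W.card := by
    rw [hWcard]; exact aux_omega_two G hD3
  have hW1 : 1 < W.card := by omega
  obtain ⟨w', hw'W, hw'v⟩ := Finset.exists_mem_ne hW1 v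
  have lemXapp : ¬ G.Adj v x → ¬ G.Adj v y → False := by
    intro hvx hvy
    refine aux_lemX G lemV W hWpair v w' hvW hw'W hw'v ?_
    intro u hadj
    rcases huniv u with h | h | h | h
    · exact absurd hadj (hIpair hvI h hadj.ne)
    · exact h
    · rw [h] at hadj; exact absurd hadj hvx
    · rw [h] at hadj; exact absurd hadj hvy
  have case1 : ∀ r : V, r ∈ I → r ≠ v → (∀ w, w ≠ v → (w = r ∨ G.Adj r w)) → False := by
    intro r hrI hrv hdom1
    have hstep : ∀ z : V, z ∉ I → G.Adj v z → False := by
      intro z hzI hvz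
      have hzv : z ≠ v := fun h => hzI (by rw [h]; exact hvI)
      have hrz : G.Adj r z := by
        rcases hdom1 z hzv with h | h
        · exact absurd (by rw [h]; exact hrI) hzI
        · exact h
      refine aux_no_cds2 G hmin hrz ?_
      intro w
      by_cases hwv : w = v
      · refine Or.inr (Or.inr (Or.inr ?_)); rw [hwv]; exact hvz.symm
      · rcases hdom1 w hwv with h | h
        · exact Or.inl h
        · exact Or.inr (Or.inr (Or.inl h))
    by_cases hvx : G.Adj v x
    · exact hstep x hxI hvx
    by_cases hvy : G.Adj v y
    · exact hstep y hyI hvy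
    exact lemXapp hvx hvy
  have case2 : ∀ z wz : V, wz ∈ W → wz ≠ v → ¬ G.Adj z wz → z ∉ W →
      (∀ w, w ≠ v → (w = z ∨ G.Adj z w)) → False := by
    intro z wz hwzW hwzv hnadj hzW hdom1
    rcases hdom1 wz hwzv with h | h
    · exact hzW (by rw [← h]; exact hwzW)
    · exact hnadj h
  rcases hclass p hpv hvp with hpI | hpxx | hpyy <;>
    rcases hclass q hqv hvq with hqI | hqxx | hqyy
  · -- p, q ∈ I
    rcases hcon with rfl | hadj
    · refine case1 p hpI hpv (fun w hw => ?_)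
      rcases hdomv w hw with h | h | h | h
      exacts [Or.inl h, Or.inl h, Or.inr h, Or.inr h]
    · exact hIpair hpI hqI hadj.ne hadj
  · -- p ∈ I, q = x
    rw [hqxx] at hqv hvq hcon hdomv
    rcases hcon with hpeq | hadj
    · exact hxI (by rw [← hpeq]; exact hpI)
    · exact aux_case4 G hmin lemV lemE I W v x y p hIpair hWpair hvI hvW hIW huniv
        hxI hxW hyI hyW hxy hayP hwxP hpI hpv hvp hvq hadj hdomv
  · -- p ∈ I, q = y
    rw [hqyy] at hqv hvq hcon hdomv
    rcases hcon with hpeq | hadj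
    · exact hyI (by rw [← hpeq]; exact hpI)
    · exact aux_case4 G hmin lemV lemE I W v y x p hIpair hWpair hvI hvW hIW huniv'
        hyI hyW hxI hxW (Ne.symm hxy) haxP hwyP hpI hpv hvp hvq hadj hdomv
  · -- p = x, q ∈ I
    rw [hpxx] at hpv hvp hcon hdomv
    rcases hcon with hpeq | hadj
    · exact hxI (by rw [hpeq]; exact hqI)
    · refine aux_case4 G hmin lemV lemE I W v x y q hIpair hWpair hvI hvW hIW huniv
        hxI hxW hyI hyW hxy hayP hwxP hqI hqv hvq hvp hadj.symm (fun w hw => ?_)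
      rcases hdomv w hw with h | h | h | h
      exacts [Or.inr (Or.inl h), Or.inl h, Or.inr (Or.inr (Or.inr h)),
        Or.inr (Or.inr (Or.inl h))]
  · -- p = x, q = x
    rw [hpxx] at hdomv hvp
    rw [hqxx] at hdomv
    obtain ⟨wx', hwx'W, hwx'v, hwx'⟩ := hwxP
    refine case2 x wx' hwx'W hwx'v hwx' hxW (fun w hw => ?_)
    rcases hdomv w hw with h | h | h | h
    exacts [Or.inl h, Or.inl h, Or.inr h, Or.inr h]
  · -- p = x, q = y
    rw [hpxx] at hvp
    rw [hqyy] at hvq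
    exact lemXapp hvp hvq
  · -- p = y, q ∈ I
    rw [hpyy] at hpv hvp hcon hdomv
    rcases hcon with hpeq | hadj
    · exact hyI (by rw [hpeq]; exact hqI)
    · refine aux_case4 G hmin lemV lemE I W v y x q hIpair hWpair hvI hvW hIW huniv'
        hyI hyW hxI hxW (Ne.symm hxy) haxP hwyP hqI hqv hvq hvp hadj.symm (fun w hw => ?_)
      rcases hdomv w hw with h | h | h | h
      exacts [Or.inr (Or.inl h), Or.inl h, Or.inr (Or.inr (Or.inr h)),
        Or.inr (Or.inr (Or.inl h))]
  · -- p = y, q = x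
    rw [hpyy] at hvp
    rw [hqxx] at hvq
    exact lemXapp hvq hvp
  · -- p = y, q = y
    rw [hpyy] at hdomv hvp
    rw [hqyy] at hdomv
    obtain ⟨wy', hwy'W, hwy'v, hwy'⟩ := hwyP
    refine case2 y wy' hwy'W hwy'v hwy' hyW (fun w hw => ?_)
    rcases hdomv w hw with h | h | h | h
    exacts [Or.inl h, Or.inl h, Or.inr h, Or.inr h]
end

section
/- For any maximal 3-γc-vertex critical graph G of order n, the sum of the independence number and the clique number satisfies α(G) + ω(G) ≤ n − 1. -/
open Finset

variable {V : Type*}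

section Helpers

variable {W : Type*}

lemma conn_pair_adj (H : SimpleGraph W) (hc : H.Connected) {a b : W} (hab : a ≠ b)
    (hall : ∀ c : W, c = a ∨ c = b) : H.Adj a b := by
  obtain ⟨w⟩ := hc.preconnected a b
  cases w with
  | nil => exact absurd rfl hab
  | cons h p =>
    rename_i c
    rcases hall c with rfl | rfl
    · exact absurd h H.irrefl
    · exact h

lemma conn_pair_set (G : SimpleGraph W) {S : Set W} {s t : W} (hs : s ∈ S) (ht : t ∈ S)
    (hall : ∀ x ∈ S, x = s ∨ x = t) (hadj : G.Adj s t) : (G.induce S).Connected := by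
  rw [SimpleGraph.connected_iff]
  refine ⟨?_, ⟨⟨s, hs⟩⟩⟩
  intro a b
  rcases hall a.1 a.2 with ha | ha <;> rcases hall b.1 b.2 with hb | hb
  · exact (Subtype.ext (ha.trans hb.symm) : a = b) ▸ SimpleGraph.Reachable.refl a
  · exact SimpleGraph.Adj.reachable (by simpa [SimpleGraph.comap_adj, ha, hb] using hadj)
  · exact SimpleGraph.Adj.reachable (by simpa [SimpleGraph.comap_adj, ha, hb] using hadj.symm)
  · exact (Subtype.ext (ha.trans hb.symm) : a = b) ▸ SimpleGraph.Reachable.refl a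

lemma conn_single_set (G : SimpleGraph W) {S : Set W} {s : W} (hs : s ∈ S)
    (hall : ∀ x ∈ S, x = s) : (G.induce S).Connected := by
  rw [SimpleGraph.connected_iff]
  refine ⟨?_, ⟨⟨s, hs⟩⟩⟩
  intro a b
  have : a = b := Subtype.ext ((hall a.1 a.2).trans (hall b.1 b.2).symm)
  exact this ▸ SimpleGraph.Reachable.refl a

variable [Fintype W] [DecidableEq W] {H : SimpleGraph W}

lemma cds_card_ge (hg : gammaC H = 3) {D : Finset W} (hD : IsConnDomSet H ↑D) :
    3 ≤ D.card := by
  have : gammaC H ≤ D.card := Nat.sInf_le ⟨D, rfl, hD⟩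
  omega

lemma no1 (hg : gammaC H = 3) (s : W) : ∃ w, w ≠ s ∧ ¬ H.Adj s w := by
  by_contra hcon
  push_neg at hcon
  have hD : IsConnDomSet H ↑({s} : Finset W) := by
    constructor
    · intro v
      by_cases hv : v = s
      · exact Or.inl (by simp [hv])
      · exact Or.inr ⟨s, by simp, hcon v hv⟩
    · exact conn_single_set H (s := s) (by simp) (fun x hx => by simpa using hx)
  have := cds_card_ge hg hD
  simp at this

lemma no2 (hg : gammaC H = 3) {s t : W} (hadj : H.Adj s t)
    (hdom : ∀ w, w = s ∨ w = t ∨ H.Adj s w ∨ H.Adj t w) : False := by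
  have hD : IsConnDomSet H ↑({s, t} : Finset W) := by
    constructor
    · intro v
      rcases hdom v with rfl | rfl | hv | hv
      · exact Or.inl (by simp)
      · exact Or.inl (by simp)
      · exact Or.inr ⟨s, by simp, hv⟩
      · exact Or.inr ⟨t, by simp, hv⟩
    · exact conn_pair_set H (by simp) (by simp) (by intro x hx; simpa using hx) hadj
  have h3 := cds_card_ge hg hD
  have : ({s, t} : Finset W).card ≤ 2 := Finset.card_insert_le _ _ |>.trans (by simp)
  omega

lemma univ_cds (hc : H.Connected) : IsConnDomSet H ↑(Finset.univ : Finset W) := by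
  constructor
  · intro v; exact Or.inl (by simp)
  · rw [Finset.coe_univ]
    exact (SimpleGraph.induceUnivIso H).connected_iff.mpr hc

lemma small_cds (hc : H.Connected) (hlt : gammaC H < 3) :
    (∃ z : W, ∀ w, w = z ∨ H.Adj z w) ∨
    (∃ s t : W, H.Adj s t ∧ ∀ w, w = s ∨ w = t ∨ H.Adj s w ∨ H.Adj t w) := by
  have hne : {k | ∃ D : Finset W, D.card = k ∧ IsConnDomSet H ↑D}.Nonempty :=
    ⟨(Finset.univ : Finset W).card, Finset.univ, rfl, univ_cds hc⟩
  obtain ⟨D, hcard, hdom, hconn⟩ := Nat.sInf_mem hne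
  have hlt' : D.card < 3 := by
    have : D.card = gammaC H := hcard
    omega
  have hD0 : D ≠ ∅ := by
    rintro rfl
    obtain ⟨x⟩ := hconn.nonempty
    simpa using x.2
  have hD1 : 1 ≤ D.card := Nat.one_le_iff_ne_zero.mpr (by simpa using hD0)
  interval_cases hDc : D.card
  · -- card 1
    obtain ⟨z, rfl⟩ := Finset.card_eq_one.mp hDc
    left
    refine ⟨z, fun w => ?_⟩
    rcases hdom w with hw | ⟨u, hu, hadj⟩
    · exact Or.inl (by simpa using hw)
    · have : u = z := by simpa using hu
      exact Or.inr (this ▸ hadj)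
  · -- card 2
    obtain ⟨p, q, hpq, rfl⟩ := Finset.card_eq_two.mp hDc
    right
    have hadj : H.Adj p q := by
      have := conn_pair_adj _ hconn (a := (⟨p, by simp⟩ : {x // x ∈ (↑({p, q} : Finset W) : Set W)}))
        (b := ⟨q, by simp⟩) (by simp [Subtype.ext_iff, hpq]) ?_
      · exact this
      · rintro ⟨c, hcmem⟩
        have : c = p ∨ c = q := by simpa using hcmem
        rcases this with rfl | rfl
        · exact Or.inl rfl
        · exact Or.inr rfl
    refine ⟨p, q, hadj, fun w => ?_⟩
    rcases hdom w with hw | ⟨u, hu, huw⟩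
    · rcases (by simpa using hw : w = p ∨ w = q) with rfl | rfl
      · exact Or.inl rfl
      · exact Or.inr (Or.inl rfl)
    · rcases (by simpa using hu : u = p ∨ u = q) with rfl | rfl
      · exact Or.inr (Or.inr (Or.inl huw))
      · exact Or.inr (Or.inr (Or.inr huw))

end Helpers

section Graph

variable [Fintype V] [DecidableEq V] {G : SimpleGraph V}

lemma kappa_notmem (hk : 2 ≤ kappa G) {S : Finset V} (hS : S.card ≤ 1) :
    (G.induce (↑S : Set V)ᶜ).Connected ∧ ¬ ((↑S : Set V)ᶜ).Subsingleton := by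
  by_contra hcon
  rw [not_and_or, Classical.not_not] at hcon
  have hmem : S.card ∈ {k | ∃ S : Finset V, S.card = k ∧
      (¬ (G.induce (↑S : Set V)ᶜ).Connected ∨ ((↑S : Set V)ᶜ).Subsingleton)} := by
    exact ⟨S, rfl, by tauto⟩
  have := Nat.sInf_le hmem
  have : kappa G ≤ 1 := le_trans this hS
  omega

lemma conn_of_kappa (hk : 2 ≤ kappa G) : G.Connected ∧ ∃ a b : V, a ≠ b := by
  have h := kappa_notmem hk (S := ∅) (by simp)
  rw [Finset.coe_empty, Set.compl_empty] at h
  refine ⟨(SimpleGraph.induceUnivIso G).connected_iff.mp h.1, ?_⟩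
  have := h.2
  rw [Set.not_subsingleton_iff] at this
  obtain ⟨a, _, b, _, hab⟩ := this
  exact ⟨a, b, hab⟩

lemma conn_del_vertex (hk : 2 ≤ kappa G) (v : V) :
    (G.induce {w | w ≠ v}).Connected := by
  have h := kappa_notmem hk (S := {v}) (by simp)
  have hset : (↑({v} : Finset V) : Set V)ᶜ = {w | w ≠ v} := by ext w; simp
  rw [hset] at h
  exact h.1

lemma exists_adj (hc : G.Connected) (hnt : ∃ a b : V, a ≠ b) (v : V) :
    ∃ w, G.Adj v w := by
  obtain ⟨a, b, hab⟩ := hnt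
  have : ∃ u : V, u ≠ v := by
    by_cases hav : a = v
    · exact ⟨b, by rintro rfl; exact hab hav⟩
    · exact ⟨a, hav⟩
  obtain ⟨u, huv⟩ := this
  obtain ⟨w⟩ := hc.preconnected v u
  cases w with
  | nil => exact absurd rfl huv
  | cons h p => exact ⟨_, h⟩

lemma vertexCrit_struct (hg : gammaC G = 3) (hk : 2 ≤ kappa G)
    (hcrit : ∀ v : V, gammaC (G.induce {w | w ≠ v}) < 3) (v : V) :
    ∃ s t : V, G.Adj s t ∧ s ≠ v ∧ t ≠ v ∧ ¬ G.Adj v s ∧ ¬ G.Adj v t ∧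
      ∀ w, w ≠ v → (w = s ∨ w = t ∨ G.Adj s w ∨ G.Adj t w) := by
  have hconn := conn_del_vertex hk v
  have hcases := small_cds hconn (hcrit v)
  have hGconn := conn_of_kappa hk
  rcases hcases with ⟨z, hz⟩ | ⟨s, t, hst, hdom⟩
  · -- singleton CDS of G - v: contradiction
    exfalso
    have hzdom : ∀ w, w ≠ v → w = (z : V) ∨ G.Adj (z : V) w := by
      intro w hw
      rcases hz ⟨w, hw⟩ with h | h
      · exact Or.inl (by simpa [Subtype.ext_iff] using h)
      · exact Or.inr (by simpa using h)
    by_cases hzv : G.Adj (z : V) v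
    · obtain ⟨w₀, hw0ne, hw0nadj⟩ := no1 hg (z : V)
      by_cases hwv : w₀ = v
      · exact hw0nadj (hwv ▸ hzv)
      · rcases hzdom w₀ hwv with h | h
        · exact hw0ne h
        · exact hw0nadj h
    · obtain ⟨w₀, hw0⟩ := exists_adj hGconn.1 hGconn.2 v
      have hw0v : w₀ ≠ v := fun h => G.irrefl (h ▸ hw0)
      have hw0z : w₀ ≠ (z : V) := by rintro rfl; exact hzv hw0.symm
      have hzw0 : G.Adj (z : V) w₀ := by
        rcases hzdom w₀ hw0v with h | h
        · exact absurd h hw0z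
        · exact h
      exact no2 hg hzw0 (fun w => by
        by_cases hwv : w = v
        · exact Or.inr (Or.inr (Or.inr (hwv ▸ hw0.symm)))
        · rcases hzdom w hwv with h | h
          · exact Or.inl h
          · exact Or.inr (Or.inr (Or.inl h)))
  · -- pair CDS
    have hadj : G.Adj (s : V) (t : V) := by simpa using hst
    have hdom' : ∀ w, w ≠ v → (w = (s : V) ∨ w = (t : V) ∨ G.Adj (s : V) w ∨ G.Adj (t : V) w) := by
      intro w hw
      rcases hdom ⟨w, hw⟩ with h | h | h | h
      · exact Or.inl (by simpa [Subtype.ext_iff] using h)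
      · exact Or.inr (Or.inl (by simpa [Subtype.ext_iff] using h))
      · exact Or.inr (Or.inr (Or.inl (by simpa using h)))
      · exact Or.inr (Or.inr (Or.inr (by simpa using h)))
    have hfull : (G.Adj v (s : V) ∨ G.Adj v (t : V)) → False := by
      intro hcase
      refine no2 hg hadj (fun w => ?_)
      by_cases hwv : w = v
      · subst hwv
        rcases hcase with h | h
        · exact Or.inr (Or.inr (Or.inl h.symm))
        · exact Or.inr (Or.inr (Or.inr h.symm))
      · exact hdom' w hwv
    exact ⟨s, t, hadj, s.2, t.2, fun h => hfull (Or.inl h), fun h => hfull (Or.inr h), hdom'⟩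

end Graph

section EdgeCrit

variable [Fintype V] [DecidableEq V] {G : SimpleGraph V}

lemma sup_edge_adj {u v a b : V} (hne : u ≠ v) :
    (G ⊔ SimpleGraph.fromEdgeSet {s(u, v)}).Adj a b ↔
      (G.Adj a b ∨ (a = u ∧ b = v) ∨ (a = v ∧ b = u)) := by
  simp only [SimpleGraph.sup_adj, SimpleGraph.fromEdgeSet_adj, Set.mem_singleton_iff,
    Sym2.eq, Sym2.rel_iff', Prod.mk.injEq, Prod.swap_prod_mk]
  constructor
  · rintro (h | ⟨h1 | h1, h2⟩)
    · exact Or.inl h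
    · exact Or.inr (Or.inl h1)
    · exact Or.inr (Or.inr h1)
  · rintro (h | ⟨rfl, rfl⟩ | ⟨rfl, rfl⟩)
    · exact Or.inl h
    · exact Or.inr ⟨Or.inl ⟨rfl, rfl⟩, hne⟩
    · exact Or.inr ⟨Or.inr ⟨rfl, rfl⟩, hne.symm⟩

lemma edgeCrit_struct (hg : gammaC G = 3) (hGC : G.Connected) {u v : V}
    (hcrit : gammaC (G ⊔ SimpleGraph.fromEdgeSet {s(u, v)}) < 3)
    (hne : u ≠ v) (hnadj : ¬ G.Adj u v) :
    (∀ w, w ≠ u → w ≠ v → G.Adj u w ∨ G.Adj v w)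
    ∨ (∃ q, G.Adj u q ∧ ¬ G.Adj v q ∧ v ≠ q ∧
        ∀ w, w ≠ v → (w = u ∨ w = q ∨ G.Adj u w ∨ G.Adj q w))
    ∨ (∃ q, G.Adj v q ∧ ¬ G.Adj u q ∧ u ≠ q ∧
        ∀ w, w ≠ u → (w = v ∨ w = q ∨ G.Adj v w ∨ G.Adj q w)) := by
  set G' := G ⊔ SimpleGraph.fromEdgeSet {s(u, v)} with hG'
  have hGadj : ∀ a b, G'.Adj a b ↔ (G.Adj a b ∨ (a = u ∧ b = v) ∨ (a = v ∧ b = u)) :=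
    fun a b => sup_edge_adj hne
  have hconn' : G'.Connected := hGC.mono le_sup_left
  have hnt : ∃ a b : V, a ≠ b := ⟨u, v, hne⟩
  -- helper: a "one endpoint dominates all but b" situation is impossible
  have key1 : ∀ a b : V, ¬ G.Adj a b → (∀ w, w ≠ b → w = a ∨ G.Adj a w) → False := by
    intro a b hnadj' hdomab
    obtain ⟨w₀, hw0⟩ := exists_adj hGC hnt b
    have hw0b : w₀ ≠ b := fun h => G.irrefl (h ▸ hw0)
    have hw0a : w₀ ≠ a := by rintro rfl; exact hnadj' hw0.symm
    have hadj0 : G.Adj a w₀ := (hdomab w₀ hw0b).resolve_left hw0a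
    refine no2 hg hadj0 (fun w => ?_)
    by_cases hwb : w = b
    · exact Or.inr (Or.inr (Or.inr (hwb ▸ hw0.symm)))
    · rcases hdomab w hwb with h | h
      · exact Or.inl h
      · exact Or.inr (Or.inr (Or.inl h))
  -- helper: package a type-B/C conclusion
  have keyP : ∀ u' v' q : V, q ≠ v' → G.Adj u' q →
      (∀ w, w ≠ v' → (w = u' ∨ w = q ∨ G.Adj u' w ∨ G.Adj q w)) →
      (G.Adj u' q ∧ ¬ G.Adj v' q ∧ v' ≠ q ∧
        ∀ w, w ≠ v' → (w = u' ∨ w = q ∨ G.Adj u' w ∨ G.Adj q w)) := by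
    intro u' v' q hqv hadj hdomq
    refine ⟨hadj, ?_, hqv.symm, hdomq⟩
    intro hvq
    refine no2 hg hadj (fun w => ?_)
    by_cases hwv : w = v'
    · exact Or.inr (Or.inr (Or.inr (hwv ▸ hvq.symm)))
    · exact hdomq w hwv
  rcases small_cds hconn' hcrit with ⟨z, hz⟩ | ⟨s, t, hst, hdom⟩
  · exfalso
    by_cases hzu : z = u
    · subst hzu
      refine key1 z v hnadj (fun w hwv => ?_)
      rcases hz w with h | h
      · exact Or.inl h
      · rcases (hGadj z w).mp h with h' | ⟨_, h'⟩ | ⟨h', _⟩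
        · exact Or.inr h'
        · exact absurd h' hwv
        · exact absurd h' hne
    · by_cases hzv : z = v
      · subst hzv
        refine key1 z u (fun h => hnadj h.symm) (fun w hwu => ?_)
        rcases hz w with h | h
        · exact Or.inl h
        · rcases (hGadj z w).mp h with h' | ⟨h', _⟩ | ⟨_, h'⟩
          · exact Or.inr h'
          · exact absurd h' hne.symm
          · exact absurd h' hwu
      · obtain ⟨w₀, hw0ne, hw0nadj⟩ := no1 hg z
        rcases hz w₀ with h | h
        · exact hw0ne h
        · rcases (hGadj z w₀).mp h with h' | ⟨h', _⟩ | ⟨h', _⟩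
          · exact hw0nadj h'
          · exact hzu h'
          · exact hzv h'
  · -- pair case
    have hpu : ∀ w, w ≠ v → G'.Adj u w → G.Adj u w := by
      intro w hwv h
      rcases (hGadj u w).mp h with h' | ⟨_, h'⟩ | ⟨h', _⟩
      · exact h'
      · exact absurd h' hwv
      · exact absurd h' hne
    have hpv : ∀ w, w ≠ u → G'.Adj v w → G.Adj v w := by
      intro w hwu h
      rcases (hGadj v w).mp h with h' | ⟨h', _⟩ | ⟨_, h'⟩
      · exact h'
      · exact absurd h' hne.symm
      · exact absurd h' hwu
    have hpo : ∀ a w, a ≠ u → a ≠ v → G'.Adj a w → G.Adj a w := by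
      intro a w hau hav h
      rcases (hGadj a w).mp h with h' | ⟨h', _⟩ | ⟨h', _⟩
      · exact h'
      · exact absurd h' hau
      · exact absurd h' hav
    by_cases hsu : s = u
    · subst hsu
      by_cases htv : t = v
      · subst htv
        refine Or.inl (fun w hwu hwv => ?_)
        rcases hdom w with h | h | h | h
        · exact absurd h hwu
        · exact absurd h hwv
        · exact Or.inl (hpu w hwv h)
        · exact Or.inr (hpv w hwu h)
      · have htu : t ≠ s := fun h => G'.irrefl (h ▸ hst)
        have hadj : G.Adj s t := hpu t htv hst
        refine Or.inr (Or.inl ⟨t, keyP s v t htv hadj (fun w hwv => ?_)⟩)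
        rcases hdom w with h | h | h | h
        · exact Or.inl h
        · exact Or.inr (Or.inl h)
        · exact Or.inr (Or.inr (Or.inl (hpu w hwv h)))
        · exact Or.inr (Or.inr (Or.inr (hpo t w htu htv h)))
    · by_cases hsv : s = v
      · subst hsv
        by_cases htu : t = u
        · subst htu
          refine Or.inl (fun w hwu hwv => ?_)
          rcases hdom w with h | h | h | h
          · exact absurd h hwv
          · exact absurd h hwu
          · exact Or.inr (hpv w hwu h)
          · exact Or.inl (hpu w hwv h)
        · have hts : t ≠ s := fun h => G'.irrefl (h ▸ hst)
          have hadj : G.Adj s t := hpv t htu hst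
          refine Or.inr (Or.inr ⟨t, keyP s u t htu hadj (fun w hwu => ?_)⟩)
          rcases hdom w with h | h | h | h
          · exact Or.inl h
          · exact Or.inr (Or.inl h)
          · exact Or.inr (Or.inr (Or.inl (hpv w hwu h)))
          · exact Or.inr (Or.inr (Or.inr (hpo t w htu hts h)))
      · by_cases htu : t = u
        · subst htu
          have hadj : G.Adj t s := hpu s hsv hst.symm
          refine Or.inr (Or.inl ⟨s, keyP t v s hsv hadj (fun w hwv => ?_)⟩)
          rcases hdom w with h | h | h | h
          · exact Or.inr (Or.inl h)
          · exact Or.inl h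
          · exact Or.inr (Or.inr (Or.inr (hpo s w hsu hsv h)))
          · exact Or.inr (Or.inr (Or.inl (hpu w hwv h)))
        · by_cases htv : t = v
          · subst htv
            have hadj : G.Adj t s := hpv s hsu hst.symm
            refine Or.inr (Or.inr ⟨s, keyP t u s hsu hadj (fun w hwu => ?_)⟩)
            rcases hdom w with h | h | h | h
            · exact Or.inr (Or.inl h)
            · exact Or.inl h
            · exact Or.inr (Or.inr (Or.inr (hpo s w hsu hsv h)))
            · exact Or.inr (Or.inr (Or.inl (hpv w hwu h)))
          · exfalso
            have hadj : G.Adj s t := hpo s t hsu hsv hst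
            refine no2 hg hadj (fun w => ?_)
            rcases hdom w with h | h | h | h
            · exact Or.inl h
            · exact Or.inr (Or.inl h)
            · exact Or.inr (Or.inr (Or.inl (hpo s w hsu hsv h)))
            · exact Or.inr (Or.inr (Or.inr (hpo t w htu htv h)))

end EdgeCrit

section Core

variable [Fintype V] [DecidableEq V] {G : SimpleGraph V}

lemma core (hg : gammaC G = 3) (hGC : G.Connected) (hk : 2 ≤ kappa G)
    (hvcrit : ∀ v : V, gammaC (G.induce {w | w ≠ v}) < 3)
    (hecrit : ∀ u v : V, u ≠ v → ¬ G.Adj u v →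
      gammaC (G ⊔ SimpleGraph.fromEdgeSet {s(u, v)}) < 3)
    {I C : Finset V}
    (hind : ∀ {p q : V}, p ∈ I → q ∈ I → p ≠ q → ¬ G.Adj p q)
    (hcl : ∀ {p q : V}, p ∈ C → q ∈ C → p ≠ q → G.Adj p q)
    {a x y : V} (haI : a ∈ I) (haC : a ∈ C)
    (hxy : G.Adj x y) (hxa : x ≠ a) (hya : y ≠ a) (hax : ¬ G.Adj a x) (hay : ¬ G.Adj a y)
    (hdoma : ∀ w, w ≠ a → (w = x ∨ w = y ∨ G.Adj x w ∨ G.Adj y w))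
    (hyI : y ∈ I)
    (hV : ∀ w : V, w ∈ I ∨ w ∈ C ∨ w = x) : False := by
  have hxI : x ∉ I := fun hx => hind hx hyI hxy.ne hxy
  have hxC : x ∉ C := fun hx => hax (hcl haC hx (Ne.symm hxa))
  -- Step A : x is adjacent to every vertex of I except a
  have xDom : ∀ z ∈ I, z ≠ a → G.Adj x z := by
    rcases edgeCrit_struct hg hGC (hecrit a x (Ne.symm hxa) hax) (Ne.symm hxa) hax with
      hA | ⟨q, hq1, hq2, hq3, hq4⟩ | ⟨q, hq1, hq2, hq3, hq4⟩
    · intro z hz hza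
      have hzx : z ≠ x := fun h => hxI (h ▸ hz)
      rcases hA z hza hzx with h | h
      · exact absurd h (hind haI hz (Ne.symm hza))
      · exact h
    · -- type B : {a, q} dominates V \ {x} : impossible
      exfalso
      have hqI : q ∉ I := fun hqI' => hind haI hqI' hq1.ne hq1
      have hqC : q ∈ C := by
        rcases hV q with h | h | h
        · exact absurd h hqI
        · exact h
        · exact absurd h.symm hq3
      have hqy : G.Adj q y := by
        rcases hq4 y hxy.ne' with h | h | h | h
        · exact absurd h hya
        · exact absurd (h ▸ hyI) hqI
        · exact absurd h hay
        · exact h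
      refine no2 hg hqy (fun w => ?_)
      rcases hV w with hw | hw | hw
      · by_cases hwa : w = a
        · exact Or.inr (Or.inr (Or.inl (hwa ▸ hq1.symm)))
        · by_cases hwy : w = y
          · exact Or.inr (Or.inl hwy)
          · have hwx : w ≠ x := fun h => hxI (h ▸ hw)
            rcases hq4 w hwx with h | h | h | h
            · exact absurd h hwa
            · exact absurd (h ▸ hw) hqI
            · exact absurd h (hind haI hw (fun h' => hwa h'.symm))
            · exact Or.inr (Or.inr (Or.inl h))
      · by_cases hwq : w = q
        · exact Or.inl hwq
        · exact Or.inr (Or.inr (Or.inl (hcl hqC hw (fun h' => hwq h'.symm))))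
      · exact Or.inr (Or.inr (Or.inr (hw ▸ hxy.symm)))
    · -- type C : {x, q} dominates V \ {a}
      have hqC : q ∉ C := fun h => hq2 (hcl haC h hq3)
      have hqI : q ∈ I := by
        rcases hV q with h | h | h
        · exact h
        · exact absurd h hqC
        · exact absurd (h ▸ hq1) G.irrefl
      intro z hz hza
      by_cases hzq : z = q
      · exact hzq ▸ hq1
      · rcases hq4 z hza with h | h | h | h
        · exact absurd (h ▸ hz) hxI
        · exact absurd h hzq
        · exact h
        · exact absurd h (hind hqI hz (fun h' => hzq h'.symm))
  -- Step B : a clique vertex s₀ ≠ a whose "deleted" dominating pair exists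
  obtain ⟨s, t, hst, hsx, htx, hxs, hxt, hdomx⟩ := vertexCrit_struct hg hk hvcrit x
  have memC : ∀ r, r ≠ x → ¬ G.Adj x r → r ∈ C := by
    intro r hrx hnadj
    rcases hV r with h | h | h
    · by_cases hra : r = a
      · exact hra ▸ haC
      · exact absurd (xDom r h hra) hnadj
    · exact h
    · exact absurd h hrx
  have hsC : s ∈ C := memC s hsx hxs
  have htC : t ∈ C := memC t htx hxt
  obtain ⟨s₀, hs0C, hs0a⟩ : ∃ s₀, s₀ ∈ C ∧ s₀ ≠ a := by
    by_cases hsa : s = a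
    · exact ⟨t, htC, fun h => hst.ne (by rw [hsa, h])⟩
    · exact ⟨s, hsC, hsa⟩
  -- Step C : dominating pair for G - s₀ leads to contradiction
  obtain ⟨p, q, hpq, hps, hqs, hsp, hsq, hdoms⟩ := vertexCrit_struct hg hk hvcrit s₀
  have notC : ∀ r, r ≠ s₀ → ¬ G.Adj s₀ r → r ∉ C :=
    fun r hr hnadj hrC => hnadj (hcl hs0C hrC (fun h => hr h.symm))
  have hpC : p ∉ C := notC p hps hsp
  have hqC : q ∉ C := notC q hqs hsq
  have final : ∀ p' q' : V, G.Adj p' q' → p' = x → q' ∈ I →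
      (∀ w, w ≠ s₀ → (w = p' ∨ w = q' ∨ G.Adj p' w ∨ G.Adj q' w)) → False := by
    rintro p' q' hadj rfl hq'I hdoms'
    have hq'a : q' ≠ a := fun h => hax (h ▸ hadj).symm
    rcases hdoms' a (Ne.symm hs0a) with h | h | h | h
    · exact hxa h.symm
    · exact hq'a h.symm
    · exact hax h.symm
    · exact hind hq'I haI hq'a h
  rcases hV p with hpI | hpI | hpI
  · -- p ∈ I, so q = x
    have hqx : q = x := by
      rcases hV q with h | h | h
      · exact absurd hpq (hind hpI h hpq.ne)
      · exact absurd h hqC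
      · exact h
    exact final q p hpq.symm hqx hpI (fun w hw => by
      rcases hdoms w hw with h | h | h | h
      · exact Or.inr (Or.inl h)
      · exact Or.inl h
      · exact Or.inr (Or.inr (Or.inr h))
      · exact Or.inr (Or.inr (Or.inl h)))
  · exact hpC hpI
  · -- p = x, so q ∈ I
    have hqI : q ∈ I := by
      rcases hV q with h | h | h
      · exact h
      · exact absurd h hqC
      · exact absurd (h ▸ hpI ▸ hpq) G.irrefl
    exact final p q hpq hpI hqI hdoms

end Core

section Main

variable [Fintype V] [DecidableEq V]

lemma alpha_spec (G : SimpleGraph V) :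
    ∃ I : Finset V, I.card = alpha G ∧ (↑I : Set V).Pairwise fun u v => ¬ G.Adj u v := by
  have hmem : alpha G ∈
      {k | ∃ I : Finset V, I.card = k ∧ (↑I : Set V).Pairwise fun u v => ¬ G.Adj u v} := by
    apply Nat.sSup_mem
    · exact ⟨0, ∅, by simp⟩
    · exact ⟨Fintype.card V, by rintro k ⟨I, rfl, -⟩; simpa using Finset.card_le_univ I⟩
  obtain ⟨I, hI1, hI2⟩ := hmem
  exact ⟨I, hI1, hI2⟩

lemma omega_spec (G : SimpleGraph V) :
    ∃ C : Finset V, C.card = omegaNum G ∧ (↑C : Set V).Pairwise G.Adj := by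
  have hmem : omegaNum G ∈ {k | ∃ W : Finset V, W.card = k ∧ (↑W : Set V).Pairwise G.Adj} := by
    apply Nat.sSup_mem
    · exact ⟨0, ∅, by simp⟩
    · exact ⟨Fintype.card V, by rintro k ⟨W, rfl, -⟩; simpa using Finset.card_le_univ W⟩
  obtain ⟨C, hC1, hC2⟩ := hmem
  exact ⟨C, hC1, hC2⟩

theorem stmt7_aux (G : SimpleGraph V)
    (hg : gammaC G = 3) (hk : 2 ≤ kappa G)
    (hecrit : ∀ u v : V, u ≠ v → ¬ G.Adj u v →
      gammaC (G ⊔ SimpleGraph.fromEdgeSet {s(u, v)}) < 3)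
    (hvcrit : ∀ v : V, gammaC (G.induce {w | w ≠ v}) < 3) :
    alpha G + omegaNum G ≤ Fintype.card V - 1 := by
  obtain ⟨hGC, hnt⟩ := conn_of_kappa hk
  obtain ⟨I, hIcard, hIind⟩ := alpha_spec G
  obtain ⟨C, hCcard, hCcl⟩ := omega_spec G
  have hind : ∀ {p q : V}, p ∈ I → q ∈ I → p ≠ q → ¬ G.Adj p q :=
    fun hp hq hpq => hIind (Finset.mem_coe.mpr hp) (Finset.mem_coe.mpr hq) hpq
  have hcl : ∀ {p q : V}, p ∈ C → q ∈ C → p ≠ q → G.Adj p q :=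
    fun hp hq hpq => hCcl (Finset.mem_coe.mpr hp) (Finset.mem_coe.mpr hq) hpq
  have hinter : (I ∩ C).card ≤ 1 := by
    rw [Finset.card_le_one]
    intro p hp q hq
    by_contra hne
    have hp' := Finset.mem_inter.mp hp
    have hq' := Finset.mem_inter.mp hq
    exact hind hp'.1 hq'.1 hne (hcl hp'.2 hq'.2 hne)
  have hne_univ : I ∪ C ≠ Finset.univ := by
    intro huniv
    have hmem : ∀ w : V, w ∈ I ∨ w ∈ C := fun w =>
      Finset.mem_union.mp (huniv ▸ Finset.mem_univ w)
    rcases C.eq_empty_or_nonempty with rfl | ⟨a, haC⟩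
    · obtain ⟨a0, b0, hab⟩ := hnt
      obtain ⟨w, hw⟩ := exists_adj hGC ⟨a0, b0, hab⟩ a0
      have h1 : a0 ∈ I := (hmem a0).resolve_right (by simp)
      have h2 : w ∈ I := (hmem w).resolve_right (by simp)
      exact hind h1 h2 hw.ne hw
    · obtain ⟨s, t, hst, hsa, hta, has, hat, hdom⟩ := vertexCrit_struct hg hk hvcrit a
      have hsC : s ∉ C := fun h => has (hcl haC h (Ne.symm hsa))
      have htC : t ∉ C := fun h => hat (hcl haC h (Ne.symm hta))
      have hsI : s ∈ I := (hmem s).resolve_right hsC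
      have htI : t ∈ I := (hmem t).resolve_right htC
      exact hind hsI htI hst.ne hst
  have hout : (Finset.univ \ (I ∪ C)).Nonempty := by
    rw [Finset.sdiff_nonempty]
    intro hsub
    exact hne_univ (Finset.univ_subset_iff.mp hsub)
  have hcard_un : (I ∪ C).card + (I ∩ C).card = I.card + C.card :=
    Finset.card_union_add_card_inter I C
  have hout_card : (Finset.univ \ (I ∪ C)).card = Fintype.card V - (I ∪ C).card := by
    rw [Finset.card_sdiff_of_subset (Finset.subset_univ _), Finset.card_univ]
  have hUle : (I ∪ C).card ≤ Fintype.card V := by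
    simpa using Finset.card_le_univ (I ∪ C)
  have hout1 : 1 ≤ (Finset.univ \ (I ∪ C)).card := Finset.card_pos.mpr hout
  by_cases hi : (I ∩ C).card = 0
  · rw [← hIcard, ← hCcard]; omega
  · have hi1 : (I ∩ C).card = 1 := by omega
    obtain ⟨a, ha⟩ := Finset.card_eq_one.mp hi1
    have hamem : a ∈ I ∩ C := ha ▸ Finset.mem_singleton_self a
    have haI : a ∈ I := (Finset.mem_inter.mp hamem).1
    have haC : a ∈ C := (Finset.mem_inter.mp hamem).2
    obtain ⟨x, y, hxy, hxa, hya, hax, hay, hdoma⟩ := vertexCrit_struct hg hk hvcrit a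
    have hxC : x ∉ C := fun h => hax (hcl haC h (Ne.symm hxa))
    have hyC : y ∉ C := fun h => hay (hcl haC h (Ne.symm hya))
    by_cases h2 : 2 ≤ (Finset.univ \ (I ∪ C)).card
    · rw [← hIcard, ← hCcard]; omega
    · exfalso
      have hout1' : (Finset.univ \ (I ∪ C)).card ≤ 1 := by omega
      have hVgen : ∀ r, r ∈ Finset.univ \ (I ∪ C) → ∀ w, w ∈ I ∨ w ∈ C ∨ w = r := by
        intro r hr w
        by_cases hw : w ∈ I ∪ C
        · rcases Finset.mem_union.mp hw with h | h
          · exact Or.inl h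
          · exact Or.inr (Or.inl h)
        · refine Or.inr (Or.inr ?_)
          exact Finset.card_le_one.mp hout1' w
            (Finset.mem_sdiff.mpr ⟨Finset.mem_univ w, hw⟩) r hr
      by_cases hxI : x ∈ I
      · -- then y is the outside vertex; swap roles of x and y
        have hyI : y ∉ I := fun h => hind hxI h hxy.ne hxy
        have hyout : y ∈ Finset.univ \ (I ∪ C) :=
          Finset.mem_sdiff.mpr ⟨Finset.mem_univ y, by simp [Finset.mem_union, hyI, hyC]⟩
        refine core hg hGC hk hvcrit hecrit @hind @hcl haI haC hxy.symm hya hxa hay hax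
          (fun w hw => ?_) hxI (hVgen y hyout)
        rcases hdoma w hw with h | h | h | h
        · exact Or.inr (Or.inl h)
        · exact Or.inl h
        · exact Or.inr (Or.inr (Or.inr h))
        · exact Or.inr (Or.inr (Or.inl h))
      · by_cases hyI : y ∈ I
        · have hxout : x ∈ Finset.univ \ (I ∪ C) :=
            Finset.mem_sdiff.mpr ⟨Finset.mem_univ x, by simp [Finset.mem_union, hxI, hxC]⟩
          exact core hg hGC hk hvcrit hecrit @hind @hcl haI haC hxy hxa hya hax hay
            hdoma hyI (hVgen x hxout)
        · -- both x and y are outside I ∪ C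
          have hxout : x ∈ Finset.univ \ (I ∪ C) :=
            Finset.mem_sdiff.mpr ⟨Finset.mem_univ x, by simp [Finset.mem_union, hxI, hxC]⟩
          have hyout : y ∈ Finset.univ \ (I ∪ C) :=
            Finset.mem_sdiff.mpr ⟨Finset.mem_univ y, by simp [Finset.mem_union, hyI, hyC]⟩
          have hsub : ({x, y} : Finset V) ⊆ Finset.univ \ (I ∪ C) := by
            intro z hz
            rcases Finset.mem_insert.mp hz with rfl | hz'
            · exact hxout
            · exact (Finset.mem_singleton.mp hz') ▸ hyout
          have : 2 ≤ (Finset.univ \ (I ∪ C)).card := by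
            have := Finset.card_le_card hsub
            rwa [Finset.card_pair hxy.ne] at this
          exact h2 this

end Main

/-- every maximal `3`-`γc`-vertex critical graph of order `n` satisfies
`α(G) + ω(G) ≤ n - 1`. -/
theorem stmt_7 (G : SimpleGraph V) [Fintype V] [DecidableEq V]
    (h : MaximalVertexCritical3 G) :
    alpha G + omegaNum G ≤ Fintype.card V - 1 := by
  obtain ⟨⟨hg, hecrit⟩, hk, _, hvcrit⟩ := h
  exact stmt7_aux G hg hk hecrit hvcrit
end

section
/- Let G be a maximal 3-γc-vertex critical graph of order n. Then α(G)·ω(G) ≤ ⌊(n − 1)/2⌋·⌈(n − 1)/2⌉; moreover, α(G)·ω(G) = ((n − 1)/2)² if and only if G is isomorphic to a graph in the class 𝒢₁(l) for some l ≥ 2. -/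
open Finset

variable {V : Type*}

/-- `G` is (isomorphic to) a graph in the class `𝒢₁(l)`: there are `2l + 1` distinct
vertices `v`, `q₁, …, q_l`, `z₁, …, z_l` covering all of `G`, the `qᵢ` form a clique,
the `zᵢ` form an independent set, `v` is adjacent exactly to the `zᵢ`, and
`zᵢ` is adjacent to `qⱼ` iff `j ≠ i`. -/
def IsG1 (l : ℕ) (G : SimpleGraph V) : Prop :=
  ∃ (v : V) (q z : Fin l → V),
    Function.Injective q ∧ Function.Injective z ∧
    (∀ i j, q i ≠ z j) ∧ (∀ i, v ≠ q i) ∧ (∀ i, v ≠ z i) ∧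
    (∀ w : V, w = v ∨ (∃ i, w = q i) ∨ (∃ i, w = z i)) ∧
    (∀ i j, G.Adj (q i) (q j) ↔ i ≠ j) ∧
    (∀ i j, ¬ G.Adj (z i) (z j)) ∧
    (∀ i, G.Adj v (z i)) ∧ (∀ i, ¬ G.Adj v (q i)) ∧
    (∀ i j, G.Adj (z i) (q j) ↔ j ≠ i)

section Helpers

open SimpleGraph

variable [Fintype V] [DecidableEq V] {G : SimpleGraph V}

lemma gammaC_le_of (D : Finset V) (hD : IsConnDomSet G ↑D) : gammaC G ≤ D.card :=
  Nat.sInf_le ⟨D, rfl, hD⟩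

lemma induce_adj' {s : Set V} {x y : ↥s} : (G.induce s).Adj x y ↔ G.Adj x.1 y.1 := Iff.rfl

lemma connDom_pair {a b : V} (hab : G.Adj a b)
    (hdom : ∀ w, w = a ∨ w = b ∨ G.Adj a w ∨ G.Adj b w) :
    IsConnDomSet G (↑({a, b} : Finset V)) := by
  constructor
  · intro w
    rcases hdom w with h|h|h|h
    · left; simp [h]
    · left; simp [h]
    · right; exact ⟨a, by simp, h⟩
    · right; exact ⟨b, by simp, h⟩
  · rw [SimpleGraph.connected_iff]
    refine ⟨?_, ⟨⟨a, by simp⟩⟩⟩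
    have key : ∀ x : ↥(↑({a,b} : Finset V) : Set V), (G.induce _).Reachable ⟨a, by simp⟩ x := by
      rintro ⟨x, hx⟩
      simp only [Finset.coe_insert, Set.mem_insert_iff, Finset.coe_singleton,
        Set.mem_singleton_iff] at hx
      rcases hx with rfl|rfl
      · exact SimpleGraph.Reachable.refl _
      · exact SimpleGraph.Adj.reachable (by exact hab)
    intro x y
    exact (key x).symm.trans (key y)

lemma connDom_single {a : V} (hdom : ∀ w, w = a ∨ G.Adj a w) :
    IsConnDomSet G (↑({a} : Finset V)) := by
  constructor
  · intro w
    rcases hdom w with h|h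
    · left; simp [h]
    · right; exact ⟨a, by simp, h⟩
  · rw [SimpleGraph.connected_iff]
    refine ⟨?_, ⟨⟨a, by simp⟩⟩⟩
    rintro ⟨x, hx⟩ ⟨y, hy⟩
    simp only [Finset.coe_singleton, Set.mem_singleton_iff] at hx hy
    subst hx; subst hy; exact SimpleGraph.Reachable.refl _

/-- From `γc = 3`: no single vertex dominates everything. -/
lemma no_dom_single (h3 : gammaC G = 3) (a : V) : ∃ w, w ≠ a ∧ ¬ G.Adj a w := by
  by_contra hc
  push_neg at hc
  have := gammaC_le_of {a} (connDom_single (fun w => by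
    by_cases hw : w = a
    · exact Or.inl hw
    · exact Or.inr (hc w hw)))
  simp [h3, Finset.card_singleton] at this

/-- From `γc = 3`: no adjacent pair dominates everything. -/
lemma no_dom_pair (h3 : gammaC G = 3) {a b : V} (hab : G.Adj a b) :
    ∃ w, w ≠ a ∧ w ≠ b ∧ ¬ G.Adj a w ∧ ¬ G.Adj b w := by
  by_contra hc
  push_neg at hc
  have hcard : ({a, b} : Finset V).card = 2 := by
    rw [Finset.card_insert_of_notMem (by simp [hab.ne]), Finset.card_singleton]
  have := gammaC_le_of {a, b} (connDom_pair hab (fun w => by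
    by_cases h1 : w = a
    · exact Or.inl h1
    by_cases h2 : w = b
    · exact Or.inr (Or.inl h2)
    rcases Classical.em (G.Adj a w) with h|h
    · exact Or.inr (Or.inr (Or.inl h))
    · exact Or.inr (Or.inr (Or.inr ((hc w h1 h2 h))))))
  rw [h3, hcard] at this
  omega

/-- From `γc = 3`: there is a connected dominating set of size 3. -/
lemma exists_connDom_three (h3 : gammaC G = 3) :
    ∃ D : Finset V, D.card = 3 ∧ IsConnDomSet G ↑D := by
  have hne : {k | ∃ D : Finset V, D.card = k ∧ IsConnDomSet G ↑D}.Nonempty := by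
    by_contra hc
    rw [Set.not_nonempty_iff_eq_empty] at hc
    rw [gammaC, hc, Nat.sInf_empty] at h3
    omega
  have := Nat.sInf_mem hne
  rw [gammaC] at h3
  rw [h3] at this
  exact this

end Helpers
section Helpers2

open SimpleGraph

set_option linter.unusedSectionVars false
set_option maxHeartbeats 1000000

variable [Fintype V] [DecidableEq V] {G : SimpleGraph V}

lemma exists_adj_of_connected {W : Type*} {H : SimpleGraph W} {s : Set W}
    (hconn : (H.induce s).Connected) {x y : W} (hx : x ∈ s) (hy : y ∈ s) (hxy : x ≠ y) :
    ∃ a b, a ∈ s ∧ b ∈ s ∧ H.Adj a b := by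
  obtain ⟨w⟩ := hconn ⟨x, hx⟩ ⟨y, hy⟩
  have hne : (⟨x, hx⟩ : ↥s) ≠ ⟨y, hy⟩ := fun he => hxy (Subtype.ext_iff.mp he)
  obtain ⟨v', hadj, q, -⟩ := SimpleGraph.Walk.not_nil_iff.mp
    (SimpleGraph.Walk.not_nil_of_ne (p := w) hne)
  exact ⟨x, v'.1, hx, v'.2, hadj⟩

/-- First-step neighbor from connectivity. -/
lemma exists_adj_fst_of_connected {W : Type*} {H : SimpleGraph W} {s : Set W}
    (hconn : (H.induce s).Connected) {x y : W} (hx : x ∈ s) (hy : y ∈ s) (hxy : x ≠ y) :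
    ∃ b, H.Adj x b := by
  obtain ⟨w⟩ := hconn ⟨x, hx⟩ ⟨y, hy⟩
  have hne : (⟨x, hx⟩ : ↥s) ≠ ⟨y, hy⟩ := fun he => hxy (Subtype.ext_iff.mp he)
  obtain ⟨v', hadj, q, -⟩ := SimpleGraph.Walk.not_nil_iff.mp
    (SimpleGraph.Walk.not_nil_of_ne (p := w) hne)
  exact ⟨v'.1, hadj⟩

lemma adj_of_connected_pair {W : Type*} {H : SimpleGraph W} {s : Set W} {x y : W}
    (hx : x ∈ s) (hy : y ∈ s) (hxy : x ≠ y) (hsub : ∀ z ∈ s, z = x ∨ z = y)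
    (hconn : (H.induce s).Connected) : H.Adj x y := by
  obtain ⟨a, b, ha, hb, hab⟩ := exists_adj_of_connected hconn hx hy hxy
  rcases hsub a ha with rfl | rfl
  · rcases hsub b hb with rfl | rfl
    · exact absurd hab (H.irrefl)
    · exact hab
  · rcases hsub b hb with rfl | rfl
    · exact hab.symm
    · exact absurd hab (H.irrefl)

lemma exists_neighbor (h3 : gammaC G = 3) (u : V) : ∃ b, G.Adj u b := by
  obtain ⟨D, hcard, hdom, hconn⟩ := exists_connDom_three h3
  rcases hdom u with hu | ⟨d, hd, hadj⟩
  · have h2 : ∃ y ∈ D, y ≠ u := Finset.exists_mem_ne (by omega) u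
    obtain ⟨y, hy, hyu⟩ := h2
    exact exists_adj_fst_of_connected hconn (by simpa using hu) (by simpa using hy) hyu.symm
  · exact ⟨d, hadj.symm⟩

lemma kappa_del_connected (hk : 2 ≤ kappa G) (u : V) : (G.induce {w | w ≠ u}).Connected := by
  by_contra hc
  have hset : (↑({u} : Finset V) : Set V)ᶜ = {w | w ≠ u} := by ext w; simp
  have h1 : (1 : ℕ) ∈ {k | ∃ S : Finset V, S.card = k ∧
      (¬ (G.induce (↑S : Set V)ᶜ).Connected ∨ ((↑S : Set V)ᶜ).Subsingleton)} := by
    exact ⟨{u}, Finset.card_singleton u, Or.inl (by rw [hset]; exact hc)⟩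
  have := Nat.sInf_le h1
  rw [kappa] at hk
  omega

lemma kappa_G_connected (hk : 2 ≤ kappa G) : G.Connected := by
  by_contra hc
  have hset : (↑(∅ : Finset V) : Set V)ᶜ = Set.univ := by ext w; simp
  have h0 : (0 : ℕ) ∈ {k | ∃ S : Finset V, S.card = k ∧
      (¬ (G.induce (↑S : Set V)ᶜ).Connected ∨ ((↑S : Set V)ᶜ).Subsingleton)} := by
    refine ⟨∅, Finset.card_empty, Or.inl ?_⟩
    rw [hset]
    intro hcon
    exact hc ((SimpleGraph.induceUnivIso G).connected_iff.mp hcon)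
  have := Nat.sInf_le h0
  rw [kappa] at hk
  omega

lemma connDom_univ {W : Type*} [Fintype W] {H : SimpleGraph W} (hconn : H.Connected) :
    IsConnDomSet H ↑(Finset.univ : Finset W) := by
  constructor
  · intro w; left; simp
  · rw [Finset.coe_univ]
    exact (SimpleGraph.induceUnivIso H).connected_iff.mpr hconn

end Helpers2
section Helpers3

open SimpleGraph

set_option linter.unusedSectionVars false
set_option maxHeartbeats 1000000

variable [Fintype V] [DecidableEq V] {G : SimpleGraph V}

/-- Key vertex-criticality extraction: for every vertex `u` there is an adjacent pair
`a, b`, both nonadjacent to `u` and distinct from `u`, dominating `V \ {u}`. -/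
lemma K_lemma (h : MaximalVertexCritical3 G) (u : V) :
    ∃ a b, a ≠ b ∧ G.Adj a b ∧ a ≠ u ∧ b ≠ u ∧ ¬ G.Adj u a ∧ ¬ G.Adj u b ∧
      ∀ w, w ≠ u → (w = a ∨ w = b ∨ G.Adj a w ∨ G.Adj b w) := by
  obtain ⟨⟨h3, hedge⟩, hk, h3', hvert⟩ := h
  have hconn := kappa_del_connected hk u
  have hne : {k | ∃ D : Finset ↥{w | w ≠ u}, D.card = k ∧
      IsConnDomSet (G.induce {w | w ≠ u}) ↑D}.Nonempty :=
    ⟨_, Finset.univ, rfl, connDom_univ hconn⟩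
  obtain ⟨D, hcard, hdom, hDconn⟩ := Nat.sInf_mem hne
  have hvu := hvert u
  rw [gammaC] at hvu
  have hlt : D.card < 3 := by rw [hcard]; exact hvu
  obtain ⟨⟨e0, he0⟩⟩ := hDconn.nonempty
  have hpos : 0 < D.card := Finset.card_pos.mpr ⟨e0, by exact_mod_cast he0⟩
  have h12 : D.card = 1 ∨ D.card = 2 := by omega
  rcases h12 with h1 | h2
  · -- card 1 : impossible
    exfalso
    obtain ⟨e, rfl⟩ := Finset.card_eq_one.mp h1
    have hdomG : ∀ w, w ≠ u → (w = e.1 ∨ G.Adj e.1 w) := by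
      intro w hw
      rcases hdom ⟨w, hw⟩ with hmem | ⟨d, hd, hadj⟩
      · left
        have : (⟨w, hw⟩ : ↥{w | w ≠ u}) = e := by simpa using hmem
        exact congrArg Subtype.val this
      · right
        have hde : d = e := by simpa using hd
        subst hde
        exact hadj
    set a := e.1 with ha'
    have hau : a ≠ u := e.2
    have hnua : ¬ G.Adj u a := by
      intro hua
      have := gammaC_le_of {a} (connDom_single (fun w => by
        by_cases hwu : w = u
        · subst hwu; exact Or.inr hua.symm
        · exact hdomG w hwu))
      rw [h3] at this
      simp at this
    have habs : ∀ b, b ≠ u → b ≠ a → ¬ G.Adj u b := by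
      intro b hbu hba hub
      have hadjab : G.Adj a b := (hdomG b hbu).resolve_left hba
      obtain ⟨w, hwa, hwb, hnaw, hnbw⟩ := no_dom_pair h3 hadjab
      by_cases hwu : w = u
      · subst hwu; exact hnbw hub.symm
      · rcases hdomG w hwu with h | h
        · exact hwa h
        · exact hnaw h
    obtain ⟨b, hub⟩ := exists_neighbor h3 u
    by_cases hba : b = a
    · exact hnua (hba ▸ hub)
    · exact habs b (hub.ne') hba hub
  · -- card 2
    obtain ⟨e, f, hef, rfl⟩ := Finset.card_eq_two.mp h2
    set a := e.1 with ha'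
    set b := f.1 with hb'
    have hab : a ≠ b := fun hh => hef (Subtype.ext hh)
    have hHadj : (G.induce {w | w ≠ u}).Adj e f := by
      refine adj_of_connected_pair (s := (↑({e, f} : Finset ↥{w | w ≠ u}) : Set ↥{w | w ≠ u}))
        (by simp) (by simp) hef (fun z hz => by simpa using hz) hDconn
    have hGadj : G.Adj a b := hHadj
    have hdomG : ∀ w, w ≠ u → (w = a ∨ w = b ∨ G.Adj a w ∨ G.Adj b w) := by
      intro w hw
      rcases hdom ⟨w, hw⟩ with hmem | ⟨d, hd, hadj⟩
      · have : (⟨w, hw⟩ : ↥{w | w ≠ u}) = e ∨ (⟨w, hw⟩ : ↥{w | w ≠ u}) = f := by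
          simpa using hmem
        rcases this with hh | hh
        · exact Or.inl (congrArg Subtype.val hh)
        · exact Or.inr (Or.inl (congrArg Subtype.val hh))
      · have : d = e ∨ d = f := by simpa using hd
        rcases this with rfl | rfl
        · exact Or.inr (Or.inr (Or.inl hadj))
        · exact Or.inr (Or.inr (Or.inr hadj))
    have hnua : ¬ G.Adj u a := by
      intro hua
      obtain ⟨w, hwa, hwb, hnaw, hnbw⟩ := no_dom_pair h3 hGadj
      by_cases hwu : w = u
      · subst hwu; exact hnaw hua.symm
      · rcases hdomG w hwu with h | h | h | h
        · exact hwa h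
        · exact hwb h
        · exact hnaw h
        · exact hnbw h
    have hnub : ¬ G.Adj u b := by
      intro hub
      obtain ⟨w, hwa, hwb, hnaw, hnbw⟩ := no_dom_pair h3 hGadj
      by_cases hwu : w = u
      · subst hwu; exact hnbw hub.symm
      · rcases hdomG w hwu with h | h | h | h
        · exact hwa h
        · exact hwb h
        · exact hnaw h
        · exact hnbw h
    exact ⟨a, b, hab, hGadj, e.2, f.2, hnua, hnub, hdomG⟩

/-- Edge-criticality extraction. -/
lemma E_lemma (h : MaximalVertexCritical3 G) {u v : V} (huv : u ≠ v) (hnadj : ¬ G.Adj u v) :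
    (∀ w, w = u ∨ w = v ∨ G.Adj u w ∨ G.Adj v w) ∨
    (∃ y, G.Adj u y ∧ ∀ w, w ≠ v → (w = u ∨ w = y ∨ G.Adj u w ∨ G.Adj y w)) ∨
    (∃ y, G.Adj v y ∧ ∀ w, w ≠ u → (w = v ∨ w = y ∨ G.Adj v w ∨ G.Adj y w)) := by
  obtain ⟨⟨h3, hedge⟩, hk, h3', hvert⟩ := h
  set G' := G ⊔ SimpleGraph.fromEdgeSet {s(u, v)} with hG'
  have hadj' : ∀ a b : V, G'.Adj a b ↔ G.Adj a b ∨ (a = u ∧ b = v) ∨ (a = v ∧ b = u) := by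
    intro a b
    rw [hG']
    simp only [SimpleGraph.sup_adj, SimpleGraph.fromEdgeSet_adj, Set.mem_singleton_iff,
      Sym2.eq_iff]
    constructor
    · rintro (hh | ⟨(⟨rfl, rfl⟩ | ⟨rfl, rfl⟩), hne⟩)
      · exact Or.inl hh
      · exact Or.inr (Or.inl ⟨rfl, rfl⟩)
      · exact Or.inr (Or.inr ⟨rfl, rfl⟩)
    · rintro (hh | ⟨rfl, rfl⟩ | ⟨rfl, rfl⟩)
      · exact Or.inl hh
      · exact Or.inr ⟨Or.inl ⟨rfl, rfl⟩, huv⟩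
      · exact Or.inr ⟨Or.inr ⟨rfl, rfl⟩, huv.symm⟩
  have hG'conn : G'.Connected := (kappa_G_connected hk).mono le_sup_left
  have hne : {k | ∃ D : Finset V, D.card = k ∧ IsConnDomSet G' ↑D}.Nonempty :=
    ⟨_, Finset.univ, rfl, connDom_univ hG'conn⟩
  obtain ⟨D, hcard, hdom, hDconn⟩ := Nat.sInf_mem hne
  have hlt : D.card < 3 := by
    rw [hcard]
    have := hedge u v huv hnadj
    rw [gammaC] at this
    exact this
  obtain ⟨⟨e0, he0⟩⟩ := hDconn.nonempty
  have hpos : 0 < D.card := Finset.card_pos.mpr ⟨e0, by exact_mod_cast he0⟩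
  have h12 : D.card = 1 ∨ D.card = 2 := by omega
  rcases h12 with h1 | h2
  · -- singleton {a}
    obtain ⟨a, rfl⟩ := Finset.card_eq_one.mp h1
    have hdomG' : ∀ w, w = a ∨ G'.Adj a w := by
      intro w
      rcases hdom w with hmem | ⟨d, hd, hadj⟩
      · left; simpa using hmem
      · right
        have : d = a := by simpa using hd
        subst this; exact hadj
    by_cases hau : a = u
    · subst hau
      left
      intro w
      rcases hdomG' w with rfl | hh
      · exact Or.inl rfl
      · rcases (hadj' _ _).mp hh with h' | ⟨_, rfl⟩ | ⟨rfl, _⟩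
        · exact Or.inr (Or.inr (Or.inl h'))
        · exact Or.inr (Or.inl rfl)
        · exact absurd rfl huv
    by_cases hav : a = v
    · subst hav
      left
      intro w
      rcases hdomG' w with rfl | hh
      · exact Or.inr (Or.inl rfl)
      · rcases (hadj' _ _).mp hh with h' | ⟨rfl, _⟩ | ⟨_, rfl⟩
        · exact Or.inr (Or.inr (Or.inr h'))
        · exact absurd rfl (Ne.symm huv)
        · exact Or.inl rfl
    · exfalso
      have := gammaC_le_of {a} (connDom_single (fun w => by
        rcases hdomG' w with rfl | hh
        · exact Or.inl rfl
        · rcases (hadj' _ _).mp hh with h' | ⟨ha, _⟩ | ⟨ha, _⟩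
          · exact Or.inr h'
          · exact absurd ha hau
          · exact absurd ha hav))
      rw [h3] at this
      simp at this
  · -- pair {a, b}
    obtain ⟨a, b, hab, rfl⟩ := Finset.card_eq_two.mp h2
    have hG'ab : G'.Adj a b := by
      refine adj_of_connected_pair (s := (↑({a, b} : Finset V) : Set V))
        (by simp) (by simp) hab (fun z hz => by simpa using hz) hDconn
    have hdomG' : ∀ w, w = a ∨ w = b ∨ G'.Adj a w ∨ G'.Adj b w := by
      intro w
      rcases hdom w with hmem | ⟨d, hd, hadj⟩
      · have : w = a ∨ w = b := by simpa using hmem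
        tauto
      · have : d = a ∨ d = b := by simpa using hd
        rcases this with rfl | rfl
        · exact Or.inr (Or.inr (Or.inl hadj))
        · exact Or.inr (Or.inr (Or.inr hadj))
    -- helper to produce branch 2 given pair {u, b'} with b' not in {u, v}
    have mk2 : ∀ b' : V, b' ≠ u → b' ≠ v → G'.Adj u b' →
        (∀ w, w = u ∨ w = b' ∨ G'.Adj u w ∨ G'.Adj b' w) →
        (∃ y, G.Adj u y ∧ ∀ w, w ≠ v → (w = u ∨ w = y ∨ G.Adj u w ∨ G.Adj y w)) := by
      intro b' hbu hbv hadj hdomm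
      have hGub : G.Adj u b' := by
        rcases (hadj' _ _).mp hadj with h' | ⟨_, hb⟩ | ⟨hu', _⟩
        · exact h'
        · exact absurd hb hbv
        · exact absurd hu' huv
      refine ⟨b', hGub, fun w hwv => ?_⟩
      rcases hdomm w with rfl | rfl | hh | hh
      · exact Or.inl rfl
      · exact Or.inr (Or.inl rfl)
      · rcases (hadj' _ _).mp hh with h' | ⟨_, hwv'⟩ | ⟨hu', _⟩
        · exact Or.inr (Or.inr (Or.inl h'))
        · exact absurd hwv' hwv
        · exact absurd hu' huv
      · rcases (hadj' _ _).mp hh with h' | ⟨ha, _⟩ | ⟨ha, _⟩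
        · exact Or.inr (Or.inr (Or.inr h'))
        · exact absurd ha hbu
        · exact absurd ha hbv
    have mk3 : ∀ b' : V, b' ≠ u → b' ≠ v → G'.Adj v b' →
        (∀ w, w = v ∨ w = b' ∨ G'.Adj v w ∨ G'.Adj b' w) →
        (∃ y, G.Adj v y ∧ ∀ w, w ≠ u → (w = v ∨ w = y ∨ G.Adj v w ∨ G.Adj y w)) := by
      intro b' hbu hbv hadj hdomm
      have hGvb : G.Adj v b' := by
        rcases (hadj' _ _).mp hadj with h' | ⟨hv', _⟩ | ⟨_, hb⟩
        · exact h'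
        · exact absurd hv' (Ne.symm huv)
        · exact absurd hb hbu
      refine ⟨b', hGvb, fun w hwu => ?_⟩
      rcases hdomm w with rfl | rfl | hh | hh
      · exact Or.inl rfl
      · exact Or.inr (Or.inl rfl)
      · rcases (hadj' _ _).mp hh with h' | ⟨hv', _⟩ | ⟨_, hwu'⟩
        · exact Or.inr (Or.inr (Or.inl h'))
        · exact absurd hv' (Ne.symm huv)
        · exact absurd hwu' hwu
      · rcases (hadj' _ _).mp hh with h' | ⟨ha, _⟩ | ⟨ha, _⟩
        · exact Or.inr (Or.inr (Or.inr h'))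
        · exact absurd ha hbu
        · exact absurd ha hbv
    have hdomm' : ∀ w, w = b ∨ w = a ∨ G'.Adj b w ∨ G'.Adj a w := by
      intro w; rcases hdomG' w with h | h | h | h <;> tauto
    by_cases hau : a = u
    · by_cases hbv : b = v
      · -- {u, v}
        subst hau; subst hbv
        left
        intro w
        rcases hdomG' w with rfl | rfl | hh | hh
        · exact Or.inl rfl
        · exact Or.inr (Or.inl rfl)
        · rcases (hadj' _ _).mp hh with h' | ⟨_, hwv⟩ | ⟨hu', _⟩
          · exact Or.inr (Or.inr (Or.inl h'))
          · exact Or.inr (Or.inl hwv)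
          · exact absurd hu' huv
        · rcases (hadj' _ _).mp hh with h' | ⟨hv', _⟩ | ⟨_, hwu⟩
          · exact Or.inr (Or.inr (Or.inr h'))
          · exact absurd hv' (Ne.symm huv)
          · exact Or.inl hwu
      · subst hau
        exact Or.inr (Or.inl (mk2 b (fun hh => hab hh.symm) hbv hG'ab hdomG'))
    by_cases hav : a = v
    · by_cases hbu : b = u
      · subst hav; subst hbu
        left
        intro w
        rcases hdomG' w with rfl | rfl | hh | hh
        · exact Or.inr (Or.inl rfl)
        · exact Or.inl rfl
        · rcases (hadj' _ _).mp hh with h' | ⟨hv', _⟩ | ⟨_, hwu⟩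
          · exact Or.inr (Or.inr (Or.inr h'))
          · exact absurd hv' (Ne.symm huv)
          · exact Or.inl hwu
        · rcases (hadj' _ _).mp hh with h' | ⟨_, hwv⟩ | ⟨hu', _⟩
          · exact Or.inr (Or.inr (Or.inl h'))
          · exact Or.inr (Or.inl hwv)
          · exact absurd hu' huv
      · subst hav
        exact Or.inr (Or.inr (mk3 b hbu (fun hh => hab hh.symm) hG'ab hdomG'))
    by_cases hbu : b = u
    · subst hbu
      exact Or.inr (Or.inl (mk2 a (fun hh => hab hh) hav hG'ab.symm hdomm'))
    by_cases hbv : b = v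
    · subst hbv
      exact Or.inr (Or.inr (mk3 a hau (fun hh => hab hh) hG'ab.symm hdomm'))
    · exfalso
      have hGab : G.Adj a b := by
        rcases (hadj' _ _).mp hG'ab with h' | ⟨ha, _⟩ | ⟨ha, _⟩
        · exact h'
        · exact absurd ha hau
        · exact absurd ha hav
      obtain ⟨w, hwa, hwb, hnaw, hnbw⟩ := no_dom_pair h3 hGab
      rcases hdomG' w with rfl | rfl | hh | hh
      · exact hwa rfl
      · exact hwb rfl
      · rcases (hadj' _ _).mp hh with h' | ⟨ha, _⟩ | ⟨ha, _⟩
        · exact hnaw h'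
        · exact hau ha
        · exact hav ha
      · rcases (hadj' _ _).mp hh with h' | ⟨hb, _⟩ | ⟨hb, _⟩
        · exact hnbw h'
        · exact hbu hb
        · exact hbv hb

end Helpers3
section Helpers4

open SimpleGraph

set_option linter.unusedSectionVars false
set_option maxHeartbeats 1000000

variable [Fintype V] [DecidableEq V] {G : SimpleGraph V}

lemma ind_card_le {I : Finset V} (hI : ∀ a ∈ I, ∀ b ∈ I, a ≠ b → ¬ G.Adj a b) :
    I.card ≤ alpha G := by
  apply le_csSup
  · exact ⟨Fintype.card V, fun k ⟨J, hc, _⟩ => hc ▸ (Finset.card_le_univ J).trans_eq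
      Finset.card_univ⟩
  · exact ⟨I, rfl, fun a ha b hb hne => hI a ha b hb hne⟩

lemma clique_card_le {Q : Finset V} (hQ : ∀ a ∈ Q, ∀ b ∈ Q, a ≠ b → G.Adj a b) :
    Q.card ≤ omegaNum G := by
  apply le_csSup
  · exact ⟨Fintype.card V, fun k ⟨J, hc, _⟩ => hc ▸ (Finset.card_le_univ J).trans_eq
      Finset.card_univ⟩
  · exact ⟨Q, rfl, fun a ha b hb hne => hQ a ha b hb hne⟩

lemma exists_max_ind (G : SimpleGraph V) [Fintype V] :
    ∃ I : Finset V, I.card = alpha G ∧ ∀ a ∈ I, ∀ b ∈ I, a ≠ b → ¬ G.Adj a b := by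
  have hne : {k | ∃ I : Finset V, I.card = k ∧
      (↑I : Set V).Pairwise fun u v => ¬ G.Adj u v}.Nonempty :=
    ⟨0, ∅, Finset.card_empty, by simp⟩
  have hbdd : BddAbove {k | ∃ I : Finset V, I.card = k ∧
      (↑I : Set V).Pairwise fun u v => ¬ G.Adj u v} :=
    ⟨Fintype.card V, fun k ⟨J, hc, _⟩ => hc ▸ (Finset.card_le_univ J).trans_eq Finset.card_univ⟩
  obtain ⟨I, hc, hp⟩ := Nat.sSup_mem hne hbdd
  exact ⟨I, hc, fun a ha b hb hne' => hp (Finset.mem_coe.mpr ha) (Finset.mem_coe.mpr hb) hne'⟩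

lemma exists_max_clique (G : SimpleGraph V) [Fintype V] :
    ∃ Q : Finset V, Q.card = omegaNum G ∧ ∀ a ∈ Q, ∀ b ∈ Q, a ≠ b → G.Adj a b := by
  have hne : {k | ∃ W : Finset V, W.card = k ∧ (↑W : Set V).Pairwise G.Adj}.Nonempty :=
    ⟨0, ∅, Finset.card_empty, by simp⟩
  have hbdd : BddAbove {k | ∃ W : Finset V, W.card = k ∧ (↑W : Set V).Pairwise G.Adj} :=
    ⟨Fintype.card V, fun k ⟨J, hc, _⟩ => hc ▸ (Finset.card_le_univ J).trans_eq Finset.card_univ⟩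
  obtain ⟨Q, hc, hp⟩ := Nat.sSup_mem hne hbdd
  exact ⟨Q, hc, fun a ha b hb hne' => hp (Finset.mem_coe.mpr ha) (Finset.mem_coe.mpr hb) hne'⟩

lemma alpha_ge_two (h3 : gammaC G = 3) : 2 ≤ alpha G := by
  obtain ⟨D, hcard, _, hconn⟩ := exists_connDom_three h3
  obtain ⟨⟨a, _⟩⟩ := hconn.nonempty
  obtain ⟨w, hwa, hnaw⟩ := no_dom_single h3 a
  have hI : ∀ x ∈ ({a, w} : Finset V), ∀ y ∈ ({a, w} : Finset V), x ≠ y → ¬ G.Adj x y := by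
    intro x hx y hy hxy
    simp only [Finset.mem_insert, Finset.mem_singleton] at hx hy
    rcases hx with rfl | rfl <;> rcases hy with rfl | rfl
    · exact absurd rfl hxy
    · exact hnaw
    · exact fun hadj => hnaw hadj.symm
    · exact absurd rfl hxy
  have hcard2 : ({a, w} : Finset V).card = 2 := by
    rw [Finset.card_insert_of_notMem (by simp [Ne.symm hwa]), Finset.card_singleton]
  calc 2 = ({a, w} : Finset V).card := hcard2.symm
    _ ≤ alpha G := ind_card_le hI

lemma omega_ge_two (h3 : gammaC G = 3) : 2 ≤ omegaNum G := by
  obtain ⟨D, hcard, _, hconn⟩ := exists_connDom_three h3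
  obtain ⟨⟨d1, hd1⟩⟩ := hconn.nonempty
  have hd1' : d1 ∈ D := by exact_mod_cast hd1
  obtain ⟨d2, hd2, hne⟩ := Finset.exists_mem_ne (s := D) (by omega) d1
  obtain ⟨x, y, hx, hy, hadj⟩ := exists_adj_of_connected hconn
    (Finset.mem_coe.mpr hd2) (Finset.mem_coe.mpr hd1') hne
  have hQ : ∀ u ∈ ({x, y} : Finset V), ∀ v ∈ ({x, y} : Finset V), u ≠ v → G.Adj u v := by
    intro u hu v hv huv
    simp only [Finset.mem_insert, Finset.mem_singleton] at hu hv
    rcases hu with rfl | rfl <;> rcases hv with rfl | rfl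
    · exact absurd rfl huv
    · exact hadj
    · exact hadj.symm
    · exact absurd rfl huv
  have hcard2 : ({x, y} : Finset V).card = 2 := by
    rw [Finset.card_insert_of_notMem (by simp [hadj.ne]), Finset.card_singleton]
  calc 2 = ({x, y} : Finset V).card := hcard2.symm
    _ ≤ omegaNum G := clique_card_le hQ

lemma three_le_cardV (h3 : gammaC G = 3) : 3 ≤ Fintype.card V := by
  obtain ⟨D, hcard, _, _⟩ := exists_connDom_three h3
  calc 3 = D.card := hcard.symm
    _ ≤ Fintype.card V := (Finset.card_le_univ D).trans_eq Finset.card_univ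

end Helpers4
section CleanLemma

open SimpleGraph

set_option linter.unusedSectionVars false
set_option maxHeartbeats 1000000

variable [Fintype V] [DecidableEq V] {G : SimpleGraph V}

/-- If the vertices split into a clique `C`, an independent set `I` of the same size `l`,
and a single extra vertex `v0`, and `G` is maximal critical, then `G ∈ 𝒢₁(l)`. -/
lemma clean_lemma (h : MaximalVertexCritical3 G) {l : ℕ} (hl : 2 ≤ l)
    {C I : Finset V} {v0 : V}
    (hCclique : ∀ a ∈ C, ∀ b ∈ C, a ≠ b → G.Adj a b)
    (hIind : ∀ a ∈ I, ∀ b ∈ I, a ≠ b → ¬ G.Adj a b)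
    (hCI : ∀ a, a ∈ C → a ∉ I)
    (hv0C : v0 ∉ C) (hv0I : v0 ∉ I)
    (hCcard : C.card = l) (hIcard : I.card = l)
    (hpart : ∀ w : V, w = v0 ∨ w ∈ C ∨ w ∈ I) :
    IsG1 l G := by
  classical
  have hzf : ∀ q : V, q ∈ C → ∃ z, z ∈ I ∧ G.Adj v0 z ∧ ¬ G.Adj v0 q ∧ ¬ G.Adj q z ∧
      (∀ w, w ≠ q → (w = v0 ∨ w = z ∨ G.Adj v0 w ∨ G.Adj z w)) := by
    intro q hq
    obtain ⟨a, b, hab, hadjab, haq, hbq, hnqa, hnqb, hcov⟩ := K_lemma h q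
    have haC : a ∉ C := fun haC' => hnqa (hCclique q hq a haC' (Ne.symm haq))
    have hbC : b ∉ C := fun hbC' => hnqb (hCclique q hq b hbC' (Ne.symm hbq))
    have ha' : a = v0 ∨ a ∈ I := by rcases hpart a with h' | h' | h' <;> tauto
    have hb' : b = v0 ∨ b ∈ I := by rcases hpart b with h' | h' | h' <;> tauto
    rcases ha' with rfl | haI
    · rcases hb' with rfl | hbI
      · exact absurd rfl hab
      · exact ⟨b, hbI, hadjab, fun hv => hnqa hv.symm, hnqb, fun w hw => hcov w hw⟩
    · rcases hb' with rfl | hbI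
      · refine ⟨a, haI, hadjab.symm, fun hv => hnqb hv.symm, hnqa, fun w hw => ?_⟩
        rcases hcov w hw with h' | h' | h' | h' <;> tauto
      · exact absurd (hIind a haI b hbI hab) (fun hn => hn hadjab)
  choose zf hzfI hzfadj hznv0q hzfnadj hzfcov using hzf
  -- enumerate C
  let e := C.equivFinOfCardEq hCcard
  let qfun : Fin l → V := fun i => (e.symm i : ↥C).1
  have hqmem : ∀ i, qfun i ∈ C := fun i => (e.symm i).2
  have hqinj : Function.Injective qfun := by
    intro i j hij
    have : e.symm i = e.symm j := Subtype.ext hij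
    simpa using congrArg e this
  have hqsurj : ∀ w ∈ C, ∃ i, qfun i = w := by
    intro w hw
    exact ⟨e ⟨w, hw⟩, by simp [qfun]⟩
  let zfun : Fin l → V := fun i => zf (qfun i) (hqmem i)
  have hzmem : ∀ i, zfun i ∈ I := fun i => hzfI _ _
  -- z_i adjacent to q_j for j ≠ i
  have hzq : ∀ i j, i ≠ j → G.Adj (zfun i) (qfun j) := by
    intro i j hij
    have hne : qfun j ≠ qfun i := fun hh => hij (hqinj hh).symm
    rcases hzfcov (qfun i) (hqmem i) (qfun j) hne with h' | h' | h' | h'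
    · exact absurd h' (fun hh => hv0C (hh ▸ hqmem j))
    · exact absurd h' (fun hh => hCI _ (hqmem j) (hh ▸ hzmem i))
    · exact absurd h' (hznv0q _ (hqmem j))
    · exact h'
  have hzinj : Function.Injective zfun := by
    intro i j hij
    by_contra hne
    exact hzfnadj (qfun j) (hqmem j) (hij ▸ hzq i j hne).symm
  -- image of zfun is I
  have himg : Finset.image zfun Finset.univ = I := by
    apply Finset.eq_of_subset_of_card_le
    · intro y hy
      obtain ⟨i, _, rfl⟩ := Finset.mem_image.mp hy
      exact hzmem i
    · rw [Finset.card_image_of_injective _ hzinj, Finset.card_univ, Fintype.card_fin, hIcard]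
  have hzsurj : ∀ y ∈ I, ∃ i, zfun i = y := by
    intro y hy
    rw [← himg] at hy
    obtain ⟨i, _, rfl⟩ := Finset.mem_image.mp hy
    exact ⟨i, rfl⟩
  refine ⟨v0, qfun, zfun, hqinj, hzinj, ?_, ?_, ?_, ?_, ?_, ?_, ?_, ?_, ?_⟩
  · intro i j hij
    exact hCI _ (hqmem i) (hij ▸ hzmem j)
  · exact fun i hh => hv0C (hh ▸ hqmem i)
  · exact fun i hh => hv0I (hh ▸ hzmem i)
  · intro w
    rcases hpart w with h' | h' | h'
    · exact Or.inl h'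
    · obtain ⟨i, hi⟩ := hqsurj w h'
      exact Or.inr (Or.inl ⟨i, hi.symm⟩)
    · obtain ⟨i, hi⟩ := hzsurj w h'
      exact Or.inr (Or.inr ⟨i, hi.symm⟩)
  · intro i j
    constructor
    · intro hadj hij
      exact G.irrefl (hij ▸ hadj)
    · intro hij
      exact hCclique _ (hqmem i) _ (hqmem j) (fun hh => hij (hqinj hh))
  · intro i j
    by_cases hij : i = j
    · subst hij; exact G.irrefl
    · exact hIind _ (hzmem i) _ (hzmem j) (fun hh => hij (hzinj hh))
  · exact fun i => hzfadj _ _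
  · exact fun i => hznv0q _ (hqmem i)
  · intro i j
    constructor
    · intro hadj hji
      subst hji
      exact hzfnadj _ (hqmem j) hadj.symm
    · intro hji
      exact hzq i j (fun hh => hji hh.symm)
end CleanLemma
section Part1

open SimpleGraph

set_option linter.unusedSectionVars false
set_option maxHeartbeats 1000000

variable [Fintype V] [DecidableEq V] {G : SimpleGraph V}

lemma alpha_add_omega_lt_card (h : MaximalVertexCritical3 G) :
    alpha G + omegaNum G < Fintype.card V := by
  classical
  have h3 := h.1.1
  obtain ⟨Z, hZcard, hZind⟩ := exists_max_ind G
  obtain ⟨Q, hQcard, hQclique⟩ := exists_max_clique G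
  by_contra hc
  push_neg at hc
  set O := Finset.univ \ (Z ∪ Q) with hO
  have hZQinter : (Z ∩ Q).card ≤ 1 := by
    by_contra hcc
    push_neg at hcc
    obtain ⟨x, hx, y, hy, hxy⟩ := Finset.one_lt_card.mp hcc
    have hxZ := Finset.mem_inter.mp hx
    have hyZ := Finset.mem_inter.mp hy
    exact hZind x hxZ.1 y hyZ.1 hxy (hQclique x hxZ.2 y hyZ.2 hxy)
  have hunion : (Z ∪ Q).card + (Z ∩ Q).card = Z.card + Q.card :=
    Finset.card_union_add_card_inter Z Q
  have hle : (Z ∪ Q).card ≤ Fintype.card V :=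
    (Finset.card_le_univ _).trans_eq Finset.card_univ
  have hOcard : O.card = Fintype.card V - (Z ∪ Q).card := by
    rw [hO, Finset.card_sdiff_of_subset (Finset.subset_univ _), Finset.card_univ]
  have hOle : O.card ≤ 1 := by omega
  -- each q ∈ Q gives a member of its K-pair in O
  have hcases : ∀ c, c ∉ Q → (c ∈ O ∨ (c ∈ Z ∧ c ∉ Q)) := by
    intro c hcQ
    by_cases hcZ : c ∈ Z
    · right; exact ⟨hcZ, hcQ⟩
    · left; rw [hO]; simp [hcZ, hcQ]
  have hw2 : 2 ≤ omegaNum G := omega_ge_two h3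
  have hQ2 : 1 < Q.card := by omega
  obtain ⟨q1, hq1⟩ := Finset.card_pos.mp (by omega : 0 < Q.card)
  have hOne : O.Nonempty := by
    obtain ⟨a, b, hab, hadjab, haq, hbq, hnqa, hnqb, hcov⟩ := K_lemma h q1
    have haQ : a ∉ Q := fun h' => hnqa (hQclique q1 hq1 a h' (Ne.symm haq))
    have hbQ : b ∉ Q := fun h' => hnqb (hQclique q1 hq1 b h' (Ne.symm hbq))
    rcases hcases a haQ with haO | ⟨haZ, _⟩
    · exact ⟨a, haO⟩
    rcases hcases b hbQ with hbO | ⟨hbZ, _⟩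
    · exact ⟨b, hbO⟩
    exact absurd (hZind a haZ b hbZ hab) (fun hn => hn hadjab)
  have hO1 : O.card = 1 := le_antisymm hOle (Finset.card_pos.mpr hOne)
  have hI1 : (Z ∩ Q).card = 1 := by omega
  obtain ⟨vO, hvO⟩ := Finset.card_eq_one.mp hO1
  obtain ⟨x, hxI⟩ := Finset.card_eq_one.mp hI1
  have hxZ : x ∈ Z := (Finset.mem_inter.mp (hxI ▸ Finset.mem_singleton_self x)).1
  have hxQ : x ∈ Q := (Finset.mem_inter.mp (hxI ▸ Finset.mem_singleton_self x)).2
  have hvOZQ : vO ∉ Z ∪ Q := by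
    have : vO ∈ O := hvO ▸ Finset.mem_singleton_self vO
    rw [hO] at this
    exact (Finset.mem_sdiff.mp this).2
  have hstr : ∀ q ∈ Q, ∃ z, z ∈ Z ∧ z ∉ Q ∧ G.Adj vO z ∧ ¬ G.Adj q vO ∧ ¬ G.Adj q z ∧
      (∀ w, w ≠ q → (w = vO ∨ w = z ∨ G.Adj vO w ∨ G.Adj z w)) := by
    intro q hq
    obtain ⟨a, b, hab, hadjab, haq, hbq, hnqa, hnqb, hcov⟩ := K_lemma h q
    have haQ : a ∉ Q := fun h' => hnqa (hQclique q hq a h' (Ne.symm haq))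
    have hbQ : b ∉ Q := fun h' => hnqb (hQclique q hq b h' (Ne.symm hbq))
    rcases hcases a haQ with haO | ⟨haZ, haQ'⟩ <;> rcases hcases b hbQ with hbO | ⟨hbZ, hbQ'⟩
    · exfalso
      have ha' : a = vO := by rw [hvO] at haO; simpa using haO
      have hb' : b = vO := by rw [hvO] at hbO; simpa using hbO
      exact hab (ha'.trans hb'.symm)
    · have ha' : a = vO := by rw [hvO] at haO; simpa using haO
      subst ha'
      exact ⟨b, hbZ, hbQ', hadjab, hnqa, hnqb, hcov⟩
    · have hb' : b = vO := by rw [hvO] at hbO; simpa using hbO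
      subst hb'
      refine ⟨a, haZ, haQ', hadjab.symm, hnqb, hnqa, fun w hw => ?_⟩
      rcases hcov w hw with h' | h' | h' | h' <;> tauto
    · exact absurd (hZind a haZ b hbZ hab) (fun hn => hn hadjab)
  obtain ⟨q0, hq0Q, hq0x⟩ := Finset.exists_mem_ne (s := Q) hQ2 x
  obtain ⟨z, hzZ, hzQ, hvz, hnq0v, hnq0z, hcov0⟩ := hstr q0 hq0Q
  obtain ⟨z', _, _, _, hnxv, _, _⟩ := hstr x hxQ
  rcases hcov0 x (Ne.symm (Ne.symm hq0x).symm) with h' | h' | h' | h'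
  · exact hvOZQ (h' ▸ Finset.mem_union_right _ hxQ)
  · exact hzQ (h' ▸ hxQ)
  · exact hnxv h'.symm
  · exact hZind z hzZ x hxZ (fun hh => hzQ (hh ▸ hxQ)) h'

end Part1
section Structure

open SimpleGraph

set_option linter.unusedSectionVars false
set_option maxHeartbeats 1000000

variable [Fintype V] [DecidableEq V] {G : SimpleGraph V}

lemma dom_contra (h3 : gammaC G = 3) {a b : V} (hab : G.Adj a b)
    (hcov : ∀ w, w = a ∨ w = b ∨ G.Adj a w ∨ G.Adj b w) : False := by
  obtain ⟨w, h1, h2, h3', h4⟩ := no_dom_pair h3 hab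
  rcases hcov w with h' | h' | h' | h'
  · exact h1 h'
  · exact h2 h'
  · exact h3' h'
  · exact h4 h'

lemma equality_structure (h : MaximalVertexCritical3 G) {l : ℕ} (hl : 2 ≤ l)
    (ha : alpha G = l) (hw : omegaNum G = l) (hn : Fintype.card V = 2 * l + 1) :
    IsG1 l G := by
  classical
  have h3 := h.1.1
  obtain ⟨Z, hZcard, hZind⟩ := exists_max_ind G
  obtain ⟨Q, hQcard, hQclique⟩ := exists_max_clique G
  rw [ha] at hZcard
  rw [hw] at hQcard
  set O := Finset.univ \ (Z ∪ Q) with hO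
  have hZQinter : (Z ∩ Q).card ≤ 1 := by
    by_contra hcc
    push_neg at hcc
    obtain ⟨x, hx, y, hy, hxy⟩ := Finset.one_lt_card.mp hcc
    have hxZ := Finset.mem_inter.mp hx
    have hyZ := Finset.mem_inter.mp hy
    exact hZind x hxZ.1 y hyZ.1 hxy (hQclique x hxZ.2 y hyZ.2 hxy)
  have hunion : (Z ∪ Q).card + (Z ∩ Q).card = Z.card + Q.card :=
    Finset.card_union_add_card_inter Z Q
  have hle : (Z ∪ Q).card ≤ Fintype.card V :=
    (Finset.card_le_univ _).trans_eq Finset.card_univ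
  have hOcard : O.card = Fintype.card V - (Z ∪ Q).card := by
    rw [hO, Finset.card_sdiff_of_subset (Finset.subset_univ _), Finset.card_univ]
  have hOmem : ∀ c, c ∈ O ↔ (c ∉ Z ∧ c ∉ Q) := by
    intro c; rw [hO]; simp [Finset.mem_sdiff]
  rcases Nat.lt_or_ge (Z ∩ Q).card 1 with hi0 | hi1
  · -- disjoint case : O is a single vertex
    have hi0' : (Z ∩ Q).card = 0 := by omega
    have hO1 : O.card = 1 := by omega
    obtain ⟨v0, hv0⟩ := Finset.card_eq_one.mp hO1
    have hv0O : v0 ∈ O := hv0 ▸ Finset.mem_singleton_self v0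
    have hv0Z : v0 ∉ Z := ((hOmem v0).mp hv0O).1
    have hv0Q : v0 ∉ Q := ((hOmem v0).mp hv0O).2
    have hdisj : ∀ a, a ∈ Q → a ∉ Z := by
      intro a haQ haZ
      have : a ∈ Z ∩ Q := Finset.mem_inter.mpr ⟨haZ, haQ⟩
      rw [Finset.card_eq_zero.mp hi0'] at this
      simp at this
    refine clean_lemma h hl hQclique hZind hdisj hv0Q hv0Z hQcard hZcard ?_
    intro w
    by_cases hwQ : w ∈ Q
    · exact Or.inr (Or.inl hwQ)
    by_cases hwZ : w ∈ Z
    · exact Or.inr (Or.inr hwZ)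
    · have : w ∈ O := (hOmem w).mpr ⟨hwZ, hwQ⟩
      rw [hv0] at this
      exact Or.inl (Finset.mem_singleton.mp this)
  · -- shared vertex case
    have hi1' : (Z ∩ Q).card = 1 := le_antisymm hZQinter hi1
    have hO2 : O.card = 2 := by omega
    obtain ⟨x, hxI⟩ := Finset.card_eq_one.mp hi1'
    have hxZ : x ∈ Z := (Finset.mem_inter.mp (hxI ▸ Finset.mem_singleton_self x)).1
    have hxQ : x ∈ Q := (Finset.mem_inter.mp (hxI ▸ Finset.mem_singleton_self x)).2
    have hZQx : ∀ c, c ∈ Z → c ∈ Q → c = x := by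
      intro c hcZ hcQ
      have : c ∈ Z ∩ Q := Finset.mem_inter.mpr ⟨hcZ, hcQ⟩
      rw [hxI] at this
      exact Finset.mem_singleton.mp this
    obtain ⟨v1, v2, hv12, hOeq⟩ := Finset.card_eq_two.mp hO2
    have hOmem2 : ∀ c, c ∈ O ↔ (c = v1 ∨ c = v2) := by
      intro c; rw [hOeq]; simp
    have hv1O : v1 ∈ O := (hOmem2 v1).mpr (Or.inl rfl)
    have hv2O : v2 ∈ O := (hOmem2 v2).mpr (Or.inr rfl)
    have hQ1 : 1 < Q.card := by omega
    have hZ1 : 1 < Z.card := by omega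
    obtain ⟨q1, hq1Q, hq1x⟩ := Finset.exists_mem_ne (s := Q) hQ1 x
    have hclassify : ∀ q ∈ Q, ∀ c, c ≠ q → ¬ G.Adj q c → ((c ∈ Z ∧ c ∉ Q) ∨ c ∈ O) := by
      intro q hq c hcq hnadj
      by_cases hcQ : c ∈ Q
      · exact absurd (hQclique q hq c hcQ (Ne.symm hcq)) hnadj
      by_cases hcZ : c ∈ Z
      · exact Or.inl ⟨hcZ, hcQ⟩
      · exact Or.inr ((hOmem c).mpr ⟨hcZ, hcQ⟩)
    have hZne : ∀ c, c ∈ Z → c ∉ Q → c ≠ x := fun c _ hcQ hh => hcQ (hh ▸ hxQ)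
    -- find u ∈ O adjacent to x
    have hu_ex : ∃ u ∈ O, G.Adj u x := by
      obtain ⟨a, b, hab, hadjab, haq, hbq, hnqa, hnqb, hcov⟩ := K_lemma h q1
      have hca := hclassify q1 hq1Q a haq hnqa
      have hcb := hclassify q1 hq1Q b hbq hnqb
      rcases hcov x (Ne.symm hq1x) with h' | h' | h' | h'
      · rcases hca with ⟨_, haQ⟩ | haO
        · exact absurd (h' ▸ hxQ) haQ
        · exact absurd (h' ▸ hxQ) ((hOmem a).mp haO).2
      · rcases hcb with ⟨_, hbQ⟩ | hbO
        · exact absurd (h' ▸ hxQ) hbQ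
        · exact absurd (h' ▸ hxQ) ((hOmem b).mp hbO).2
      · rcases hca with ⟨haZ, haQ⟩ | haO
        · exact absurd h' (fun hh => hZind a haZ x hxZ (fun he => haQ (he ▸ hxQ)) hh)
        · exact ⟨a, haO, h'⟩
      · rcases hcb with ⟨hbZ, hbQ⟩ | hbO
        · exact absurd h' (fun hh => hZind b hbZ x hxZ (fun he => hbQ (he ▸ hxQ)) hh)
        · exact ⟨b, hbO, h'⟩
    obtain ⟨u, huO, hux⟩ := hu_ex
    have huNZ : u ∉ Z := ((hOmem u).mp huO).1
    have huNQ : u ∉ Q := ((hOmem u).mp huO).2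
    have hup_ex : ∃ p, p ∈ O ∧ p ≠ u ∧ ∀ c ∈ O, c = u ∨ c = p := by
      rcases (hOmem2 u).mp huO with rfl | rfl
      · exact ⟨v2, hv2O, Ne.symm hv12, fun c hc => (hOmem2 c).mp hc⟩
      · exact ⟨v1, hv1O, hv12, fun c hc => ((hOmem2 c).mp hc).symm⟩
    obtain ⟨p, hpO, hpu, hOcases⟩ := hup_ex
    have hpNZ : p ∉ Z := ((hOmem p).mp hpO).1
    have hpNQ : p ∉ Q := ((hOmem p).mp hpO).2
    -- D_x = {p, z0}
    have hDx : ∃ z0, z0 ∈ Z ∧ z0 ∉ Q ∧ G.Adj p z0 ∧ ¬ G.Adj x p ∧ ¬ G.Adj x z0 ∧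
        (∀ w, w ≠ x → (w = p ∨ w = z0 ∨ G.Adj p w ∨ G.Adj z0 w)) := by
      obtain ⟨a, b, hab, hadjab, hax, hbx, hnxa, hnxb, hcov⟩ := K_lemma h x
      have hca := hclassify x hxQ a hax hnxa
      have hcb := hclassify x hxQ b hbx hnxb
      have hau : a ≠ u := fun hh => hnxa (hh ▸ hux.symm)
      have hbu : b ≠ u := fun hh => hnxb (hh ▸ hux.symm)
      rcases hca with ⟨haZ, haQ⟩ | haO <;> rcases hcb with ⟨hbZ, hbQ⟩ | hbO
      · exact absurd (hZind a haZ b hbZ hab) (fun hn => hn hadjab)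
      · have hbp : b = p := (hOcases b hbO).resolve_left hbu
        subst hbp
        exact ⟨a, haZ, haQ, hadjab.symm, hnxb, hnxa, fun w hw => by
          rcases hcov w hw with h' | h' | h' | h' <;> tauto⟩
      · have hap : a = p := (hOcases a haO).resolve_left hau
        subst hap
        exact ⟨b, hbZ, hbQ, hadjab, hnxa, hnxb, hcov⟩
      · have hap : a = p := (hOcases a haO).resolve_left hau
        have hbp : b = p := (hOcases b hbO).resolve_left hbu
        exact absurd (hap.trans hbp.symm) hab
    obtain ⟨z0, hz0Z, hz0Q, hpz0, hnxp, hnxz0, hcovx⟩ := hDx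
    -- typing of K-pairs for q ∈ Q \ {x}
    have hTyp : ∀ q ∈ Q, q ≠ x →
        (∃ z, z ∈ Z ∧ z ∉ Q ∧ G.Adj u z ∧ ¬ G.Adj q u ∧ ¬ G.Adj q z ∧
          (∀ w, w ≠ q → (w = u ∨ w = z ∨ G.Adj u w ∨ G.Adj z w))) ∨
        (G.Adj u p ∧ ¬ G.Adj q u ∧ ¬ G.Adj q p ∧
          (∀ w, w ≠ q → (w = u ∨ w = p ∨ G.Adj u w ∨ G.Adj p w))) := by
      intro q hq hqx
      obtain ⟨a, b, hab, hadjab, haq, hbq, hnqa, hnqb, hcov⟩ := K_lemma h q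
      have hca := hclassify q hq a haq hnqa
      have hcb := hclassify q hq b hbq hnqb
      have hOx : ∀ c d, c ∈ O → d ∈ Z → d ∉ Q →
          (∀ w, w ≠ q → (w = c ∨ w = d ∨ G.Adj c w ∨ G.Adj d w)) → c = u := by
        intro c d hcO hdZ hdQ hcv
        rcases hOcases c hcO with hcu | hcp
        · exact hcu
        · exfalso
          rcases hcv x (Ne.symm hqx) with h' | h' | h' | h'
          · exact ((hOmem p).mp hpO).2 ((h'.trans hcp) ▸ hxQ)
          · exact hdQ (h' ▸ hxQ)
          · exact hnxp (hcp ▸ h').symm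
          · exact hZind d hdZ x hxZ (hZne d hdZ hdQ) h'
      rcases hca with ⟨haZ, haQ⟩ | haO <;> rcases hcb with ⟨hbZ, hbQ⟩ | hbO
      · exact absurd (hZind a haZ b hbZ hab) (fun hn => hn hadjab)
      · -- a ∈ Z, b ∈ O ⟹ b = u
        have hbu : b = u := by
          refine hOx b a hbO haZ haQ ?_
          intro w hw
          rcases hcov w hw with h' | h' | h' | h' <;> tauto
        subst hbu
        refine Or.inl ⟨a, haZ, haQ, hadjab.symm, hnqb, hnqa, fun w hw => ?_⟩
        rcases hcov w hw with h' | h' | h' | h' <;> tauto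
      · have hau : a = u := hOx a b haO hbZ hbQ hcov
        subst hau
        exact Or.inl ⟨b, hbZ, hbQ, hadjab, hnqa, hnqb, hcov⟩
      · -- both in O : P-type
        rcases hOcases a haO with hau | hap
        · subst hau
          have hbp : b = p := (hOcases b hbO).resolve_left (Ne.symm hab)
          subst hbp
          exact Or.inr ⟨hadjab, hnqa, hnqb, hcov⟩
        · subst hap
          have hbu : b = u := (hOcases b hbO).resolve_right (Ne.symm hab)
          subst hbu
          refine Or.inr ⟨hadjab.symm, hnqb, hnqa, fun w hw => ?_⟩
          rcases hcov w hw with h' | h' | h' | h' <;> tauto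
    by_cases hP : ∃ q ∈ Q, q ≠ x ∧ ¬ G.Adj q u ∧ ¬ G.Adj q p ∧ G.Adj u p ∧
        (∀ w, w ≠ q → (w = u ∨ w = p ∨ G.Adj u w ∨ G.Adj p w))
    · -- case β : a pair-typed vertex qs exists
      obtain ⟨qs, hqsQ, hqsx, hnqsu, hnqsp, hup, hcovs⟩ := hP
      have hqsNZ : qs ∉ Z := fun hh => hqsx (hZQx qs hh hqsQ)
      -- all other q in Q \ {x, qs} are z-typed
      have hzt : ∀ q ∈ Q, q ≠ x → q ≠ qs → ∃ z, z ∈ Z ∧ z ∉ Q ∧ G.Adj u z ∧ ¬ G.Adj q u ∧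
          ¬ G.Adj q z ∧ (∀ w, w ≠ q → (w = u ∨ w = z ∨ G.Adj u w ∨ G.Adj z w)) := by
        intro q hq hqx hqqs
        rcases hTyp q hq hqx with hzb | ⟨_, hqu, hqp, _⟩
        · exact hzb
        · exfalso
          rcases hcovs q hqqs with h' | h' | h' | h'
          · exact huNQ (h' ▸ hq)
          · exact hpNQ (h' ▸ hq)
          · exact hqu h'.symm
          · exact hqp h'.symm
      have hpZ : ∀ z ∈ Z, z ≠ x → G.Adj p z := by
        intro z hz hzx
        by_cases hzz0 : z = z0
        · exact hzz0 ▸ hpz0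
        · rcases hcovx z hzx with h' | h' | h' | h'
          · exact absurd (h' ▸ hz) hpNZ
          · exact absurd h' hzz0
          · exact h'
          · exact absurd h' (fun hh => hZind z0 hz0Z z hz (fun he => hzz0 he.symm) hh)
      have hnuq : ∀ q ∈ Q, q ≠ x → ¬ G.Adj q u := by
        intro q hq hqx
        by_cases hqqs : q = qs
        · exact hqqs ▸ hnqsu
        · obtain ⟨z, _, _, _, hqu, _, _⟩ := hzt q hq hqx hqqs
          exact hqu
      -- D_p = {x, qs}
      have hDp : ¬ G.Adj p qs ∧ (∀ w, w ≠ p → (w = x ∨ w = qs ∨ G.Adj x w ∨ G.Adj qs w)) := by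
        obtain ⟨a, b, hab, hadjab, hap, hbp, hnpa, hnpb, hcov⟩ := K_lemma h p
        have hcl : ∀ c, c ≠ p → ¬ G.Adj p c → c ∈ Q := by
          intro c hcp hnpc
          by_cases hcQ : c ∈ Q
          · exact hcQ
          exfalso
          by_cases hcZ : c ∈ Z
          · exact hnpc (hpZ c hcZ (hZne c hcZ hcQ))
          · have hcO : c ∈ O := (hOmem c).mpr ⟨hcZ, hcQ⟩
            rcases hOcases c hcO with hcu | hcp'
            · exact hnpc (hcu ▸ hup.symm)
            · exact hcp hcp'
        have haQ : a ∈ Q := hcl a hap hnpa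
        have hbQ : b ∈ Q := hcl b hbp hnpb
        have hupne : u ≠ p := Ne.symm hpu
        have hkill2 : ∀ q', q' ∈ Q → q' ≠ x → q' ≠ qs →
            (∀ w, w ≠ p → (w = x ∨ w = q' ∨ G.Adj x w ∨ G.Adj q' w)) → False := by
          intro q' hq' hq'x hq'qs hcv
          obtain ⟨zq, hzqZ, hzqQ, _, _, hq'z, _⟩ := hzt q' hq' hq'x hq'qs
          rcases hcv zq (fun hh => hpNZ (hh ▸ hzqZ)) with h' | h' | h' | h'
          · exact hzqQ (h' ▸ hxQ)
          · exact hzqQ (h' ▸ hq')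
          · exact hZind x hxZ zq hzqZ (Ne.symm (hZne zq hzqZ hzqQ)) h'
          · exact hq'z h'
        have hkill1 : ∀ q' q'', q' ∈ Q → q' ≠ x → q'' ∈ Q → q'' ≠ x →
            (∀ w, w ≠ p → (w = q' ∨ w = q'' ∨ G.Adj q' w ∨ G.Adj q'' w)) → False := by
          intro q' q'' hq' hq'x hq'' hq''x hcv
          rcases hcv u hupne with h' | h' | h' | h'
          · exact huNQ (h' ▸ hq')
          · exact huNQ (h' ▸ hq'')
          · exact hnuq q' hq' hq'x h'
          · exact hnuq q'' hq'' hq''x h'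
        by_cases hax : a = x
        · have hbx : b ≠ x := fun hh => hab (hax.trans hh.symm)
          by_cases hbqs : b = qs
          · refine ⟨fun hh => hnpb (hbqs ▸ hh), fun w hw => ?_⟩
            rcases hcov w hw with h' | h' | h' | h'
            · exact Or.inl (h'.trans hax)
            · exact Or.inr (Or.inl (h'.trans hbqs))
            · exact Or.inr (Or.inr (Or.inl (hax ▸ h')))
            · exact Or.inr (Or.inr (Or.inr (hbqs ▸ h')))
          · refine absurd (hkill2 b hbQ hbx hbqs (fun w hw => ?_)) id
            rcases hcov w hw with h' | h' | h' | h'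
            · exact Or.inl (h'.trans hax)
            · exact Or.inr (Or.inl h')
            · exact Or.inr (Or.inr (Or.inl (hax ▸ h')))
            · exact Or.inr (Or.inr (Or.inr h'))
        by_cases hbx : b = x
        · by_cases haqs : a = qs
          · refine ⟨fun hh => hnpa (haqs ▸ hh), fun w hw => ?_⟩
            rcases hcov w hw with h' | h' | h' | h'
            · exact Or.inr (Or.inl (h'.trans haqs))
            · exact Or.inl (h'.trans hbx)
            · exact Or.inr (Or.inr (Or.inr (haqs ▸ h')))
            · exact Or.inr (Or.inr (Or.inl (hbx ▸ h')))
          · refine absurd (hkill2 a haQ hax haqs (fun w hw => ?_)) id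
            rcases hcov w hw with h' | h' | h' | h'
            · exact Or.inr (Or.inl h')
            · exact Or.inl (h'.trans hbx)
            · exact Or.inr (Or.inr (Or.inr h'))
            · exact Or.inr (Or.inr (Or.inl (hbx ▸ h')))
        · exact absurd (hkill1 a b haQ hax hbQ hbx hcov) id
      have hnpqs := hDp.1
      have hcovp := hDp.2
      have hqsZ : ∀ z ∈ Z, z ≠ x → G.Adj qs z := by
        intro z hz hzx
        have hzQ : z ∉ Q := fun hh => hzx (hZQx z hz hh)
        rcases hcovp z (fun hh => hpNZ (hh ▸ hz)) with h' | h' | h' | h'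
        · exact absurd h' hzx
        · exact absurd (h' ▸ hz) hqsNZ
        · exact absurd h' (fun hh => hZind x hxZ z hz (Ne.symm hzx) hh)
        · exact h'
      obtain ⟨z1, hz1Z, hz1x⟩ := Finset.exists_mem_ne (s := Z) hZ1 x
      by_cases h3rd : ∃ q'' ∈ Q, q'' ≠ x ∧ q'' ≠ qs
      · -- contradiction : {qs, z1} dominates everything
        exfalso
        obtain ⟨q2, hq2Q, hq2x, hq2qs⟩ := h3rd
        obtain ⟨zq, hzqZ, hzqQ, huzq, _, hq2z, hcov2⟩ := hzt q2 hq2Q hq2x hq2qs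
        have huZ' : ∀ z ∈ Z, z ≠ x → G.Adj u z := by
          intro z hz hzx
          by_cases hzzq : z = zq
          · exact hzzq ▸ huzq
          · have hzQ : z ∉ Q := fun hh => hzx (hZQx z hz hh)
            rcases hcov2 z (fun hh => hzQ (hh ▸ hq2Q)) with h' | h' | h' | h'
            · exact absurd (h' ▸ hz) huNZ
            · exact absurd h' hzzq
            · exact h'
            · exact absurd h' (fun hh => hZind zq hzqZ z hz (fun he => hzzq he.symm) hh)
        refine dom_contra h3 (hqsZ z1 hz1Z hz1x) (fun w => ?_)
        by_cases hwQ : w ∈ Q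
        · by_cases hwqs : w = qs
          · exact Or.inl hwqs
          · exact Or.inr (Or.inr (Or.inl (hQclique qs hqsQ w hwQ (Ne.symm hwqs))))
        by_cases hwZ : w ∈ Z
        · by_cases hwx : w = x
          · exact Or.inr (Or.inr (Or.inl (hwx.symm ▸ (hQclique qs hqsQ x hxQ hqsx))))
          · exact Or.inr (Or.inr (Or.inl (hqsZ w hwZ hwx)))
        · have hwO : w ∈ O := (hOmem w).mpr ⟨hwZ, hwQ⟩
          rcases hOcases w hwO with hwu | hwp
          · exact Or.inr (Or.inr (Or.inr (hwu.symm ▸ (huZ' z1 hz1Z hz1x).symm)))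
          · exact Or.inr (Or.inr (Or.inr (hwp.symm ▸ (hpZ z1 hz1Z hz1x).symm)))
      · -- l = 2 endgame
        push_neg at h3rd
        have hQsub : ∀ q ∈ Q, q = x ∨ q = qs := by
          intro q hq
          by_cases hqx : q = x
          · exact Or.inl hqx
          · exact Or.inr (h3rd q hq hqx)
        have hl2 : l = 2 := by
          have hsub : Q ⊆ {x, qs} := fun q hq => by
            rcases hQsub q hq with h' | h' <;> simp [h']
          have := Finset.card_le_card hsub
          have hc2 : ({x, qs} : Finset V).card ≤ 2 := Finset.card_insert_le _ _ |>.trans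
            (by simp)
          omega
        have hZsub : ∀ z ∈ Z, z = x ∨ z = z0 := by
          intro z hz
          by_contra hcc
          push_neg at hcc
          have hsub : {x, z0, z} ⊆ Z := by
            intro c hc
            simp only [Finset.mem_insert, Finset.mem_singleton] at hc
            rcases hc with rfl | rfl | rfl
            · exact hxZ
            · exact hz0Z
            · exact hz
          have hxz0 : x ≠ z0 := Ne.symm (hZne z0 hz0Z hz0Q)
          have hcard3 : ({x, z0, z} : Finset V).card = 3 := by
            rw [Finset.card_insert_of_notMem (by simp [hxz0, Ne.symm hcc.1]),
              Finset.card_insert_of_notMem (by simp [Ne.symm hcc.2]), Finset.card_singleton]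
          have := Finset.card_le_card hsub
          omega
        by_cases huz0 : G.Adj u z0
        · exfalso
          have hz1z0 : z1 = z0 := (hZsub z1 hz1Z).resolve_left hz1x
          refine dom_contra h3 (hqsZ z0 hz0Z (hZne z0 hz0Z hz0Q)) (fun w => ?_)
          by_cases hwQ : w ∈ Q
          · rcases hQsub w hwQ with hwx | hwqs
            · exact Or.inr (Or.inr (Or.inl (hwx.symm ▸ hQclique qs hqsQ x hxQ hqsx)))
            · exact Or.inl hwqs
          by_cases hwZ : w ∈ Z
          · rcases hZsub w hwZ with hwx | hwz0
            · exact Or.inr (Or.inr (Or.inl (hwx.symm ▸ hQclique qs hqsQ x hxQ hqsx)))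
            · exact Or.inr (Or.inl hwz0)
          · have hwO : w ∈ O := (hOmem w).mpr ⟨hwZ, hwQ⟩
            rcases hOcases w hwO with hwu | hwp
            · exact Or.inr (Or.inr (Or.inr (hwu.symm ▸ huz0.symm)))
            · exact Or.inr (Or.inr (Or.inr (hwp.symm ▸ hpz0.symm)))
        · -- build : C = {u, p}, I = Z, v0 = qs
          have hCclique : ∀ a ∈ ({u, p} : Finset V), ∀ b ∈ ({u, p} : Finset V),
              a ≠ b → G.Adj a b := by
            intro a ha b hb hne
            simp only [Finset.mem_insert, Finset.mem_singleton] at ha hb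
            rcases ha with rfl | rfl <;> rcases hb with rfl | rfl
            · exact absurd rfl hne
            · exact hup
            · exact hup.symm
            · exact absurd rfl hne
          have hCdisj : ∀ a, a ∈ ({u, p} : Finset V) → a ∉ Z := by
            intro a ha
            simp only [Finset.mem_insert, Finset.mem_singleton] at ha
            rcases ha with rfl | rfl
            · exact huNZ
            · exact hpNZ
          have hqsC : qs ∉ ({u, p} : Finset V) := by
            simp only [Finset.mem_insert, Finset.mem_singleton]
            push_neg
            exact ⟨fun hh => huNQ (hh ▸ hqsQ), fun hh => hpNQ (hh ▸ hqsQ)⟩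
          have hCcard : ({u, p} : Finset V).card = l := by
            rw [Finset.card_insert_of_notMem (by simp [Ne.symm hpu]), Finset.card_singleton,
              hl2]
          refine clean_lemma h hl hCclique hZind hCdisj hqsC hqsNZ hCcard hZcard ?_
          intro w
          by_cases hwQ : w ∈ Q
          · rcases hQsub w hwQ with hwx | hwqs
            · exact Or.inr (Or.inr (hwx.symm ▸ hxZ))
            · exact Or.inl hwqs
          by_cases hwZ : w ∈ Z
          · exact Or.inr (Or.inr hwZ)
          · have hwO : w ∈ O := (hOmem w).mpr ⟨hwZ, hwQ⟩
            rcases hOcases w hwO with hwu | hwp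
            · exact Or.inr (Or.inl (by simp [hwu]))
            · exact Or.inr (Or.inl (by simp [hwp]))
    · -- case α : all q in Q \ {x} are z-typed with u
      have hzt : ∀ q ∈ Q, q ≠ x → ∃ z, z ∈ Z ∧ z ∉ Q ∧ G.Adj u z ∧ ¬ G.Adj q u ∧ ¬ G.Adj q z ∧
          (∀ w, w ≠ q → (w = u ∨ w = z ∨ G.Adj u w ∨ G.Adj z w)) := by
        intro q hq hqx
        rcases hTyp q hq hqx with hzb | ⟨h1', h2', h3'', h4'⟩
        · exact hzb
        · exact absurd ⟨q, hq, hqx, h2', h3'', h1', h4'⟩ hP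
      choose zf hzfZ hzfQ huzf hnqu hnqz hcovq using hzt
      have hzfx : ∀ q (hq : q ∈ Q) (hqx : q ≠ x), zf q hq hqx ≠ x :=
        fun q hq hqx hh => hzfQ q hq hqx (hh ▸ hxQ)
      have hzfadj : ∀ q (hq : q ∈ Q) (hqx : q ≠ x), ∀ q' ∈ Q, q' ≠ x → q' ≠ q →
          G.Adj (zf q hq hqx) q' := by
        intro q hq hqx q' hq' hq'x hq'q
        rcases hcovq q hq hqx q' hq'q with h' | h' | h' | h'
        · exact absurd (h' ▸ hq') huNQ
        · exact absurd (h' ▸ hq') (hzfQ q hq hqx)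
        · exact absurd h'.symm (hnqu q' hq' hq'x)
        · exact h'
      have hzsurj : ∀ z ∈ Z, z ≠ x → ∃ q, ∃ (hq : q ∈ Q) (hqx : q ≠ x), zf q hq hqx = z := by
        set S := (Q.erase x).attach.image
          (fun q => zf q.1 (Finset.mem_of_mem_erase q.2) (Finset.ne_of_mem_erase q.2)) with hS
        have hSsub : S ⊆ Z.erase x := by
          intro y hy
          rw [hS] at hy
          obtain ⟨⟨q, hqe⟩, -, rfl⟩ := Finset.mem_image.mp hy
          exact Finset.mem_erase.mpr ⟨hzfx _ _ _, hzfZ _ _ _⟩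
        have hScard : S.card = l - 1 := by
          rw [hS, Finset.card_image_of_injOn ?_]
          · rw [Finset.card_attach, Finset.card_erase_of_mem hxQ, hQcard]
          · intro q₁ _ q₂ _ heq
            dsimp only at heq
            by_contra hne
            have hne' : q₁.1 ≠ q₂.1 := fun hh => hne (Subtype.ext hh)
            have hadj := hzfadj q₁.1 (Finset.mem_of_mem_erase q₁.2)
              (Finset.ne_of_mem_erase q₁.2) q₂.1 (Finset.mem_of_mem_erase q₂.2)
              (Finset.ne_of_mem_erase q₂.2) (Ne.symm hne')
            rw [heq] at hadj
            exact hnqz q₂.1 (Finset.mem_of_mem_erase q₂.2) (Finset.ne_of_mem_erase q₂.2)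
              hadj.symm
        have hSeq : S = Z.erase x := by
          apply Finset.eq_of_subset_of_card_le hSsub
          rw [Finset.card_erase_of_mem hxZ, hZcard, hScard]
        intro z hz hzx
        have hzS : z ∈ S := by rw [hSeq]; exact Finset.mem_erase.mpr ⟨hzx, hz⟩
        rw [hS] at hzS
        obtain ⟨⟨q, hqe⟩, -, hh⟩ := Finset.mem_image.mp hzS
        exact ⟨q, Finset.mem_of_mem_erase hqe, Finset.ne_of_mem_erase hqe, hh⟩
      have huZ' : ∀ z ∈ Z, G.Adj u z := by
        intro z hz
        by_cases hzx : z = x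
        · exact hzx.symm ▸ hux
        · obtain ⟨q, hq, hqx, hh⟩ := hzsurj z hz hzx
          exact hh ▸ huzf q hq hqx
      -- D_p = {u, x}
      have hDp : ¬ G.Adj p u ∧ (∀ w, w ≠ p → (w = u ∨ w = x ∨ G.Adj u w ∨ G.Adj x w)) := by
        obtain ⟨a, b, hab, hadjab, hap, hbp, hnpa, hnpb, hcov⟩ := K_lemma h p
        have hcl : ∀ c, c ≠ p → (c = u ∨ c ∈ Q ∨ (c ∈ Z ∧ c ∉ Q)) := by
          intro c hcp
          by_cases hcQ : c ∈ Q
          · exact Or.inr (Or.inl hcQ)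
          by_cases hcZ : c ∈ Z
          · exact Or.inr (Or.inr ⟨hcZ, hcQ⟩)
          · have hcO : c ∈ O := (hOmem c).mpr ⟨hcZ, hcQ⟩
            exact Or.inl ((hOcases c hcO).resolve_right hcp)
        have killQQ : ∀ c d, c ∈ Q → c ≠ x → d ∈ Q → d ≠ x →
            (∀ w, w ≠ p → (w = c ∨ w = d ∨ G.Adj c w ∨ G.Adj d w)) → False := by
          intro c d hc hcx hd hdx hcv
          rcases hcv u (Ne.symm hpu) with h' | h' | h' | h'
          · exact huNQ (h' ▸ hc)
          · exact huNQ (h' ▸ hd)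
          · exact hnqu c hc hcx h'
          · exact hnqu d hd hdx h'
        have killXQ : ∀ d, d ∈ Q → d ≠ x →
            (∀ w, w ≠ p → (w = x ∨ w = d ∨ G.Adj x w ∨ G.Adj d w)) → False := by
          intro d hd hdx hcv
          have hzd := hzfZ d hd hdx
          have hzdQ := hzfQ d hd hdx
          have hzdx := hzfx d hd hdx
          rcases hcv (zf d hd hdx) (fun hh => hpNZ (hh ▸ hzd)) with h' | h' | h' | h'
          · exact hzdx h'
          · exact hzdQ (h'.symm ▸ hd)
          · exact hZind x hxZ _ hzd (Ne.symm hzdx) h'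
          · exact hnqz d hd hdx h'
        have killUZ : ∀ d, d ∈ Z → d ∉ Q →
            (∀ w, w ≠ p → (w = u ∨ w = d ∨ G.Adj u w ∨ G.Adj d w)) → False := by
          intro d hd hdQ hcv
          obtain ⟨q, hq, hqx, hh⟩ := hzsurj d hd (hZne d hd hdQ)
          rcases hcv q (fun he => hpNQ (he ▸ hq)) with h' | h' | h' | h'
          · exact huNQ (h' ▸ hq)
          · exact hdQ (h' ▸ hq)
          · exact hnqu q hq hqx h'.symm
          · exact hnqz q hq hqx (hh.symm ▸ h'.symm)
        have killQZ : ∀ c d, c ∈ Q → c ≠ x → d ∈ Z → d ∉ Q → G.Adj c d →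
            (∀ w, w ≠ p → (w = c ∨ w = d ∨ G.Adj c w ∨ G.Adj d w)) → False := by
          intro c d hc hcx hd hdQ hcd hcv
          by_cases hdc : zf c hc hcx = d
          · exact hnqz c hc hcx (hdc.symm ▸ hcd)
          · rcases hcv (zf c hc hcx) (fun hh => hpNZ (hh ▸ hzfZ c hc hcx)) with h' | h' | h' | h'
            · exact (hzfQ c hc hcx) (h'.symm ▸ hc)
            · exact hdc h'
            · exact hnqz c hc hcx h'
            · exact hZind d hd _ (hzfZ c hc hcx) (fun he => hdc he.symm) h'
        rcases hcl a hap with hau | haQ | ⟨haZ, haQ'⟩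
        · rcases hcl b hbp with hbu | hbQ | ⟨hbZ, hbQ'⟩
          · exact absurd (hau.trans hbu.symm) hab
          · by_cases hbx : b = x
            · refine ⟨hau ▸ hnpa, fun w hw => ?_⟩
              rcases hcov w hw with h' | h' | h' | h'
              · exact Or.inl (h'.trans hau)
              · exact Or.inr (Or.inl (h'.trans hbx))
              · exact Or.inr (Or.inr (Or.inl (hau ▸ h')))
              · exact Or.inr (Or.inr (Or.inr (hbx ▸ h')))
            · exact absurd (hau ▸ hadjab).symm (hnqu b hbQ hbx)
          · refine absurd (killUZ b hbZ hbQ' (fun w hw => ?_)) id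
            rcases hcov w hw with h' | h' | h' | h'
            · exact Or.inl (h'.trans hau)
            · exact Or.inr (Or.inl h')
            · exact Or.inr (Or.inr (Or.inl (hau ▸ h')))
            · exact Or.inr (Or.inr (Or.inr h'))
        · rcases hcl b hbp with hbu | hbQ | ⟨hbZ, hbQ'⟩
          · by_cases hax : a = x
            · refine ⟨hbu ▸ hnpb, fun w hw => ?_⟩
              rcases hcov w hw with h' | h' | h' | h'
              · exact Or.inr (Or.inl (h'.trans hax))
              · exact Or.inl (h'.trans hbu)
              · exact Or.inr (Or.inr (Or.inr (hax ▸ h')))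
              · exact Or.inr (Or.inr (Or.inl (hbu ▸ h')))
            · exact absurd (hbu ▸ hadjab) (hnqu a haQ hax)
          · by_cases hax : a = x
            · by_cases hbx : b = x
              · exact absurd (hax.trans hbx.symm) hab
              · refine absurd (killXQ b hbQ hbx (fun w hw => ?_)) id
                rcases hcov w hw with h' | h' | h' | h'
                · exact Or.inl (h'.trans hax)
                · exact Or.inr (Or.inl h')
                · exact Or.inr (Or.inr (Or.inl (hax ▸ h')))
                · exact Or.inr (Or.inr (Or.inr h'))
            · by_cases hbx : b = x
              · refine absurd (killXQ a haQ hax (fun w hw => ?_)) id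
                rcases hcov w hw with h' | h' | h' | h'
                · exact Or.inr (Or.inl h')
                · exact Or.inl (h'.trans hbx)
                · exact Or.inr (Or.inr (Or.inr h'))
                · exact Or.inr (Or.inr (Or.inl (hbx ▸ h')))
              · exact absurd (killQQ a b haQ hax hbQ hbx hcov) id
          · by_cases hax : a = x
            · exact absurd (hax ▸ hadjab)
                (fun hh => hZind x hxZ b hbZ (Ne.symm (hZne b hbZ hbQ')) hh)
            · exact absurd (killQZ a b haQ hax hbZ hbQ' hadjab hcov) id
        · rcases hcl b hbp with hbu | hbQ | ⟨hbZ, hbQ'⟩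
          · refine absurd (killUZ a haZ haQ' (fun w hw => ?_)) id
            rcases hcov w hw with h' | h' | h' | h'
            · exact Or.inr (Or.inl h')
            · exact Or.inl (h'.trans hbu)
            · exact Or.inr (Or.inr (Or.inr h'))
            · exact Or.inr (Or.inr (Or.inl (hbu ▸ h')))
          · by_cases hbx : b = x
            · exact absurd (hbx ▸ hadjab)
                (fun hh => hZind a haZ x hxZ (hZne a haZ haQ') hh)
            · refine absurd (killQZ b a hbQ hbx haZ haQ' hadjab.symm (fun w hw => ?_)) id
              rcases hcov w hw with h' | h' | h' | h'
              · exact Or.inr (Or.inl h')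
              · exact Or.inl h'
              · exact Or.inr (Or.inr (Or.inr h'))
              · exact Or.inr (Or.inr (Or.inl h'))
          · exact absurd (hZind a haZ b hbZ hab hadjab) id
      have hnpu := hDp.1
      have hpZ : ∀ z ∈ Z, z ≠ x → G.Adj p z := by
        intro z hz hzx
        obtain ⟨q, hq, hqx, hh⟩ := hzsurj z hz hzx
        have hpq : p ≠ q := fun he => hpNQ (he ▸ hq)
        rcases hcovq q hq hqx p hpq with h' | h' | h' | h'
        · exact absurd h' hpu
        · exact absurd (h'.symm ▸ hpNZ) (fun hn => hn (hh ▸ hz)) 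
        · exact absurd h' (fun hh2 => hnpu hh2.symm)
        · exact hh ▸ h'.symm
      have hpQ' : ∀ q' ∈ Q, q' ≠ x → G.Adj p q' := by
        intro q' hq' hq'x
        by_contra hnpq
        have hNu : ∀ y, G.Adj u y → y ∈ Z := by
          intro y hy
          by_cases hyQ : y ∈ Q
          · by_cases hyx : y = x
            · exact hyx.symm ▸ hxZ
            · exact absurd hy.symm (hnqu y hyQ hyx)
          by_cases hyZ : y ∈ Z
          · exact hyZ
          · have hyO : y ∈ O := (hOmem y).mpr ⟨hyZ, hyQ⟩
            rcases hOcases y hyO with hyu | hyp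
            · exact absurd (hyu ▸ hy) G.irrefl
            · exact absurd (hyp ▸ hy) (fun hh => hnpu hh.symm)
        have hpq'ne : p ≠ q' := fun he => hpNQ (he ▸ hq')
        rcases E_lemma h hpq'ne hnpq with h1 | ⟨y, hpy, hcv⟩ | ⟨y, hq'y, hcv⟩
        · rcases h1 u with h' | h' | h' | h'
          · exact hpu h'.symm
          · exact huNQ (h' ▸ hq')
          · exact hnpu h'
          · exact hnqu q' hq' hq'x h'
        · have hyu : G.Adj y u := by
            rcases hcv u (fun hh => huNQ (hh ▸ hq')) with h' | h' | h' | h'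
            · exact absurd h'.symm hpu
            · exact absurd (h'.symm ▸ hpy) hnpu
            · exact absurd h' hnpu
            · exact h'
          have hyZ : y ∈ Z := hNu y hyu.symm
          rcases hcv x (Ne.symm hq'x) with h' | h' | h' | h'
          · exact hpNQ (h' ▸ hxQ)
          · exact hnxp (h'.symm ▸ hpy).symm
          · exact hnxp h'.symm
          · exact hZind y hyZ x hxZ h'.ne h'
        · have hyu : G.Adj y u := by
            rcases hcv u (Ne.symm hpu) with h' | h' | h' | h'
            · exact absurd (h' ▸ hq') huNQ
            · exact absurd (h'.symm ▸ hq'y) (hnqu q' hq' hq'x)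
            · exact absurd h' (hnqu q' hq' hq'x)
            · exact h'
          have hyZ : y ∈ Z := hNu y hyu.symm
          have hzq' := hzfZ q' hq' hq'x
          rcases hcv (zf q' hq' hq'x) (fun hh => hpNZ (hh ▸ hzq')) with h' | h' | h' | h'
          · exact (hzfQ q' hq' hq'x) (h'.symm ▸ hq')
          · exact hnqz q' hq' hq'x (h'.symm ▸ hq'y)
          · exact hnqz q' hq' hq'x h'
          · exact hZind y hyZ _ hzq' h'.ne h'
      have hCclique : ∀ a ∈ insert p (Q.erase x), ∀ b ∈ insert p (Q.erase x),
          a ≠ b → G.Adj a b := by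
        intro a ha b hb hne
        rcases Finset.mem_insert.mp ha with hap | haQ
        · rcases Finset.mem_insert.mp hb with hbp | hbQ
          · exact absurd (hap.trans hbp.symm) hne
          · exact hap.symm ▸ hpQ' b (Finset.mem_of_mem_erase hbQ) (Finset.ne_of_mem_erase hbQ)
        · rcases Finset.mem_insert.mp hb with hbp | hbQ
          · exact hbp.symm ▸
              (hpQ' a (Finset.mem_of_mem_erase haQ) (Finset.ne_of_mem_erase haQ)).symm
          · exact hQclique a (Finset.mem_of_mem_erase haQ) b (Finset.mem_of_mem_erase hbQ) hne
      have hCdisj : ∀ a, a ∈ insert p (Q.erase x) → a ∉ Z := by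
        intro a ha haZ
        rcases Finset.mem_insert.mp ha with hap | haQ
        · exact hpNZ (hap ▸ haZ)
        · exact (Finset.ne_of_mem_erase haQ) (hZQx a haZ (Finset.mem_of_mem_erase haQ))
      have huC : u ∉ insert p (Q.erase x) := by
        intro hu'
        rcases Finset.mem_insert.mp hu' with hup' | huQ'
        · exact hpu hup'.symm
        · exact huNQ (Finset.mem_of_mem_erase huQ')
      have hCcard : (insert p (Q.erase x)).card = l := by
        rw [Finset.card_insert_of_notMem (fun hh => hpNQ (Finset.mem_of_mem_erase hh)),
          Finset.card_erase_of_mem hxQ, hQcard]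
        omega
      refine clean_lemma h hl hCclique hZind hCdisj huC huNZ hCcard hZcard ?_
      intro w
      by_cases hwQ : w ∈ Q
      · by_cases hwx : w = x
        · exact Or.inr (Or.inr (hwx.symm ▸ hxZ))
        · exact Or.inr (Or.inl (Finset.mem_insert.mpr (Or.inr (Finset.mem_erase.mpr ⟨hwx, hwQ⟩))))
      by_cases hwZ : w ∈ Z
      · exact Or.inr (Or.inr hwZ)
      · have hwO : w ∈ O := (hOmem w).mpr ⟨hwZ, hwQ⟩
        rcases hOcases w hwO with hwu | hwp
        · exact Or.inl hwu
        · exact Or.inr (Or.inl (Finset.mem_insert.mpr (Or.inl hwp)))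




end Structure
section Converse

open SimpleGraph

set_option linter.unusedSectionVars false
set_option maxHeartbeats 1000000

variable [Fintype V] [DecidableEq V] {G : SimpleGraph V}

lemma G1_props {l : ℕ} (hl : 2 ≤ l) (hG1 : IsG1 l G) :
    alpha G = l ∧ omegaNum G = l ∧ Fintype.card V = 2 * l + 1 := by
  classical
  obtain ⟨v, q, z, hqinj, hzinj, hqz, hvq, hvz, hcover, hqq, hzz, hvzadj, hvqadj, hzq⟩ := hG1
  set Qs := Finset.image q Finset.univ with hQs
  set Zs := Finset.image z Finset.univ with hZs
  have hQmem : ∀ w, w ∈ Qs ↔ ∃ i, q i = w := by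
    intro w; rw [hQs]; simp
  have hZmem : ∀ w, w ∈ Zs ↔ ∃ i, z i = w := by
    intro w; rw [hZs]; simp
  have hQcard : Qs.card = l := by
    rw [hQs, Finset.card_image_of_injective _ hqinj, Finset.card_univ, Fintype.card_fin]
  have hZcard : Zs.card = l := by
    rw [hZs, Finset.card_image_of_injective _ hzinj, Finset.card_univ, Fintype.card_fin]
  have hdisj : Disjoint Qs Zs := by
    rw [Finset.disjoint_left]
    intro a ha hb
    obtain ⟨i, hi⟩ := (hQmem a).mp ha
    obtain ⟨j, hj⟩ := (hZmem a).mp hb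
    exact hqz i j (hi.trans hj.symm)
  have hvQZ : v ∉ Qs ∪ Zs := by
    intro hv
    rcases Finset.mem_union.mp hv with hv' | hv'
    · obtain ⟨i, hi⟩ := (hQmem v).mp hv'
      exact hvq i hi.symm
    · obtain ⟨i, hi⟩ := (hZmem v).mp hv'
      exact hvz i hi.symm
  have hcardV : Fintype.card V = 2 * l + 1 := by
    have huniv : (Finset.univ : Finset V) = insert v (Qs ∪ Zs) := by
      ext w
      simp only [Finset.mem_univ, true_iff, Finset.mem_insert, Finset.mem_union]
      rcases hcover w with h' | ⟨i, h'⟩ | ⟨i, h'⟩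
      · exact Or.inl h'
      · exact Or.inr (Or.inl ((hQmem w).mpr ⟨i, h'.symm⟩))
      · exact Or.inr (Or.inr ((hZmem w).mpr ⟨i, h'.symm⟩))
    rw [← Finset.card_univ, huniv, Finset.card_insert_of_notMem hvQZ,
      Finset.card_union_of_disjoint hdisj, hQcard, hZcard]
    ring
  -- independence number
  have halpha : alpha G = l := by
    apply le_antisymm
    · show sSup {k | ∃ I : Finset V, I.card = k ∧
          (↑I : Set V).Pairwise fun u v => ¬ G.Adj u v} ≤ l
      apply csSup_le
      · exact ⟨0, ∅, Finset.card_empty, by simp⟩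
      rintro k ⟨I, rfl, hIp⟩
      have hIind : ∀ a ∈ I, ∀ b ∈ I, a ≠ b → ¬ G.Adj a b :=
        fun a ha b hb hne => hIp (Finset.mem_coe.mpr ha) (Finset.mem_coe.mpr hb) hne
      by_cases hvI : v ∈ I
      · -- I ⊆ insert v (I ∩ Qs), and I ∩ Qs has ≤ 1 element
        have hsub : I ⊆ insert v (I ∩ Qs) := by
          intro w hw
          rcases hcover w with h' | ⟨i, h'⟩ | ⟨i, h'⟩
          · exact Finset.mem_insert.mpr (Or.inl h')
          · exact Finset.mem_insert.mpr (Or.inr (Finset.mem_inter.mpr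
              ⟨hw, (hQmem w).mpr ⟨i, h'.symm⟩⟩))
          · exfalso
            have hne : v ≠ w := h' ▸ hvz i
            exact hIind v hvI w hw hne (h'.symm ▸ hvzadj i)
        have hone : (I ∩ Qs).card ≤ 1 := by
          by_contra hcc
          push_neg at hcc
          obtain ⟨a, ha, b, hb, hab⟩ := Finset.one_lt_card.mp hcc
          obtain ⟨i, hi⟩ := (hQmem a).mp (Finset.mem_inter.mp ha).2
          obtain ⟨j, hj⟩ := (hQmem b).mp (Finset.mem_inter.mp hb).2
          have hij : i ≠ j := fun hh => hab (hi.symm.trans (hh ▸ hj))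
          exact hIind a (Finset.mem_inter.mp ha).1 b (Finset.mem_inter.mp hb).1 hab
            (hi ▸ hj ▸ (hqq i j).mpr hij)
        calc I.card ≤ (insert v (I ∩ Qs)).card := Finset.card_le_card hsub
          _ ≤ (I ∩ Qs).card + 1 := Finset.card_insert_le _ _
          _ ≤ 2 := by omega
          _ ≤ l := hl
      · by_cases hqI : ∃ i, q i ∈ I
        · obtain ⟨i0, hi0⟩ := hqI
          have hsub : I ⊆ {q i0, z i0} := by
            intro w hw
            rcases hcover w with h' | ⟨i, h'⟩ | ⟨i, h'⟩
            · exact absurd (h' ▸ hw) hvI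
            · have : i = i0 := by
                by_contra hne
                exact hIind w hw (q i0) hi0 (fun hh => hne (hqinj ((h' ▸ hh) : q i = q i0)))
                  (h'.symm ▸ (hqq i i0).mpr hne)
              simp [h', this]
            · have : i = i0 := by
                by_contra hne
                exact hIind w hw (q i0) hi0 (fun hh => (hqz i0 i) (hh.symm.trans h'))
                  (h'.symm ▸ (hzq i i0).mpr (Ne.symm hne))
              simp [h', this]
          calc I.card ≤ ({q i0, z i0} : Finset V).card := Finset.card_le_card hsub
            _ ≤ 2 := Finset.card_insert_le _ _ |>.trans (by simp)
            _ ≤ l := hl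
        · have hsub : I ⊆ Zs := by
            intro w hw
            rcases hcover w with h' | ⟨i, h'⟩ | ⟨i, h'⟩
            · exact absurd (h' ▸ hw) hvI
            · exact absurd (h' ▸ hw) (fun hh => hqI ⟨i, hh⟩)
            · exact (hZmem w).mpr ⟨i, h'.symm⟩
          calc I.card ≤ Zs.card := Finset.card_le_card hsub
            _ = l := hZcard
    · have hZind : ∀ a ∈ Zs, ∀ b ∈ Zs, a ≠ b → ¬ G.Adj a b := by
        intro a ha b hb _
        obtain ⟨i, hi⟩ := (hZmem a).mp ha
        obtain ⟨j, hj⟩ := (hZmem b).mp hb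
        exact hi ▸ hj ▸ hzz i j
      calc l = Zs.card := hZcard.symm
        _ ≤ alpha G := ind_card_le hZind
  -- clique number
  have homega : omegaNum G = l := by
    apply le_antisymm
    · show sSup {k | ∃ W : Finset V, W.card = k ∧ (↑W : Set V).Pairwise G.Adj} ≤ l
      apply csSup_le
      · exact ⟨0, ∅, Finset.card_empty, by simp⟩
      rintro k ⟨C, rfl, hCp⟩
      have hCcl : ∀ a ∈ C, ∀ b ∈ C, a ≠ b → G.Adj a b :=
        fun a ha b hb hne => hCp (Finset.mem_coe.mpr ha) (Finset.mem_coe.mpr hb) hne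
      by_cases hvC : v ∈ C
      · have hsub : C ⊆ insert v (C ∩ Zs) := by
          intro w hw
          rcases hcover w with h' | ⟨i, h'⟩ | ⟨i, h'⟩
          · exact Finset.mem_insert.mpr (Or.inl h')
          · exfalso
            have hne : v ≠ w := h' ▸ hvq i
            exact (hvqadj i) (h' ▸ hCcl v hvC w hw hne)
          · exact Finset.mem_insert.mpr (Or.inr (Finset.mem_inter.mpr
              ⟨hw, (hZmem w).mpr ⟨i, h'.symm⟩⟩))
        have hone : (C ∩ Zs).card ≤ 1 := by
          by_contra hcc
          push_neg at hcc
          obtain ⟨a, ha, b, hb, hab⟩ := Finset.one_lt_card.mp hcc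
          obtain ⟨i, hi⟩ := (hZmem a).mp (Finset.mem_inter.mp ha).2
          obtain ⟨j, hj⟩ := (hZmem b).mp (Finset.mem_inter.mp hb).2
          exact (hi ▸ hj ▸ hzz i j)
            (hCcl a (Finset.mem_inter.mp ha).1 b (Finset.mem_inter.mp hb).1 hab)
        calc C.card ≤ (insert v (C ∩ Zs)).card := Finset.card_le_card hsub
          _ ≤ (C ∩ Zs).card + 1 := Finset.card_insert_le _ _
          _ ≤ 2 := by omega
          _ ≤ l := hl
      · by_cases hzC : ∃ i, z i ∈ C
        · obtain ⟨i0, hi0⟩ := hzC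
          have hsub : C ⊆ insert (z i0) (Qs.erase (q i0)) := by
            intro w hw
            rcases hcover w with h' | ⟨i, h'⟩ | ⟨i, h'⟩
            · exact absurd (h' ▸ hw) hvC
            · refine Finset.mem_insert.mpr (Or.inr (Finset.mem_erase.mpr
                ⟨?_, (hQmem w).mpr ⟨i, h'.symm⟩⟩))
              intro hh
              have hii0 : i = i0 := hqinj ((h' ▸ hh) : q i = q i0)
              have hwz : w ≠ z i0 := fun he => hqz i i0 (h'.symm.trans he)
              have := hCcl w hw (z i0) hi0 hwz
              rw [h'] at this
              exact ((hzq i0 i).mp this.symm) hii0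
            · have : i = i0 := by
                by_contra hne
                have hwz : w ≠ z i0 := fun he => hne (hzinj ((h' ▸ he) : z i = z i0))
                exact (hzz i i0) (h' ▸ hCcl w hw (z i0) hi0 hwz)
              exact Finset.mem_insert.mpr (Or.inl (h'.trans (by rw [this])))
          calc C.card ≤ (insert (z i0) (Qs.erase (q i0))).card := Finset.card_le_card hsub
            _ ≤ (Qs.erase (q i0)).card + 1 := Finset.card_insert_le _ _
            _ = l := by
                rw [Finset.card_erase_of_mem ((hQmem (q i0)).mpr ⟨i0, rfl⟩), hQcard]
                omega
        · have hsub : C ⊆ Qs := by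
            intro w hw
            rcases hcover w with h' | ⟨i, h'⟩ | ⟨i, h'⟩
            · exact absurd (h' ▸ hw) hvC
            · exact (hQmem w).mpr ⟨i, h'.symm⟩
            · exact absurd (h' ▸ hw) (fun hh => hzC ⟨i, hh⟩)
          calc C.card ≤ Qs.card := Finset.card_le_card hsub
            _ = l := hQcard
    · have hQcl : ∀ a ∈ Qs, ∀ b ∈ Qs, a ≠ b → G.Adj a b := by
        intro a ha b hb hne
        obtain ⟨i, hi⟩ := (hQmem a).mp ha
        obtain ⟨j, hj⟩ := (hQmem b).mp hb
        have hij : i ≠ j := fun hh => hne (hi.symm.trans (hh ▸ hj))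
        exact hi ▸ hj ▸ (hqq i j).mpr hij
      calc l = Qs.card := hQcard.symm
        _ ≤ omegaNum G := clique_card_le hQcl
  exact ⟨halpha, homega, hcardV⟩

end Converse
section Final

open SimpleGraph

set_option linter.unusedSectionVars false
set_option maxHeartbeats 1000000

lemma prod_le_balanced {a w b c : ℕ} (hab : a ≤ b) (hbc : b ≤ c) (h : a + w ≤ b + c) :
    a * w ≤ b * c := by
  obtain ⟨d, rfl⟩ := Nat.exists_eq_add_of_le hab
  have hwdc : w ≤ d + c := by omega
  have hac : a ≤ c := by omega
  calc a * w ≤ a * (d + c) := Nat.mul_le_mul_left a hwdc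
    _ = a * d + a * c := by ring
    _ ≤ c * d + a * c := by
        have := Nat.mul_le_mul_right d hac
        omega
    _ = (a + d) * c := by ring

end Final

/-- a maximal `3`-`γc`-vertex critical graph of order `n` satisfies
`α(G)·ω(G) ≤ ⌊(n-1)/2⌋·⌈(n-1)/2⌉`; moreover `α(G)·ω(G) = ((n-1)/2)²` (as rationals)
if and only if `G` is (isomorphic to) a graph in the class `𝒢₁(l)` for some `l ≥ 2`. -/
theorem stmt_9 (G : SimpleGraph V) [Fintype V] [DecidableEq V]
    (h : MaximalVertexCritical3 G) :
    alpha G * omegaNum G ≤ (Fintype.card V - 1) / 2 * ((Fintype.card V - 1 + 1) / 2) ∧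
    (((alpha G * omegaNum G : ℕ) : ℚ) = (((Fintype.card V : ℚ) - 1) / 2) ^ 2 ↔
      ∃ l : ℕ, 2 ≤ l ∧ IsG1 l G) := by
  classical
  have h3 := h.1.1
  have ha2 : 2 ≤ alpha G := alpha_ge_two h3
  have hw2 : 2 ≤ omegaNum G := omega_ge_two h3
  have hlt : alpha G + omegaNum G < Fintype.card V := alpha_add_omega_lt_card h
  set n := Fintype.card V with hn
  set a := alpha G with haa
  set w := omegaNum G with hww
  have hn5 : 5 ≤ n := by omega
  constructor
  · -- the inequality
    have hb : (n - 1) / 2 ≤ (n - 1 + 1) / 2 := by omega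
    have hsum : a + w ≤ (n - 1) / 2 + ((n - 1 + 1) / 2) := by omega
    rcases le_total a w with hle | hle
    · exact prod_le_balanced (by omega) hb hsum
    · rw [Nat.mul_comm]
      exact prod_le_balanced (by omega) hb (by omega)
  · constructor
    · -- equality implies structure
      intro heq
      have h4 : (4 : ℚ) * ((a * w : ℕ) : ℚ) = ((n : ℚ) - 1) ^ 2 := by
        rw [heq]; field_simp; ring
      have hcast : ((4 * (a * w) : ℕ) : ℚ) = (((n - 1) ^ 2 : ℕ) : ℚ) := by
        push_cast [Nat.cast_sub (by omega : 1 ≤ n)]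
        rw [← h4]; push_cast; ring
      have h4' : 4 * (a * w) = (n - 1) ^ 2 := Nat.cast_injective hcast
      have hsum2 : (a + w) ^ 2 ≤ (n - 1) ^ 2 := Nat.pow_le_pow_left (by omega) 2
      have h44 : 4 * (a * w) ≤ (a + w) ^ 2 := by
        zify
        nlinarith [sq_nonneg ((a : ℤ) - (w : ℤ))]
      have heqsum : (a + w) ^ 2 = (n - 1) ^ 2 := by omega
      have hsum_eq : a + w = n - 1 := by
        by_contra hne
        have hlt2 : a + w < n - 1 := by omega
        have := Nat.pow_lt_pow_left hlt2 (n := 2) (by norm_num)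
        rw [heqsum] at this
        exact lt_irrefl _ this
      have haw : a = w := by
        have h4e : 4 * (a * w) = (a + w) ^ 2 := by omega
        have h4z : 4 * ((a : ℤ) * (w : ℤ)) = ((a : ℤ) + (w : ℤ)) ^ 2 := by exact_mod_cast h4e
        have hz : ((a : ℤ) - (w : ℤ)) ^ 2 = 0 := by nlinarith [h4z]
        have hz' : (a : ℤ) - (w : ℤ) = 0 := by
          exact pow_eq_zero_iff (by norm_num) |>.mp hz
        have : (a : ℤ) = (w : ℤ) := by linarith
        exact_mod_cast this
      have hncard : n = 2 * a + 1 := by omega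
      exact ⟨a, ha2, equality_structure h ha2 rfl (haw.symm ▸ hww.symm ▸ rfl) hncard⟩
    · rintro ⟨l, hl, hG1⟩
      obtain ⟨halpha, homega, hcard⟩ := G1_props hl hG1
      have hawl : a * w = l * l := by rw [haa, hww, halpha, homega]
      rw [hawl, hn, hcard]
      push_cast
      ring
end
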